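/- arXiv:2507.01898 — 11 statements merged into one kernel-verified Lean document; each statement's English description precedes it below -/
import Mathlib

section
/- For every integer n ≥ 6 with n ≡ 0 (mod 3), the Frobenius number of S(n) = ⟨f_n², f_{n+1}², f_{n+2}²⟩ equals (f_{n+3}/2 − 1)·f_{n+1}² + (f_{n−2} − 1)·f_{n+2}² − f_n²; that is, this integer does not belong to S(n) and every strictly larger integer belongs to S(n). (Note that f_{n+3} is even when 3 divides n.) -/
open Nat

/-- Membership of an integer in the numerical semigroup
`S(n) = ⟨fib n ^ 2, fib (n+1) ^ 2, fib (n+2) ^ 2⟩`. -/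
def SZ (n : ℕ) : Set ℤ :=
  {x | ∃ a b c : ℕ, x = (a : ℤ) * (fib n : ℤ) ^ 2 + (b : ℤ) * (fib (n + 1) : ℤ) ^ 2 +
      (c : ℤ) * (fib (n + 2) : ℤ) ^ 2}

/-- Extract lattice coordinates from a congruence modulo `A = 4(e+v)²`. -/
private lemma aux_exists_st (e v dy dz : ℤ) (hA0 : 4*(e+v)^2 ≠ 0)
    (hcop : IsCoprime (4*(e+v)^2) ((4*e+3*v)^2))
    (hdvd : 4*(e+v)^2 ∣ dy*(4*e+3*v)^2 + dz*(6*e+5*v)^2) :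
    ∃ s t : ℤ, dy = s*(5*e+4*v) - t*(e+v) ∧ dz = -(s*e) + t*(e+v) ∧
      dy*(4*e+3*v)^2 + dz*(6*e+5*v)^2 = (s*(11*e+9*v) + t*(5*e+4*v)) * (4*(e+v)^2) := by
  have h1 : 4*(e+v)^2 ∣ (dy + dz) * (e+v) := by
    refine hcop.dvd_of_dvd_mul_right ?_
    have key : (dy + dz) * (e+v) * (4*e+3*v)^2
        = (e+v) * (dy*(4*e+3*v)^2 + dz*(6*e+5*v)^2) - dz*(5*e+4*v)*(4*(e+v)^2) := by ring
    rw [key]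
    exact dvd_sub (hdvd.mul_left _) (Dvd.intro_left _ rfl)
  have h2 : 4*(e+v)^2 ∣ dy*e + dz*(5*e+4*v) := by
    refine hcop.dvd_of_dvd_mul_right ?_
    have key : (dy*e + dz*(5*e+4*v)) * (4*e+3*v)^2
        = e * (dy*(4*e+3*v)^2 + dz*(6*e+5*v)^2) + dz*(11*e+9*v)*(4*(e+v)^2) := by ring
    rw [key]
    exact dvd_add (hdvd.mul_left _) (Dvd.intro_left _ rfl)
  obtain ⟨s, hs⟩ := h1
  obtain ⟨t, ht⟩ := h2
  have hdy : dy = s*(5*e+4*v) - t*(e+v) := by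
    have h : dy * (4*(e+v)^2) = (s*(5*e+4*v) - t*(e+v)) * (4*(e+v)^2) := by
      linear_combination (5*e+4*v)*hs - (e+v)*ht
    exact mul_right_cancel₀ hA0 h
  have hdz : dz = -(s*e) + t*(e+v) := by
    have h : dz * (4*(e+v)^2) = (-(s*e) + t*(e+v)) * (4*(e+v)^2) := by
      linear_combination (-e)*hs + (e+v)*ht
    exact mul_right_cancel₀ hA0 h
  exact ⟨s, t, hdy, hdz, by rw [hdy, hdz]; ring⟩

/-- Minimality of the corner element of the Apéry set. -/
private lemma aux_min (e v : ℤ) (he : 1 ≤ e) (hv : 3*e ≤ v)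
    (hcop : IsCoprime (4*(e+v)^2) ((4*e+3*v)^2))
    (y z : ℤ) (hy : 0 ≤ y) (hz : 0 ≤ z)
    (hdvd : 4*(e+v)^2 ∣ (y - (5*e+4*v-1))*(4*e+3*v)^2 + (z - (v-1))*(6*e+5*v)^2) :
    (5*e+4*v-1)*(4*e+3*v)^2 + (v-1)*(6*e+5*v)^2 ≤ y*(4*e+3*v)^2 + z*(6*e+5*v)^2 := by
  have hA0 : 4*(e+v)^2 ≠ 0 := by nlinarith [sq_nonneg (e+v)]
  obtain ⟨s, t, hdy, hdz, hval⟩ := aux_exists_st e v _ _ hA0 hcop hdvd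
  have hyeq : y = (5*e+4*v-1) + s*(5*e+4*v) - t*(e+v) := by linarith [hdy]
  have hzeq : z = (v-1) - s*e + t*(e+v) := by linarith [hdz]
  have hs0 : 0 ≤ s ∧ 0 ≤ t := by
    by_contra hcon
    rcases le_or_gt 0 t with ht | ht
    · have hs : s ≤ -1 := by
        rcases le_or_gt 0 s with h | h
        · exact absurd ⟨h, ht⟩ hcon
        · omega
      nlinarith [mul_le_mul_of_nonneg_right hs (show (0:ℤ) ≤ 5*e+4*v by linarith),
        mul_nonneg ht (show (0:ℤ) ≤ e+v by linarith)]
    · have ht1 : t ≤ -1 := by omega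
      rcases le_or_gt 0 s with hs | hs
      · nlinarith [mul_nonneg hs (by linarith : (0:ℤ) ≤ e), mul_le_mul_of_nonneg_right ht1
          (show (0:ℤ) ≤ e+v by linarith)]
      · have hp : 1 ≤ -s := by omega
        have hq : 1 ≤ -t := by omega
        have hA : (-t)*(e+v) ≥ ((-s)-1)*(5*e+4*v) + 1 := by nlinarith [hyeq, hy]
        have hB : (-s)*e ≥ (-t)*(e+v) - v + 1 := by nlinarith [hzeq, hz]
        rcases eq_or_lt_of_le hp with hp1 | hp2
        · have : (-t)*(e+v) ≥ (e+v) := by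
            nlinarith [mul_le_mul_of_nonneg_right hq (show (0:ℤ) ≤ e+v by linarith)]
          nlinarith [hB, hp1.symm ▸ (le_refl (1:ℤ))]
        · have hp2' : 2 ≤ -s := by omega
          nlinarith [hA, hB, mul_le_mul_of_nonneg_right hp2' (show (0:ℤ) ≤ 4*e+4*v-e by linarith)]
  have hx1 : 0 ≤ s*(11*e+9*v) + t*(5*e+4*v) := by
    nlinarith [mul_nonneg hs0.1 (show (0:ℤ) ≤ 11*e+9*v by linarith),
      mul_nonneg hs0.2 (show (0:ℤ) ≤ 5*e+4*v by linarith)]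
  nlinarith [hval, mul_nonneg hx1 (show (0:ℤ) ≤ 4*(e+v)^2 by positivity)]

/-- Helper: the case `s ≥ 1` of injectivity is impossible. -/
private lemma aux_inj_pos (e v : ℤ) (he : 1 ≤ e) (hv : 3*e ≤ v)
    (y z y' z' s t : ℤ)
    (hy0 : 0 ≤ y) (hz0 : 0 ≤ z) (hy1 : y ≤ 5*e+4*v-1) (hz2 : z ≤ e+v-1)
    (hL : 4*e+3*v ≤ y → z ≤ v-1)
    (hy0' : 0 ≤ y') (hz0' : 0 ≤ z') (hy1' : y' ≤ 5*e+4*v-1) (hz2' : z' ≤ e+v-1)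
    (hdy : y - y' = s*(5*e+4*v) - t*(e+v)) (hdz : z - z' = -(s*e) + t*(e+v))
    (hs : 1 ≤ s) : False := by
  have ht1 : 1 ≤ t := by
    by_contra h
    have ht0 : t ≤ 0 := by omega
    nlinarith [mul_le_mul_of_nonneg_right hs (show (0:ℤ) ≤ 5*e+4*v by linarith),
      mul_nonpos_of_nonpos_of_nonneg ht0 (show (0:ℤ) ≤ e+v by linarith)]
  rcases eq_or_lt_of_le hs with hs1 | hs2
  · have ht : t = 1 := by
      by_contra h
      have ht2 : 2 ≤ t := by omega
      nlinarith [mul_le_mul_of_nonneg_right ht2 (show (0:ℤ) ≤ e+v by linarith), hs1]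
    subst ht
    have hs1' : s = 1 := hs1.symm
    subst hs1'
    have h1 : y - y' = 4*e+3*v := by linarith [hdy]
    have h2 : z - z' = v := by linarith [hdz]
    have := hL (by linarith)
    linarith
  · have hs2' : 2 ≤ s := by omega
    have hA : t*(e+v) ≥ (s-1)*(5*e+4*v) + 1 := by nlinarith
    have hB : t*(e+v) ≤ s*e + (e+v) - 1 := by nlinarith
    nlinarith [mul_le_mul_of_nonneg_right hs2' (show (0:ℤ) ≤ 4*e+4*v by linarith)]

private lemma aux_inj (e v : ℤ) (he : 1 ≤ e) (hv : 3*e ≤ v)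
    (hcop : IsCoprime (4*(e+v)^2) ((4*e+3*v)^2))
    (y z y' z' : ℤ)
    (hy0 : 0 ≤ y) (hz0 : 0 ≤ z) (hy1 : y ≤ 5*e+4*v-1) (hz2 : z ≤ e+v-1)
    (hL : 4*e+3*v ≤ y → z ≤ v-1)
    (hy0' : 0 ≤ y') (hz0' : 0 ≤ z') (hy1' : y' ≤ 5*e+4*v-1) (hz2' : z' ≤ e+v-1)
    (hL' : 4*e+3*v ≤ y' → z' ≤ v-1)
    (hdvd : 4*(e+v)^2 ∣ (y - y')*(4*e+3*v)^2 + (z - z')*(6*e+5*v)^2) :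
    y = y' ∧ z = z' := by
  have hA0 : 4*(e+v)^2 ≠ 0 := by nlinarith [sq_nonneg (e+v)]
  obtain ⟨s, t, hdy, hdz, -⟩ := aux_exists_st e v _ _ hA0 hcop hdvd
  rcases lt_trichotomy s 0 with hs | hs | hs
  · exact absurd (aux_inj_pos e v he hv y' z' y z (-s) (-t) hy0' hz0' hy1' hz2' hL'
      hy0 hz0 hy1 hz2 (by linarith [hdy]) (by linarith [hdz]) (by omega)) not_false
  · subst hs
    have ht : t = 0 := by
      by_contra h
      rcases lt_trichotomy t 0 with ht | ht | ht
      · have : t ≤ -1 := by omega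
        nlinarith [mul_le_mul_of_nonneg_right this (show (0:ℤ) ≤ e+v by linarith)]
      · omega
      · have : 1 ≤ t := by omega
        nlinarith [mul_le_mul_of_nonneg_right this (show (0:ℤ) ≤ e+v by linarith)]
    subst ht
    constructor <;> linarith [hdy, hdz]
  · exact absurd (aux_inj_pos e v he hv y z y' z' s t hy0 hz0 hy1 hz2 hL
      hy0' hz0' hy1' hz2' hdy hdz (by omega)) not_false

/-- Every element of the region is at most the corner element. -/
private lemma aux_bound (e v : ℤ) (he : 1 ≤ e) (hv : 3*e ≤ v) (y z : ℤ)
    (hy0 : 0 ≤ y) (hz0 : 0 ≤ z) (hy1 : y ≤ 5*e+4*v-1) (hz2 : z ≤ e+v-1)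
    (hL : v ≤ z → y ≤ 4*e+3*v-1) :
    y*(4*e+3*v)^2 + z*(6*e+5*v)^2 ≤ (5*e+4*v-1)*(4*e+3*v)^2 + (v-1)*(6*e+5*v)^2 := by
  have hB : (0:ℤ) < (4*e+3*v)^2 := pow_pos (by linarith) 2
  have hC : (0:ℤ) < (6*e+5*v)^2 := pow_pos (by linarith) 2
  rcases le_or_gt v z with hcase | hcase
  · have hy' := hL hcase
    have key : e*(6*e+5*v)^2 ≤ (e+v)*(4*e+3*v)^2 := by
      nlinarith [mul_nonneg (mul_nonneg (by linarith : (0:ℤ) ≤ e) (by linarith : (0:ℤ) ≤ v))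
          (by linarith : (0:ℤ) ≤ v - 3*e),
        mul_nonneg (mul_nonneg (by linarith : (0:ℤ) ≤ v) (by linarith : (0:ℤ) ≤ v))
          (by linarith : (0:ℤ) ≤ v - 3*e),
        mul_nonneg (mul_nonneg (by linarith : (0:ℤ) ≤ e) (by linarith : (0:ℤ) ≤ e))
          (by linarith : (0:ℤ) ≤ v - 3*e)]
    nlinarith [mul_le_mul_of_nonneg_right (show y ≤ 4*e+3*v-1 from hy') hB.le,
      mul_le_mul_of_nonneg_right (show z ≤ e+v-1 from hz2) hC.le]
  · nlinarith [mul_le_mul_of_nonneg_right hy1 hB.le,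
      mul_le_mul_of_nonneg_right (show z ≤ v-1 by omega) hC.le]

set_option maxHeartbeats 2000000 in
theorem frobenius_Sn_of_three_dvd (n : ℕ) (hn : 6 ≤ n) (h3 : n % 3 = 0) :
    (((fib (n + 3) : ℤ) / 2 - 1) * (fib (n + 1) : ℤ) ^ 2 +
        ((fib (n - 2) : ℤ) - 1) * (fib (n + 2) : ℤ) ^ 2 - (fib n : ℤ) ^ 2) ∉ SZ n ∧
    ∀ m : ℤ,
      (((fib (n + 3) : ℤ) / 2 - 1) * (fib (n + 1) : ℤ) ^ 2 +
        ((fib (n - 2) : ℤ) - 1) * (fib (n + 2) : ℤ) ^ 2 - (fib n : ℤ) ^ 2) < m →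
      m ∈ SZ n := by
  classical
  obtain ⟨k, rfl⟩ : ∃ k, n = k + 3 := ⟨n - 3, by omega⟩
  have hk3 : 3 ≤ k := by omega
  have hkd : 3 ∣ k := by omega
  obtain ⟨E, hE⟩ : ∃ E, fib k = 2 * E := (by simpa [show fib 3 = 2 by decide] using Nat.fib_dvd 3 k hkd : 2 ∣ fib k)
  set V : ℕ := fib (k+1) with hVdef
  have f2 : fib (k+2) = 2*E + V := by rw [Nat.fib_add_two, hE]
  have f3 : fib (k+3) = 2*E + 2*V := by
    have h := Nat.fib_add_two (n := k+1)
    rw [show k+1+2 = k+3 by omega, show k+1+1 = k+2 by omega] at h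
    omega
  have f4 : fib (k+4) = 4*E + 3*V := by
    have h := Nat.fib_add_two (n := k+2)
    rw [show k+2+2 = k+4 by omega, show k+2+1 = k+3 by omega] at h
    omega
  have f5 : fib (k+5) = 6*E + 5*V := by
    have h := Nat.fib_add_two (n := k+3)
    rw [show k+3+2 = k+5 by omega, show k+3+1 = k+4 by omega] at h
    omega
  have f6 : fib (k+6) = 10*E + 8*V := by
    have h := Nat.fib_add_two (n := k+4)
    rw [show k+4+2 = k+6 by omega, show k+4+1 = k+5 by omega] at h
    omega
  have hE1 : 1 ≤ E := by
    have h2 : 2 ≤ fib k := by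
      calc 2 = fib 3 := by decide
        _ ≤ fib k := Nat.fib_mono hk3
    omega
  have hV3 : 3*E ≤ V := by
    obtain ⟨j, rfl⟩ : ∃ j, k = j + 2 := ⟨k - 2, by omega⟩
    have h1 : fib (j+2) = fib j + fib (j+1) := Nat.fib_add_two
    have h2 : fib (j+2+1) = fib (j+1) + fib (j+2) := by
      rw [show j+2+1 = j+1+2 by omega]; exact Nat.fib_add_two
    have h3 : fib j ≤ fib (j+1) := Nat.fib_le_fib_succ
    omega
  set e : ℤ := (E : ℤ) with hedef
  set v : ℤ := (V : ℤ) with hvdef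
  have he : 1 ≤ e := by rw [hedef]; exact_mod_cast hE1
  have hv : 3*e ≤ v := by rw [hedef, hvdef]; exact_mod_cast hV3
  -- cast facts
  have ca : ((fib (k+3) : ℕ) : ℤ)^2 = 4*(e+v)^2 := by rw [f3]; push_cast; ring
  have cb : ((fib (k+3+1) : ℕ) : ℤ)^2 = (4*e+3*v)^2 := by
    rw [show k+3+1 = k+4 by omega, f4]; push_cast; ring
  have cc : ((fib (k+3+2) : ℕ) : ℤ)^2 = (6*e+5*v)^2 := by
    rw [show k+3+2 = k+5 by omega, f5]; push_cast; ring
  have chalf : ((fib (k+3+3) : ℕ) : ℤ) / 2 = 5*e+4*v := by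
    rw [show k+3+3 = k+6 by omega, f6]
    push_cast
    rw [show (10:ℤ)*e+8*v = 2*(5*e+4*v) by ring, Int.mul_ediv_cancel_left _ two_ne_zero]
  have cf : ((fib (k+3-2) : ℕ) : ℤ) = v := by rw [show k+3-2 = k+1 by omega]
  -- the Frobenius number in explicit form
  have Fval : ((fib (k+3+3) : ℤ) / 2 - 1) * (fib (k+3+1) : ℤ) ^ 2 +
      ((fib (k+3-2) : ℤ) - 1) * (fib (k+3+2) : ℤ) ^ 2 - (fib (k+3) : ℤ) ^ 2 =
      (5*e+4*v-1)*(4*e+3*v)^2 + (v-1)*(6*e+5*v)^2 - 4*(e+v)^2 := by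
    rw [chalf, cb, cc, cf, ca]
  have hcop : IsCoprime (4*(e+v)^2) ((4*e+3*v)^2) := by
    have h := Nat.fib_coprime_fib_succ (k+3)
    have h2 : Nat.Coprime ((fib (k+3))^2) ((fib (k+3+1))^2) := Nat.Coprime.pow 2 2 h
    have h3 := Nat.isCoprime_iff_coprime.mpr h2
    rw [show (((fib (k+3))^2 : ℕ) : ℤ) = 4*(e+v)^2 by push_cast [ca]; push_cast; ring,
      show (((fib (k+3+1))^2 : ℕ) : ℤ) = (4*e+3*v)^2 by push_cast [cb]; push_cast; ring] at h3
    exact h3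
  rw [Fval]
  have hApos : (0:ℤ) < 4*(e+v)^2 := by positivity
  constructor
  · rintro ⟨a, b, c, hx⟩
    rw [ca, cb, cc] at hx
    have hdvd : 4*(e+v)^2 ∣ ((b:ℤ) - (5*e+4*v-1))*(4*e+3*v)^2 + ((c:ℤ) - (v-1))*(6*e+5*v)^2 :=
      ⟨-(1+(a:ℤ)), by linear_combination -hx⟩
    have hmin := aux_min e v he hv hcop b c (by positivity) (by positivity) hdvd
    have ha0 : (0:ℤ) ≤ (a:ℤ) := by positivity
    linarith [mul_nonneg ha0 hApos.le, hmin, hx]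
  · intro m hm
    -- modulus
    set M : ℕ := fib (k+3) ^ 2 with hMdef
    have hMZ : (M : ℤ) = 4*(e+v)^2 := by rw [hMdef, Nat.cast_pow, ca]
    have hM0 : 0 < M := by
      have : 0 < fib (k+3) := by omega
      positivity
    haveI : NeZero M := ⟨hM0.ne'⟩
    -- the region
    set R : Finset (ℕ×ℕ) :=
      (Finset.range (5*E+4*V) ×ˢ Finset.range V) ∪
      (Finset.range (4*E+3*V) ×ˢ Finset.Ico V (V+E)) with hRdef
    have hmem : ∀ p : ℕ×ℕ, p ∈ R ↔
        (p.1 < 5*E+4*V ∧ p.2 < V) ∨ (p.1 < 4*E+3*V ∧ V ≤ p.2 ∧ p.2 < V+E) := by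
      intro p
      simp [hRdef, Finset.mem_union, Finset.mem_product, Finset.mem_range, Finset.mem_Ico,
        and_assoc]
    have hdisj : Disjoint ((Finset.range (5*E+4*V) ×ˢ Finset.range V))
        ((Finset.range (4*E+3*V) ×ˢ Finset.Ico V (V+E))) := by
      rw [Finset.disjoint_left]
      rintro p hp hq
      simp only [Finset.mem_product, Finset.mem_range, Finset.mem_Ico] at hp hq
      omega
    have hcard : R.card = M := by
      rw [hRdef, Finset.card_union_of_disjoint hdisj, Finset.card_product, Finset.card_product,
        Finset.card_range, Finset.card_range, Finset.card_range, Nat.card_Ico, hMdef, f3]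
      have h1 : V + E - V = E := by omega
      rw [h1]; ring
    set Phi : ℕ×ℕ → ZMod M := fun p => ((p.1 * fib (k+3+1)^2 + p.2 * fib (k+3+2)^2 : ℕ) : ZMod M)
      with hPhidef
    have hinj : Set.InjOn Phi R := by
      intro p hpm q hqm h
      have hp := (hmem p).mp (Finset.mem_coe.mp hpm)
      have hq := (hmem q).mp (Finset.mem_coe.mp hqm)
      have hmod := (ZMod.natCast_eq_natCast_iff _ _ _).mp h
      have hdvd0 := hmod.dvd
      obtain ⟨d, hd⟩ := hdvd0
      have hdvd : 4*(e+v)^2 ∣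
          ((q.1:ℤ) - (p.1:ℤ))*(4*e+3*v)^2 + ((q.2:ℤ) - (p.2:ℤ))*(6*e+5*v)^2 := by
        refine ⟨d, ?_⟩
        push_cast at hd
        rw [← hMZ]
        linear_combination hd - ((q.1:ℤ) - (p.1:ℤ))*cb - ((q.2:ℤ) - (p.2:ℤ))*cc
      have := aux_inj e v he hv hcop (q.1) (q.2) (p.1) (p.2)
        (by positivity) (by positivity) (by push_cast; omega) (by push_cast; omega)
        (by intro hyy; push_cast at hyy ⊢; omega)
        (by positivity) (by positivity) (by push_cast; omega) (by push_cast; omega)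
        (by intro hyy; push_cast at hyy ⊢; omega)
        hdvd
      have e1 : q.1 = p.1 := by exact_mod_cast this.1
      have e2 : q.2 = p.2 := by exact_mod_cast this.2
      exact Prod.ext e1.symm e2.symm
    have himg : R.image Phi = Finset.univ := by
      apply Finset.eq_univ_of_card
      rw [Finset.card_image_of_injOn hinj, hcard, ZMod.card]
    have hx : (m : ZMod M) ∈ R.image Phi := himg ▸ Finset.mem_univ _
    obtain ⟨p, hp, hPhip⟩ := Finset.mem_image.mp hx
    -- divisibility
    have h0 : ((((p.1 * fib (k+3+1)^2 + p.2 * fib (k+3+2)^2 : ℕ) : ℤ) - m : ℤ) : ZMod M) = 0 := by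
      push_cast
      rw [show ((p.1 : ZMod M) * (fib (k+3+1) : ZMod M)^2 + (p.2 : ZMod M) * (fib (k+3+2) : ZMod M)^2 : ZMod M)
        = Phi p by rw [hPhidef]; push_cast; ring]
      rw [hPhip]; ring
    rw [ZMod.intCast_zmod_eq_zero_iff_dvd] at h0
    obtain ⟨d, hd⟩ := h0
    have hd' : (p.1:ℤ)*(4*e+3*v)^2 + (p.2:ℤ)*(6*e+5*v)^2 - m = 4*(e+v)^2 * d := by
      push_cast at hd
      rw [← hMZ]
      linear_combination hd - (p.1:ℤ)*cb - (p.2:ℤ)*cc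
    rw [hmem] at hp
    have hbound := aux_bound e v he hv (p.1:ℤ) (p.2:ℤ) (by positivity) (by positivity)
      (by push_cast; omega) (by push_cast; omega) (by intro hzz; push_cast at hzz ⊢; omega)
    have hdle : d ≤ 0 := by
      by_contra hpos
      have h1 : (1:ℤ) ≤ d := by omega
      have h2 : 4*(e+v)^2 * 1 ≤ 4*(e+v)^2 * d := mul_le_mul_of_nonneg_left h1 (by positivity)
      rw [mul_one] at h2
      linarith [hbound, hm, hd', h2]
    refine ⟨(-d).toNat, p.1, p.2, ?_⟩
    rw [ca, cb, cc]
    have htn : ((-d).toNat : ℤ) = -d := Int.toNat_of_nonneg (by omega)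
    rw [htn]
    linear_combination -hd'
end

section
/- For every integer n ≥ 5 with n ≡ 2 (mod 3), the Frobenius number of S(n) = ⟨f_n², f_{n+1}², f_{n+2}²⟩ equals (f_{n+2} − 1)·f_{n+1}² + (f_{n−2}/2 − 1)·f_{n+2}² − f_n²; that is, this integer does not belong to S(n) and every strictly larger integer belongs to S(n). (Note that f_{n+1} and f_{n−2} are even when n ≡ 2 (mod 3).) -/
open Nat

/-- Arithmetic core of the non-membership proof: no integer pair `(s,t)` can satisfy
the three constraints coming from a hypothetical representation of the Frobenius number. -/
private lemma frob_core (e g s t : ℤ) (he : 1 ≤ e) (hg : 1 ≤ g)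
    (hB : 0 ≤ s*(4*e+3*g) - t*(3*e+2*g) + (4*e+3*g) - 1)
    (hC : 0 ≤ t*(e+g) - s*g + e - 1)
    (hneg : s*(4*e+3*g) + t*(e+g) ≤ -1) : False := by
  rcases le_or_gt 0 s with hs | hs
  · rcases le_or_gt 0 t with ht | ht
    · nlinarith [mul_nonneg hs (by linarith : (0:ℤ) ≤ 4*e+3*g),
        mul_nonneg ht (by linarith : (0:ℤ) ≤ e+g)]
    · have ht1 : t ≤ -1 := by linarith
      nlinarith [mul_nonneg hs (by linarith : (0:ℤ) ≤ g),
        mul_nonneg (by linarith : (0:ℤ) ≤ -t-1) (by linarith : (0:ℤ) ≤ e+g)]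
  · have hs1 : s ≤ -1 := by linarith
    rcases le_or_gt 0 t with ht | ht
    · nlinarith [mul_nonneg ht (by linarith : (0:ℤ) ≤ 3*e+2*g),
        mul_nonneg (by linarith : (0:ℤ) ≤ -s-1) (by linarith : (0:ℤ) ≤ 4*e+3*g)]
    · have ht1 : t ≤ -1 := by linarith
      by_cases hsm1 : s = -1
      · subst hsm1
        nlinarith [mul_nonneg (by linarith : (0:ℤ) ≤ -t-1) (by linarith : (0:ℤ) ≤ e+g)]
      · by_cases hsm2 : s = -2
        · subst hsm2
          have htm1 : t = -1 := by
            by_contra hne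
            have ht2 : t ≤ -2 := by
              rcases lt_or_ge t (-1) with h | h
              · omega
              · omega
            nlinarith [mul_nonneg (by linarith : (0:ℤ) ≤ -t-2) (by linarith : (0:ℤ) ≤ e+g)]
          subst htm1
          linarith
        · have hs3 : s ≤ -3 := by omega
          have k1 : t*(3*e+2*g) ≤ s*(4*e+3*g) + 4*e+3*g - 1 := by linarith
          have k2 : s*g - e + 1 ≤ t*(e+g) := by linarith
          have p1 : t*(3*e+2*g)*(e+g) ≤ (s*(4*e+3*g) + 4*e+3*g - 1)*(e+g) :=
            mul_le_mul_of_nonneg_right k1 (by linarith)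
          have p2 : (s*g - e + 1)*(3*e+2*g) ≤ t*(e+g)*(3*e+2*g) :=
            mul_le_mul_of_nonneg_right k2 (by linarith)
          have p3 : 0 ≤ (-s-3) * (2*e+g)^2 :=
            mul_nonneg (by linarith) (by positivity)
          nlinarith [p1, p2, p3]

/-- Reduction of an arbitrary combination `μ·b + ν·c` to one with `(μ,ν)` in the
Apéry region, modulo `a = (2E+G)²`, where `b = (2E+2G)²`, `c = (4E+3G)²`. -/
private lemma frob_reduce (E G : ℕ) (hE : 1 ≤ E) (hG : 1 ≤ G) :
    ∀ v μ ν : ℕ, μ * (2*E+2*G)^2 + ν * (4*E+3*G)^2 ≤ v →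
    ∃ μ' ν' k : ℕ,
      μ * (2*E+2*G)^2 + ν * (4*E+3*G)^2
        = μ' * (2*E+2*G)^2 + ν' * (4*E+3*G)^2 + k * (2*E+G)^2 ∧
      ((μ' + 1 ≤ 4*E+3*G ∧ ν' + 1 ≤ E) ∨ (μ' + 1 ≤ E+G ∧ ν' + 1 ≤ E+G)) := by
  intro v
  induction v using Nat.strong_induction_on with
  | _ v ih =>
    intro μ ν hv
    by_cases h1 : 4*E+3*G ≤ μ
    · obtain ⟨μ₁, rfl⟩ := Nat.exists_eq_add_of_le h1
      have key : (4*E+3*G + μ₁) * (2*E+2*G)^2 + ν * (4*E+3*G)^2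
          = (μ₁ * (2*E+2*G)^2 + (ν + G) * (4*E+3*G)^2) + (4*E+3*G) * (2*E+G)^2 := by ring
      have hpos : 0 < (4*E+3*G) * (2*E+G)^2 := by positivity
      have hlt : μ₁ * (2*E+2*G)^2 + (ν + G) * (4*E+3*G)^2 < v := by omega
      obtain ⟨μ', ν', k, hk, hr⟩ := ih _ hlt _ _ le_rfl
      exact ⟨μ', ν', k + (4*E+3*G), by rw [key, hk]; ring, hr⟩
    · by_cases h2 : E+G ≤ ν
      · obtain ⟨ν₁, rfl⟩ := Nat.exists_eq_add_of_le h2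
        have key : μ * (2*E+2*G)^2 + (E+G + ν₁) * (4*E+3*G)^2
            = ((μ + (3*E+2*G)) * (2*E+2*G)^2 + ν₁ * (4*E+3*G)^2) + (E+G) * (2*E+G)^2 := by
          ring
        have hpos : 0 < (E+G) * (2*E+G)^2 := by positivity
        have hlt : (μ + (3*E+2*G)) * (2*E+2*G)^2 + ν₁ * (4*E+3*G)^2 < v := by omega
        obtain ⟨μ', ν', k, hk, hr⟩ := ih _ hlt _ _ le_rfl
        exact ⟨μ', ν', k + (E+G), by rw [key, hk]; ring, hr⟩
      · by_cases h3 : E+G ≤ μ ∧ E ≤ ν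
        · obtain ⟨hμ, hν⟩ := h3
          obtain ⟨μ₁, rfl⟩ := Nat.exists_eq_add_of_le hμ
          obtain ⟨ν₁, rfl⟩ := Nat.exists_eq_add_of_le hν
          have key : (E+G + μ₁) * (2*E+2*G)^2 + (E + ν₁) * (4*E+3*G)^2
              = (μ₁ * (2*E+2*G)^2 + ν₁ * (4*E+3*G)^2) + (5*E+4*G) * (2*E+G)^2 := by ring
          have hpos : 0 < (5*E+4*G) * (2*E+G)^2 := by positivity
          have hlt : μ₁ * (2*E+2*G)^2 + ν₁ * (4*E+3*G)^2 < v := by omega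
          obtain ⟨μ', ν', k, hk, hr⟩ := ih _ hlt _ _ le_rfl
          exact ⟨μ', ν', k + (5*E+4*G), by rw [key, hk]; ring, hr⟩
        · refine ⟨μ, ν, 0, by ring, ?_⟩
          omega

set_option maxHeartbeats 1000000 in
theorem frobenius_Sn_of_mod_three_eq_two (n : ℕ) (hn : 5 ≤ n) (h3 : n % 3 = 2) :
    (((fib (n + 2) : ℤ) - 1) * (fib (n + 1) : ℤ) ^ 2 +
        ((fib (n - 2) : ℤ) / 2 - 1) * (fib (n + 2) : ℤ) ^ 2 - (fib n : ℤ) ^ 2) ∉ SZ n ∧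
    ∀ m : ℤ,
      (((fib (n + 2) : ℤ) - 1) * (fib (n + 1) : ℤ) ^ 2 +
        ((fib (n - 2) : ℤ) / 2 - 1) * (fib (n + 2) : ℤ) ^ 2 - (fib n : ℤ) ^ 2) < m →
      m ∈ SZ n := by
  obtain ⟨m, rfl⟩ : ∃ m', n = m' + 5 := ⟨n - 5, by omega⟩
  have h33 : (3 : ℕ) ∣ m + 3 := by omega
  have hdvd : fib 3 ∣ fib (m + 3) := fib_dvd 3 (m+3) h33
  have hfib3 : fib 3 = 2 := rfl
  obtain ⟨E, hE3⟩ : ∃ E, fib (m+3) = 2 * E := by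
    rw [hfib3] at hdvd; exact hdvd
  have hEpos : 1 ≤ E := by
    have : fib 3 ≤ fib (m+3) := fib_mono (by omega)
    rw [hfib3] at this; omega
  have hGpos : 1 ≤ fib (m + 4) := (Nat.fib_pos).mpr (by omega)
  have hG4E : fib (m + 4) ≤ 4 * E := by
    have h1 : fib (m+4) = fib (m+2) + fib (m+3) := Nat.fib_add_two
    have h2 : fib (m+2) ≤ fib (m+3) := fib_mono (by omega)
    omega
  have hfn : fib (m+5) = 2*E + fib (m + 4) := by
    have : fib (m+5) = fib (m+3) + fib (m+4) := Nat.fib_add_two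
    omega
  have hfn1 : fib (m+6) = 2*E + 2*fib (m + 4) := by
    have : fib (m+6) = fib (m+4) + fib (m+5) := Nat.fib_add_two
    omega
  have hfn2 : fib (m+7) = 4*E + 3*fib (m + 4) := by
    have : fib (m+7) = fib (m+5) + fib (m+6) := Nat.fib_add_two
    omega
  obtain ⟨G, hGdef⟩ : ∃ G, fib (m + 4) = G := ⟨_, rfl⟩
  rw [hGdef] at hGpos hG4E hfn hfn1 hfn2
  have hco1 : Nat.Coprime (fib (m+6)) (fib (m+5)) := (Nat.fib_coprime_fib_succ (m+5)).symm
  have hco2 : Nat.Coprime (fib (m+7)) (fib (m+5)) := by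
    have h1 : fib (m+7) = fib (m+5) + fib (m+6) := Nat.fib_add_two
    rw [h1]
    simpa using (Nat.coprime_add_self_right.mpr hco1.symm).symm
  have he : (1:ℤ) ≤ (E:ℤ) := by exact_mod_cast hEpos
  have hg : (1:ℤ) ≤ (G:ℤ) := by exact_mod_cast hGpos
  have hcb : IsCoprime ((2*(E:ℤ)+2*(G:ℤ))^2) ((2*(E:ℤ)+(G:ℤ))^2) := by
    have h1 : IsCoprime ((fib (m+6) : ℤ)) ((fib (m+5) : ℤ)) :=
      Nat.isCoprime_iff_coprime.mpr hco1
    rw [hfn1, hfn] at h1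
    push_cast at h1
    exact (h1.pow : IsCoprime (_ ^ 2) (_ ^ 2))
  have hcc : IsCoprime ((4*(E:ℤ)+3*(G:ℤ))^2) ((2*(E:ℤ)+(G:ℤ))^2) := by
    have h1 : IsCoprime ((fib (m+7) : ℤ)) ((fib (m+5) : ℤ)) :=
      Nat.isCoprime_iff_coprime.mpr hco2
    rw [hfn2, hfn] at h1
    push_cast at h1
    exact (h1.pow : IsCoprime (_ ^ 2) (_ ^ 2))
  have hEdiv : ((fib (m+5-2) : ℤ)) / 2 = (E : ℤ) := by
    rw [show m+5-2 = m+3 by omega, hE3]; push_cast; omega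
  have hcastn : ((fib (m+5) : ℤ)) = 2*(E:ℤ)+(G:ℤ) := by rw [hfn]; push_cast; ring
  have hcastn1 : ((fib (m+5+1) : ℤ)) = 2*(E:ℤ)+2*(G:ℤ) := by
    rw [show m+5+1 = m+6 from rfl, hfn1]; push_cast; ring
  have hcastn2 : ((fib (m+5+2) : ℤ)) = 4*(E:ℤ)+3*(G:ℤ) := by
    rw [show m+5+2 = m+7 from rfl, hfn2]; push_cast; ring
  have hFval : (((fib (m+5+2) : ℤ) - 1) * (fib (m+5+1) : ℤ) ^ 2 +
      ((fib (m+5-2) : ℤ) / 2 - 1) * (fib (m+5+2) : ℤ) ^ 2 - (fib (m+5) : ℤ) ^ 2)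
      = ((4*(E:ℤ)+3*(G:ℤ)) - 1) * (2*(E:ℤ)+2*(G:ℤ))^2
        + ((E:ℤ) - 1)*(4*(E:ℤ)+3*(G:ℤ))^2 - (2*(E:ℤ)+(G:ℤ))^2 := by
    rw [hEdiv, hcastn, hcastn1, hcastn2]
  have hapos : (0:ℤ) < (2*(E:ℤ)+(G:ℤ))^2 := by positivity
  constructor
  · -- non-membership
    rw [hFval]
    rintro ⟨A, B, C, hABC⟩
    rw [hcastn, hcastn1, hcastn2] at hABC
    have hxy : ((B:ℤ) - ((4*(E:ℤ)+3*(G:ℤ)) - 1))*(2*(E:ℤ)+2*(G:ℤ))^2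
        + ((C:ℤ) - ((E:ℤ) - 1))*(4*(E:ℤ)+3*(G:ℤ))^2
        = -((A:ℤ)+1)*(2*(E:ℤ)+(G:ℤ))^2 := by linear_combination -hABC
    set e : ℤ := (E:ℤ)
    set g : ℤ := (G:ℤ)
    set x : ℤ := (B:ℤ) - ((4*e+3*g) - 1) with hxdef
    set y : ℤ := (C:ℤ) - (e - 1) with hydef
    have d1 : (2*e+g)^2 ∣ x*(e+g) + y*(3*e+2*g) := by
      have hd : (2*e+g)^2 ∣ (2*e+2*g)^2 * (x*(e+g) + y*(3*e+2*g)) :=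
        ⟨(-((A:ℤ)+1))*(e+g) - y*(e+g), by linear_combination (e+g)*hxy⟩
      exact (hcb.symm).dvd_of_dvd_mul_left hd
    have d2 : (2*e+g)^2 ∣ x*g + y*(4*e+3*g) := by
      have hd : (2*e+g)^2 ∣ (4*e+3*g)^2 * (x*g + y*(4*e+3*g)) :=
        ⟨(-((A:ℤ)+1))*(4*e+3*g) - x*(4*e+3*g), by linear_combination (4*e+3*g)*hxy⟩
      exact (hcc.symm).dvd_of_dvd_mul_left hd
    obtain ⟨s, hs⟩ := d1
    obtain ⟨t, ht⟩ := d2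
    have hxst : x = s*(4*e+3*g) - t*(3*e+2*g) := by
      have key : (2*e+g)^2 * x = (2*e+g)^2 * (s*(4*e+3*g) - t*(3*e+2*g)) := by
        linear_combination (4*e+3*g)*hs - (3*e+2*g)*ht
      exact mul_left_cancel₀ (ne_of_gt hapos) key
    have hyst : y = t*(e+g) - s*g := by
      have key : (2*e+g)^2 * y = (2*e+g)^2 * (t*(e+g) - s*g) := by
        linear_combination (e+g)*ht - g*hs
      exact mul_left_cancel₀ (ne_of_gt hapos) key
    have hst : s*(4*e+3*g) + t*(e+g) = -((A:ℤ)+1) := by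
      have key : (2*e+g)^2 * (s*(4*e+3*g) + t*(e+g)) = (2*e+g)^2 * (-((A:ℤ)+1)) := by
        linear_combination hxy - ((2*e+2*g)^2)*hxst - ((4*e+3*g)^2)*hyst
      exact mul_left_cancel₀ (ne_of_gt hapos) key
    have hneg : s*(4*e+3*g) + t*(e+g) ≤ -1 := by
      have hA : (0:ℤ) ≤ (A:ℤ) := Int.natCast_nonneg A
      linarith
    have hBnn : 0 ≤ s*(4*e+3*g) - t*(3*e+2*g) + (4*e+3*g) - 1 := by
      have hB : (0:ℤ) ≤ (B:ℤ) := Int.natCast_nonneg B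
      have : (B:ℤ) = s*(4*e+3*g) - t*(3*e+2*g) + ((4*e+3*g) - 1) := by
        rw [← hxst, hxdef]; ring
      linarith
    have hCnn : 0 ≤ t*(e+g) - s*g + e - 1 := by
      have hC : (0:ℤ) ≤ (C:ℤ) := Int.natCast_nonneg C
      have : (C:ℤ) = t*(e+g) - s*g + (e - 1) := by
        rw [← hyst, hydef]; ring
      linarith
    exact frob_core e g s t he hg hBnn hCnn hneg
  · -- membership
    intro mm hmm
    rw [hFval] at hmm
    obtain ⟨u, v, huv⟩ := hcb
    have hnn : 0 ≤ (mm * u) % ((2*(E:ℤ)+(G:ℤ))^2) := Int.emod_nonneg _ (ne_of_gt hapos)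
    obtain ⟨μ₀, hμ₀⟩ : ∃ μ₀ : ℕ, ((mm * u) % ((2*(E:ℤ)+(G:ℤ))^2)) = (μ₀ : ℤ) :=
      ⟨((mm * u) % ((2*(E:ℤ)+(G:ℤ))^2)).toNat, (Int.toNat_of_nonneg hnn).symm⟩
    have hdvd0 : (2*(E:ℤ)+(G:ℤ))^2 ∣ mm - (μ₀ : ℤ) * (2*(E:ℤ)+2*(G:ℤ))^2 := by
      have h1 : (2*(E:ℤ)+(G:ℤ))^2 ∣ mm * u - (μ₀ : ℤ) := Int.dvd_self_sub_of_emod_eq hμ₀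
      obtain ⟨w, hw⟩ := h1
      refine ⟨mm * v + w * (2*(E:ℤ)+2*(G:ℤ))^2, ?_⟩
      linear_combination (2*(E:ℤ)+2*(G:ℤ))^2 * hw - mm * huv
    obtain ⟨μ', ν', k, hk, hr⟩ :=
      frob_reduce E G hEpos hGpos (μ₀ * (2*E+2*G)^2 + 0 * (4*E+3*G)^2) μ₀ 0 le_rfl
    have hkZ : (μ₀ : ℤ) * (2*(E:ℤ)+2*(G:ℤ))^2
        = ((μ' : ℤ) * (2*(E:ℤ)+2*(G:ℤ))^2 + (ν' : ℤ) * (4*(E:ℤ)+3*(G:ℤ))^2)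
          + (k : ℤ) * (2*(E:ℤ)+(G:ℤ))^2 := by
      have h0 := congrArg (fun z : ℕ => (z : ℤ)) hk
      push_cast at h0
      linarith
    have hdvdW : (2*(E:ℤ)+(G:ℤ))^2 ∣
        mm - ((μ' : ℤ) * (2*(E:ℤ)+2*(G:ℤ))^2 + (ν' : ℤ) * (4*(E:ℤ)+3*(G:ℤ))^2) := by
      obtain ⟨w, hw⟩ := hdvd0
      exact ⟨w + k, by linarith [hkZ, hw]⟩
    have hM : (μ' : ℤ) * (2*(E:ℤ)+2*(G:ℤ))^2 + (ν' : ℤ) * (4*(E:ℤ)+3*(G:ℤ))^2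
        ≤ ((4*(E:ℤ)+3*(G:ℤ)) - 1) * (2*(E:ℤ)+2*(G:ℤ))^2
          + ((E:ℤ) - 1)*(4*(E:ℤ)+3*(G:ℤ))^2 := by
      rcases hr with ⟨hμ, hν⟩ | ⟨hμ, hν⟩
      · have hμZ : (μ' : ℤ) ≤ 4*(E:ℤ)+3*(G:ℤ) - 1 := by
          have : (μ' : ℤ) + 1 ≤ 4*(E:ℤ)+3*(G:ℤ) := by exact_mod_cast hμ
          linarith
        have hνZ : (ν' : ℤ) ≤ (E:ℤ) - 1 := by
          have : (ν' : ℤ) + 1 ≤ (E:ℤ) := by exact_mod_cast hν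
          linarith
        have t1 : (μ' : ℤ) * (2*(E:ℤ)+2*(G:ℤ))^2
            ≤ (4*(E:ℤ)+3*(G:ℤ) - 1) * (2*(E:ℤ)+2*(G:ℤ))^2 :=
          mul_le_mul_of_nonneg_right hμZ (by positivity)
        have t2 : (ν' : ℤ) * (4*(E:ℤ)+3*(G:ℤ))^2 ≤ ((E:ℤ) - 1) * (4*(E:ℤ)+3*(G:ℤ))^2 :=
          mul_le_mul_of_nonneg_right hνZ (by positivity)
        linarith
      · have hμZ : (μ' : ℤ) ≤ (E:ℤ)+(G:ℤ) - 1 := by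
          have : (μ' : ℤ) + 1 ≤ (E:ℤ)+(G:ℤ) := by exact_mod_cast hμ
          linarith
        have hνZ : (ν' : ℤ) ≤ (E:ℤ)+(G:ℤ) - 1 := by
          have : (ν' : ℤ) + 1 ≤ (E:ℤ)+(G:ℤ) := by exact_mod_cast hν
          linarith
        have t1 : (μ' : ℤ) * (2*(E:ℤ)+2*(G:ℤ))^2
            ≤ ((E:ℤ)+(G:ℤ) - 1) * (2*(E:ℤ)+2*(G:ℤ))^2 :=
          mul_le_mul_of_nonneg_right hμZ (by positivity)
        have t2 : (ν' : ℤ) * (4*(E:ℤ)+3*(G:ℤ))^2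
            ≤ ((E:ℤ)+(G:ℤ) - 1) * (4*(E:ℤ)+3*(G:ℤ))^2 :=
          mul_le_mul_of_nonneg_right hνZ (by positivity)
        have hg4e : (G:ℤ) ≤ 4*(E:ℤ) := by exact_mod_cast hG4E
        have key : ((E:ℤ)+(G:ℤ)-1) * (2*(E:ℤ)+2*(G:ℤ))^2
              + ((E:ℤ)+(G:ℤ)-1) * (4*(E:ℤ)+3*(G:ℤ))^2
            ≤ ((4*(E:ℤ)+3*(G:ℤ)) - 1) * (2*(E:ℤ)+2*(G:ℤ))^2
              + ((E:ℤ) - 1)*(4*(E:ℤ)+3*(G:ℤ))^2 := by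
          have c1 : (0:ℤ) ≤ (4*(E:ℤ)-(G:ℤ))*(G:ℤ)^2 :=
            mul_nonneg (by linarith) (by positivity)
          have c2 : (0:ℤ) ≤ (E:ℤ)^3 := by positivity
          have c3 : (0:ℤ) ≤ (E:ℤ)^2*(G:ℤ) := by positivity
          have expand : ((4*(E:ℤ)+3*(G:ℤ)) - 1) * (2*(E:ℤ)+2*(G:ℤ))^2
                + ((E:ℤ) - 1)*(4*(E:ℤ)+3*(G:ℤ))^2
              - (((E:ℤ)+(G:ℤ)-1) * (2*(E:ℤ)+2*(G:ℤ))^2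
                + ((E:ℤ)+(G:ℤ)-1) * (4*(E:ℤ)+3*(G:ℤ))^2)
              = 12*(E:ℤ)^3 + 16*(E:ℤ)^2*(G:ℤ) + (4*(E:ℤ)-(G:ℤ))*(G:ℤ)^2 := by ring
          linarith [c1, c2, c3, expand]
        linarith
    have hge : (μ' : ℤ) * (2*(E:ℤ)+2*(G:ℤ))^2 + (ν' : ℤ) * (4*(E:ℤ)+3*(G:ℤ))^2 ≤ mm := by
      by_contra hlt
      push_neg at hlt
      have h2 : (2*(E:ℤ)+(G:ℤ))^2 ∣
          ((μ' : ℤ) * (2*(E:ℤ)+2*(G:ℤ))^2 + (ν' : ℤ) * (4*(E:ℤ)+3*(G:ℤ))^2) - mm := by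
        have := dvd_neg.mpr hdvdW
        rwa [neg_sub] at this
      have h3 := Int.le_of_dvd (by linarith) h2
      linarith
    obtain ⟨lam, hlam⟩ := hdvdW
    have hlamnn : 0 ≤ lam := by
      rcases le_or_gt 0 lam with h | h
      · exact h
      · exfalso
        have hm : (2*(E:ℤ)+(G:ℤ))^2 * lam < 0 := mul_neg_of_pos_of_neg hapos h
        linarith [hlam, hge]
    obtain ⟨lamn, hlamn⟩ : ∃ l : ℕ, lam = (l : ℤ) := ⟨lam.toNat, (Int.toNat_of_nonneg hlamnn).symm⟩
    refine ⟨lamn, μ', ν', ?_⟩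
    rw [hcastn, hcastn1, hcastn2]
    rw [hlamn] at hlam
    linear_combination hlam
end

section
/- For every integer n ≥ 4 with n ≡ 1 (mod 3), the Frobenius number of S(n) = ⟨f_n², f_{n+1}², f_{n+2}²⟩ equals (f_{n+2}/2 − 1)·f_{n+1}² + ((f_{n−2} + f_n)/2 − 1)·f_{n+2}² − f_n²; that is, this integer does not belong to S(n) and every strictly larger integer belongs to S(n). (Note that f_{n+2} and f_{n−2} + f_n are even when n ≡ 1 (mod 3).) -/
open Nat

/-! ### Auxiliary integer lemmas -/

private lemma div_bound (u l B : ℤ) (hu : 0 < u) (h1 : -(B*u) < u*l) (h2 : u*l < B*u) :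
    -B < l ∧ l < B := by
  constructor
  · have h3 : u * (-B) < u * l := by linarith
    exact lt_of_mul_lt_mul_left h3 hu.le
  · have h3 : u * l < u * B := by linarith
    exact lt_of_mul_lt_mul_left h3 hu.le

private lemma cong_struct (u v e d : ℤ) (hu0 : 0 < u) (hcop : IsCoprime u v)
    (hdvd : u^2 ∣ e*v^2 + d*(u+v)^2) : ∃ k l : ℤ, e + d = u*k ∧ k*v + 2*d = u*l := by
  obtain ⟨c, hc⟩ := hdvd
  have h0 : (e+d)*v^2 + 2*d*u*v = u^2 * (c - d) := by linear_combination hc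
  have hked : u ∣ e + d := by
    have h1 : u ∣ (e+d)*v^2 := ⟨u*(c-d) - 2*d*v, by linear_combination h0⟩
    exact (hcop.pow_right).dvd_of_dvd_mul_right h1
  obtain ⟨k, hk⟩ := hked
  have h4 : u * (k*v^2 + 2*d*v) = u * (u*(c-d)) := by linear_combination h0 - v^2 * hk
  have h5 : k*v^2 + 2*d*v = u*(c-d) := mul_left_cancel₀ hu0.ne' h4
  have h6 : u ∣ (k*v+2*d)*v := ⟨c-d, by linear_combination h5⟩
  obtain ⟨l, hl⟩ := hcop.dvd_of_dvd_mul_right h6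
  exact ⟨k, l, hk, hl⟩

private lemma cubic_ineq (u v : ℤ) (hu0 : 0 < u) (hv0 : 0 < v) (h35 : 3*v ≤ 5*u) :
    (v-u)*(u+v)^2 ≤ 2*u*v^2 := by
  nlinarith [mul_nonneg (by linarith : (0:ℤ) ≤ 5*u - 3*v) (sq_nonneg v),
    mul_nonneg (by linarith : (0:ℤ) ≤ 5*u - 3*v) (mul_nonneg hu0.le hv0.le),
    mul_nonneg (sq_nonneg u) (by linarith : (0:ℤ) ≤ 9*u - v)]

set_option maxHeartbeats 2000000 in
/-- Injectivity of the Apéry parametrization. -/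
private lemma inj_aux (u v p q r y z y' z' : ℤ) (hu : 3 ≤ u) (huv : u < v)
    (h32 : 3*u ≤ 2*v) (h35 : 3*v ≤ 5*u)
    (hu2 : u % 2 = 1) (hv2 : v % 2 = 1) (hcop : IsCoprime u v)
    (hp : v = u + 2*p) (hq : u + v = 2*q) (hr : 3*u = v + 2*r)
    (hy0 : 0 ≤ y) (hz0 : 0 ≤ z) (hy0' : 0 ≤ y') (hz0' : 0 ≤ z')
    (hyq : y < q) (hyq' : y' < q) (hzu : z < u) (hzu' : z' < u)
    (hm : y < p ∨ z < r) (hm' : y' < p ∨ z' < r)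
    (hdvd : u^2 ∣ (y'*v^2 + z'*(u+v)^2) - (y*v^2 + z*(u+v)^2)) :
    y = y' ∧ z = z' := by
  have hu0 : (0:ℤ) < u := by linarith
  have hdvd' : u^2 ∣ (y'-y)*v^2 + (z'-z)*(u+v)^2 := by
    have heq : (y'-y)*v^2 + (z'-z)*(u+v)^2
        = (y'*v^2 + z'*(u+v)^2) - (y*v^2 + z*(u+v)^2) := by ring
    rw [heq]; exact hdvd
  obtain ⟨k, l, hk, hl⟩ := cong_struct u v (y'-y) (z'-z) hu0 hcop hdvd'
  have hk2l : -2 ≤ k := by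
    have h1 : u * (-3) < u * k := by linarith
    have := lt_of_mul_lt_mul_left h1 hu0.le
    omega
  have hk2u : k ≤ 2 := by
    have h1 : u * k < u * 3 := by linarith
    have := lt_of_mul_lt_mul_left h1 hu0.le
    omega
  interval_cases k <;>
    (obtain ⟨hl1, hl2⟩ := div_bound u l 6 hu0 (by linarith) (by linarith)
     interval_cases l <;> omega)

set_option maxHeartbeats 4000000 in
/-- Minimality of the maximal Apéry element in its residue class. -/
private lemma min_aux (u v p q r Y Z : ℤ) (hu : 3 ≤ u) (huv : u < v)
    (h32 : 3*u ≤ 2*v) (h35 : 3*v ≤ 5*u)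
    (hu2 : u % 2 = 1) (hv2 : v % 2 = 1) (hcop : IsCoprime u v)
    (hp : v = u + 2*p) (hq : u + v = 2*q) (hr : 3*u = v + 2*r)
    (hY : 0 ≤ Y) (hZ : 0 ≤ Z)
    (hdvd : u^2 ∣ (Y*v^2 + Z*(u+v)^2) - ((q-1)*v^2 + (r-1)*(u+v)^2)) :
    (q-1)*v^2 + (r-1)*(u+v)^2 ≤ Y*v^2 + Z*(u+v)^2 := by
  by_contra hcon
  push_neg at hcon
  have hu0 : (0:ℤ) < u := by linarith
  have hv0 : (0:ℤ) < v := by linarith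
  set e := Y - (q-1) with he
  set d := Z - (r-1) with hd
  have hneg : e*v^2 + d*(u+v)^2 < 0 := by
    have heq : e*v^2 + d*(u+v)^2
        = (Y*v^2 + Z*(u+v)^2) - ((q-1)*v^2 + (r-1)*(u+v)^2) := by rw [he, hd]; ring
    rw [heq]; linarith
  have hdvd' : u^2 ∣ e*v^2 + d*(u+v)^2 := by
    have heq : e*v^2 + d*(u+v)^2
        = (Y*v^2 + Z*(u+v)^2) - ((q-1)*v^2 + (r-1)*(u+v)^2) := by rw [he, hd]; ring
    rw [heq]; exact hdvd
  have he0 : -(q-1) ≤ e := by rw [he]; linarith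
  have hd0 : -(r-1) ≤ d := by rw [hd]; linarith
  have hq1 : 3 ≤ q := by linarith
  have hr1 : 2 ≤ r := by linarith
  have haux1 : (0:ℤ) ≤ (u+v)^2 - v^2 := by nlinarith [mul_pos hu0 hv0, sq_nonneg u]
  have haux2 : (0:ℤ) ≤ 4*v^2 - (u+v)^2 := by
    nlinarith [mul_nonneg (by linarith : (0:ℤ) ≤ v - u) (by linarith : (0:ℤ) ≤ 3*v + u)]
  have haux3 : (0:ℤ) ≤ e + (q-1) := by linarith
  have haux4 : (0:ℤ) ≤ d + (r-1) := by linarith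
  have haux5 : (0:ℤ) ≤ q - 1 := by linarith
  have haux6 : (0:ℤ) ≤ r - 1 := by linarith
  have hdq : d < q := by
    have h1 : d*(u+v)^2 < q*(u+v)^2 := by
      nlinarith [mul_nonneg haux3 (sq_nonneg v), mul_nonneg haux5 haux1,
        mul_pos (by linarith : (0:ℤ) < u+v) (by linarith : (0:ℤ) < u+v)]
    exact lt_of_mul_lt_mul_right h1 (sq_nonneg (u+v))
  have hde : e < 4*r - 4 := by
    have h1 : e*v^2 < (4*r-4)*v^2 := by
      nlinarith [mul_nonneg haux4 (sq_nonneg (u+v)), mul_nonneg haux6 haux2]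
    exact lt_of_mul_lt_mul_right h1 (sq_nonneg v)
  obtain ⟨k, l, hk, hl⟩ := cong_struct u v e d hu0 hcop hdvd'
  have hval : 2*(e*v^2 + d*(u+v)^2) = u^2*(u*l + 2*v*l - k*v) := by
    linear_combination 2*v^2*hk + (u^2+2*u*v)*hl
  have hneg2 : u*l + 2*v*l - k*v < 0 := by
    by_contra hcc
    push_neg at hcc
    have h9 : 0 ≤ u^2 * (u*l + 2*v*l - k*v) := mul_nonneg (sq_nonneg u) hcc
    linarith
  have hk1 : -1 ≤ k := by
    have h1 : u * (-2) < u * k := by linarith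
    have := lt_of_mul_lt_mul_left h1 hu0.le
    omega
  have hk4 : k ≤ 4 := by
    have h1 : u * k < u * 5 := by linarith
    have := lt_of_mul_lt_mul_left h1 hu0.le
    omega
  interval_cases k <;>
    (obtain ⟨hl1, hl2⟩ := div_bound u l 10 hu0 (by linarith) (by linarith)
     interval_cases l <;> omega)

/-- Every residue class mod `u^2` is hit by the Apéry region. -/
private lemma covering (u v p q r : ℕ) (hu : 3 ≤ u) (huv : u < v)
    (h32 : 3*u ≤ 2*v) (h35 : 3*v ≤ 5*u)
    (hu2 : u % 2 = 1) (hv2 : v % 2 = 1) (hcop : Nat.Coprime u v)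
    (hp : v = u + 2*p) (hq : u + v = 2*q) (hr : 3*u = v + 2*r) (t : ZMod (u^2)) :
    ∃ y z : ℕ, y < q ∧ z < u ∧ (y < p ∨ z < r) ∧
      ((y * v^2 + z * (u+v)^2 : ℕ) : ZMod (u^2)) = t := by
  haveI : NeZero (u^2) := ⟨by positivity⟩
  classical
  set R : Finset (ℕ×ℕ) := (Finset.range p ×ˢ Finset.range u) ∪ (Finset.Ico p q ×ˢ Finset.range r)
    with hR
  have hmem : ∀ x ∈ R, x.1 < q ∧ x.2 < u ∧ (x.1 < p ∨ x.2 < r) := by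
    intro x hx
    simp only [hR, Finset.mem_union, Finset.mem_product, Finset.mem_range, Finset.mem_Ico] at hx
    omega
  -- integer versions of the hypotheses
  have Hu : (3:ℤ) ≤ (u:ℤ) := by exact_mod_cast hu
  have Huv : (u:ℤ) < v := by exact_mod_cast huv
  have H32 : 3*(u:ℤ) ≤ 2*v := by exact_mod_cast h32
  have H35 : 3*(v:ℤ) ≤ 5*u := by exact_mod_cast h35
  have Hu2 : (u:ℤ) % 2 = 1 := by omega
  have Hv2 : (v:ℤ) % 2 = 1 := by omega
  have Hcop : IsCoprime (u:ℤ) (v:ℤ) := by rw [Nat.isCoprime_iff_coprime]; exact hcop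
  have Hp : (v:ℤ) = u + 2*p := by exact_mod_cast hp
  have Hq : (u:ℤ) + v = 2*q := by exact_mod_cast hq
  have Hr : 3*(u:ℤ) = v + 2*r := by exact_mod_cast hr
  set f : ℕ×ℕ → ZMod (u^2) := fun x => ((x.1 * v^2 + x.2*(u+v)^2 : ℕ) : ZMod (u^2)) with hf
  have hinj : Set.InjOn f R := by
    intro x hx x' hx' hEq
    obtain ⟨hx1, hx2, hx3⟩ := hmem x hx
    obtain ⟨hx1', hx2', hx3'⟩ := hmem x' hx'
    have hmod : (x.1*v^2+x.2*(u+v)^2) ≡ (x'.1*v^2+x'.2*(u+v)^2) [MOD u^2] :=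
      (ZMod.natCast_eq_natCast_iff _ _ _).mp hEq
    have hdvd : ((u:ℤ))^2 ∣ ((x'.1:ℤ)*(v:ℤ)^2+(x'.2:ℤ)*((u:ℤ)+v)^2)
        - ((x.1:ℤ)*(v:ℤ)^2+(x.2:ℤ)*((u:ℤ)+v)^2) := by
      obtain ⟨c, hc⟩ := hmod.dvd
      refine ⟨c, ?_⟩
      push_cast at hc
      linear_combination hc
    have := inj_aux (u:ℤ) v p q r x.1 x.2 x'.1 x'.2 Hu Huv H32 H35 Hu2 Hv2 Hcop Hp Hq Hr
      (by positivity) (by positivity) (by positivity) (by positivity)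
      (by exact_mod_cast hx1) (by exact_mod_cast hx1') (by exact_mod_cast hx2)
      (by exact_mod_cast hx2')
      (by rcases hx3 with h | h
          exacts [Or.inl (by exact_mod_cast h), Or.inr (by exact_mod_cast h)])
      (by rcases hx3' with h | h
          exacts [Or.inl (by exact_mod_cast h), Or.inr (by exact_mod_cast h)])
      hdvd
    have e1 : x.1 = x'.1 := by exact_mod_cast this.1
    have e2 : x.2 = x'.2 := by exact_mod_cast this.2
    exact Prod.ext e1 e2
  have hdisj : Disjoint (Finset.range p ×ˢ Finset.range u) (Finset.Ico p q ×ˢ Finset.range r) := by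
    rw [Finset.disjoint_left]
    intro x hx hx'
    simp only [Finset.mem_product, Finset.mem_range, Finset.mem_Ico] at hx hx'
    omega
  have hcard : R.card = u^2 := by
    rw [hR, Finset.card_union_of_disjoint hdisj, Finset.card_product, Finset.card_product,
      Finset.card_range, Finset.card_range, Finset.card_range, Nat.card_Ico]
    have h1 : q - p = u := by omega
    have h2 : p + r = u := by omega
    rw [h1]
    calc p*u + u*r = (p+r)*u := by ring
    _ = u*u := by rw [h2]
    _ = u^2 := (sq u).symm
  have himg : R.image f = Finset.univ := by
    apply Finset.eq_univ_of_card
    rw [Finset.card_image_of_injOn hinj, hcard, ZMod.card]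
  have ht : t ∈ R.image f := by rw [himg]; exact Finset.mem_univ t
  obtain ⟨x, hxR, hxt⟩ := Finset.mem_image.mp ht
  obtain ⟨h1, h2, h3⟩ := hmem x hxR
  exact ⟨x.1, x.2, h1, h2, h3, hxt⟩

/-! ### Fibonacci facts -/

private lemma fib_ineqs : ∀ k : ℕ, 3 * fib (k+5) ≤ 5 * fib (k+4) ∧ 3 * fib (k+4) ≤ 2 * fib (k+5)
  | 0 => by norm_num [show fib 5 = 5 from rfl, show fib 4 = 3 from rfl]
  | k+1 => by
    obtain ⟨h1, h2⟩ := fib_ineqs k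
    have h3 : fib (k+6) = fib (k+4) + fib (k+5) := Nat.fib_add_two
    constructor
    · show 3 * fib (k+6) ≤ 5 * fib (k+5)
      omega
    · show 3 * fib (k+5) ≤ 2 * fib (k+6)
      omega

private lemma fib_parity : ∀ k : ℕ, fib (3*k) % 2 = 0 ∧ fib (3*k+1) % 2 = 1 ∧ fib (3*k+2) % 2 = 1
  | 0 => by norm_num
  | k+1 => by
    obtain ⟨h1, h2, h3⟩ := fib_parity k
    have e1 : fib (3*k+3) = fib (3*k+1) + fib (3*k+2) := by
      rw [show 3*k+3 = (3*k+1)+2 from rfl]; exact Nat.fib_add_two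
    have e2 : fib (3*k+4) = fib (3*k+2) + fib (3*k+3) := by
      rw [show 3*k+4 = (3*k+2)+2 from rfl]; exact Nat.fib_add_two
    have e3 : fib (3*k+5) = fib (3*k+3) + fib (3*k+4) := by
      rw [show 3*k+5 = (3*k+3)+2 from rfl]; exact Nat.fib_add_two
    have i1 : 3*(k+1) = 3*k+3 := by ring
    have i2 : 3*(k+1)+1 = 3*k+4 := by ring
    have i3 : 3*(k+1)+2 = 3*k+5 := by ring
    rw [i3, i2, i1]
    omega

private lemma fib_odd_of_mod3 (j : ℕ) (h : j % 3 ≠ 0) : fib j % 2 = 1 := by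
  have h13 : j % 3 = 1 ∨ j % 3 = 2 := by omega
  rcases h13 with h1 | h2
  · obtain ⟨k, rfl⟩ : ∃ k, j = 3*k+1 := ⟨j/3, by omega⟩
    exact (fib_parity k).2.1
  · obtain ⟨k, rfl⟩ : ∃ k, j = 3*k+2 := ⟨j/3, by omega⟩
    exact (fib_parity k).2.2

/-! ### Main theorem -/

set_option maxHeartbeats 1000000 in
theorem frobenius_Sn_of_mod_three_eq_one (n : ℕ) (hn : 4 ≤ n) (h3 : n % 3 = 1) :
    (((fib (n + 2) : ℤ) / 2 - 1) * (fib (n + 1) : ℤ) ^ 2 +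
        (((fib (n - 2) : ℤ) + (fib n : ℤ)) / 2 - 1) * (fib (n + 2) : ℤ) ^ 2 -
        (fib n : ℤ) ^ 2) ∉ SZ n ∧
    ∀ m : ℤ,
      (((fib (n + 2) : ℤ) / 2 - 1) * (fib (n + 1) : ℤ) ^ 2 +
        (((fib (n - 2) : ℤ) + (fib n : ℤ)) / 2 - 1) * (fib (n + 2) : ℤ) ^ 2 -
        (fib n : ℤ) ^ 2) < m →
      m ∈ SZ n := by
  obtain ⟨m, rfl⟩ : ∃ m, n = m + 4 := ⟨n - 4, by omega⟩
  have hsub : m + 4 - 2 = m + 2 := by omega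
  rw [hsub]
  simp only [show m+4+1 = m+5 from rfl, show m+4+2 = m+6 from rfl]
  set u := fib (m + 4) with hu_def
  set v := fib (m + 5) with hv_def
  have hfib6 : fib (m + 6) = u + v := Nat.fib_add_two (n := m + 4)
  have hfib2 : fib (m + 2) + fib (m + 3) = u := (Nat.fib_add_two (n := m + 2)).symm
  have hfib3 : fib (m + 3) + u = v := (Nat.fib_add_two (n := m + 3)).symm
  have hu3 : 3 ≤ u := by
    have := Nat.fib_mono (show 4 ≤ m + 4 by omega)
    simpa [show fib 4 = 3 from rfl] using this
  have huv : u < v := Nat.fib_lt_fib_succ (by omega)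
  have h32 : 3*u ≤ 2*v := (fib_ineqs m).2
  have h35 : 3*v ≤ 5*u := (fib_ineqs m).1
  have hu2 : u % 2 = 1 := fib_odd_of_mod3 (m+4) (by omega)
  have hv2 : v % 2 = 1 := fib_odd_of_mod3 (m+5) (by omega)
  have hcop : Nat.Coprime u v := Nat.fib_coprime_fib_succ (m+4)
  obtain ⟨q, hq⟩ : ∃ q, u + v = 2*q := ⟨(u+v)/2, by omega⟩
  obtain ⟨p, hp⟩ : ∃ p, v = u + 2*p := ⟨(v-u)/2, by omega⟩
  obtain ⟨r, hr⟩ : ∃ r, 3*u = v + 2*r := ⟨(3*u-v)/2, by omega⟩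
  -- integer versions
  have Hu : (3:ℤ) ≤ (u:ℤ) := by exact_mod_cast hu3
  have Huv : (u:ℤ) < v := by exact_mod_cast huv
  have H32 : 3*(u:ℤ) ≤ 2*v := by exact_mod_cast h32
  have H35 : 3*(v:ℤ) ≤ 5*u := by exact_mod_cast h35
  have Hu2 : (u:ℤ) % 2 = 1 := by omega
  have Hv2 : (v:ℤ) % 2 = 1 := by omega
  have Hcop : IsCoprime (u:ℤ) (v:ℤ) := by rw [Nat.isCoprime_iff_coprime]; exact hcop
  have Hp : (v:ℤ) = u + 2*p := by exact_mod_cast hp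
  have Hq : (u:ℤ) + v = 2*q := by exact_mod_cast hq
  have Hr : 3*(u:ℤ) = v + 2*r := by exact_mod_cast hr
  -- rewrite the divisions
  have e3 : ((fib (m+6) : ℕ) : ℤ) = (u:ℤ) + (v:ℤ) := by rw [hfib6]; push_cast; ring
  have e4 : ((fib (m+2) : ℕ) : ℤ) = 2*(r:ℤ) - (u:ℤ) := by omega
  rw [e3, e4]
  have e5 : (2*(r:ℤ) - (u:ℤ) + (u:ℤ)) / 2 - 1 = (r:ℤ) - 1 := by omega
  have e6 : ((u:ℤ) + (v:ℤ)) / 2 - 1 = (q:ℤ) - 1 := by omega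
  rw [e5, e6]
  constructor
  · rintro ⟨A, B, C, hABC⟩
    simp only [show m+4+1 = m+5 from rfl, show m+4+2 = m+6 from rfl] at hABC
    rw [← hu_def, ← hv_def, hfib6] at hABC
    push_cast at hABC
    have hdvd : ((u:ℤ))^2 ∣ ((B:ℤ)*(v:ℤ)^2 + (C:ℤ)*((u:ℤ)+v)^2)
        - (((q:ℤ)-1)*(v:ℤ)^2 + ((r:ℤ)-1)*((u:ℤ)+v)^2) :=
      ⟨-((A:ℤ)+1), by linear_combination -hABC⟩
    have hmin := min_aux (u:ℤ) v p q r (B:ℤ) (C:ℤ) Hu Huv H32 H35 Hu2 Hv2 Hcop Hp Hq Hr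
      (by positivity) (by positivity) hdvd
    have heq : (B:ℤ)*(v:ℤ)^2 + (C:ℤ)*((u:ℤ)+v)^2
        = (((q:ℤ)-1)*(v:ℤ)^2 + ((r:ℤ)-1)*((u:ℤ)+v)^2) - ((A:ℤ)+1)*(u:ℤ)^2 := by
      linear_combination -hABC
    have hu0 : (0:ℤ) < (u:ℤ) := by linarith only [Hu]
    have h4 : (0:ℤ) < ((A:ℤ)+1)*(u:ℤ)^2 :=
      mul_pos (by positivity) (pow_pos hu0 2)
    linarith only [hmin, heq, h4]
  · intro m' hm'
    obtain ⟨y, z, hyq, hzu, hyz, hcast⟩ :=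
      covering u v p q r hu3 huv h32 h35 hu2 hv2 hcop hp hq hr ((m' : ZMod (u^2)))
    haveI : NeZero (u^2) := ⟨by positivity⟩
    have hdvd : ((u:ℤ))^2 ∣ m' - ((y*v^2 + z*(u+v)^2 : ℕ) : ℤ) := by
      have h0 : (((m' - ((y*v^2+z*(u+v)^2 : ℕ):ℤ)) : ℤ) : ZMod (u^2)) = 0 := by
        rw [Int.cast_sub, Int.cast_natCast, hcast, sub_self]
      have h1 := (ZMod.intCast_zmod_eq_zero_iff_dvd _ _).mp h0
      exact_mod_cast h1
    obtain ⟨x, hx⟩ := hdvd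
    push_cast at hx
    have hxw : (y:ℤ)*(v:ℤ)^2+(z:ℤ)*((u:ℤ)+v)^2
        ≤ ((q:ℤ)-1)*(v:ℤ)^2 + ((r:ℤ)-1)*((u:ℤ)+v)^2 := by
      rcases hyz with h | h
      · -- y ≤ p-1, z ≤ u-1
        have hcu := cubic_ineq (u:ℤ) v (by linarith only [Hu]) (by linarith only [Hu, Huv]) H35
        have hpc : 2*(p:ℤ)*((u:ℤ)+v)^2 = ((v:ℤ)-u)*((u:ℤ)+v)^2 := by
          linear_combination -((u:ℤ)+v)^2 * Hp
        have s1 : (u:ℤ)*(v:ℤ)^2 ≤ ((q:ℤ)-1-y)*(v:ℤ)^2 :=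
          mul_le_mul_of_nonneg_right (by omega) (sq_nonneg _)
        have s2 : (-(p:ℤ))*((u:ℤ)+v)^2 ≤ ((r:ℤ)-1-z)*((u:ℤ)+v)^2 :=
          mul_le_mul_of_nonneg_right (by omega) (sq_nonneg _)
        have s3 : (0:ℤ) ≤ (u:ℤ)*(v:ℤ)^2 - (p:ℤ)*((u:ℤ)+v)^2 := by linarith only [hcu, hpc]
        linarith only [s1, s2, s3]
      · have s1 : (y:ℤ)*(v:ℤ)^2 ≤ ((q:ℤ)-1)*(v:ℤ)^2 :=
          mul_le_mul_of_nonneg_right (by omega) (sq_nonneg _)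
        have s2 : (z:ℤ)*((u:ℤ)+v)^2 ≤ ((r:ℤ)-1)*((u:ℤ)+v)^2 :=
          mul_le_mul_of_nonneg_right (by omega) (sq_nonneg _)
        linarith only [s1, s2]
    have hx0 : 0 ≤ x := by
      have h1 : (u:ℤ)^2 * (-1) < (u:ℤ)^2 * x := by linarith only [hx, hm', hxw]
      have h2 := lt_of_mul_lt_mul_left h1 (by positivity : (0:ℤ) ≤ (u:ℤ)^2)
      omega
    refine ⟨x.toNat, y, z, ?_⟩
    simp only [show m+4+1 = m+5 from rfl, show m+4+2 = m+6 from rfl]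
    rw [← hu_def, ← hv_def, hfib6]
    push_cast [Int.toNat_of_nonneg hx0]
    linear_combination hx
end

section
/- For every integer n ≥ 6 with n ≡ 0 (mod 3), the set of pseudo-Frobenius numbers of S(n) = ⟨f_n², f_{n+1}², f_{n+2}²⟩ is exactly the two-element set { (f_{n+1} − 1)·f_{n+1}² + (f_n/2 − 1)·f_{n+2}² − f_n² , (f_{n+3}/2 − 1)·f_{n+1}² + (f_{n−2} − 1)·f_{n+2}² − f_n² }. -/
open Nat

/-- `x` is a pseudo-Frobenius number of `S(n)`. -/
def IsPF (n : ℕ) (x : ℤ) : Prop :=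
  x ∉ SZ n ∧ ∀ s ∈ SZ n, s ≠ 0 → x + s ∈ SZ n

namespace PFAux

/-- abbreviations for the three generators, parametrized by `e = fib n / 2`,
`d = fib (n-3) / 2`, so that `fib n = 2e`, `fib (n+1) = 3e+d`, `fib (n+2) = 5e+d`. -/
def A (e : ℕ) : ℕ := 4 * e ^ 2
def B (e d : ℕ) : ℕ := (3 * e + d) ^ 2
def C (e d : ℕ) : ℕ := (5 * e + d) ^ 2

def Gen (e d : ℕ) : Set ℤ :=
  {x | ∃ α β γ : ℕ, x = (α : ℤ) * (A e : ℤ) + (β : ℤ) * (B e d : ℤ) + (γ : ℤ) * (C e d : ℤ)}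

/-- the (L-shaped) Apéry region. -/
def InR (e d y z : ℕ) : Prop := (z < e ∧ y < 3 * e + d) ∨ (z + d < e ∧ y < 4 * e + d)

lemma gen_add_mem {e d : ℕ} {x y : ℤ} (hx : x ∈ Gen e d) (hy : y ∈ Gen e d) :
    x + y ∈ Gen e d := by
  obtain ⟨α, β, γ, rfl⟩ := hx
  obtain ⟨α', β', γ', rfl⟩ := hy
  exact ⟨α + α', β + β', γ + γ', by push_cast; ring⟩

lemma A_mem {e d : ℕ} : (A e : ℤ) ∈ Gen e d := ⟨1, 0, 0, by push_cast; ring⟩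
lemma B_mem {e d : ℕ} : (B e d : ℤ) ∈ Gen e d := ⟨0, 1, 0, by push_cast; ring⟩
lemma C_mem {e d : ℕ} : (C e d : ℤ) ∈ Gen e d := ⟨0, 0, 1, by push_cast; ring⟩

/-- The key reduction lemma: any `β·B + γ·C` may be rewritten as `y·B + z·C + k·A`
with `(y,z)` in the Apéry region. -/
lemma reduce {e d : ℕ} (hd : 1 ≤ d) (hde : 3 * d + 1 ≤ e) :
    ∀ N β γ : ℕ, β + 2 * γ ≤ N →
      ∃ y z k : ℕ, InR e d y z ∧
        (β : ℤ) * (B e d : ℤ) + (γ : ℤ) * (C e d : ℤ)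
          = (y : ℤ) * (B e d : ℤ) + (z : ℤ) * (C e d : ℤ) + (k : ℤ) * (A e : ℤ) := by
  intro N
  induction N with
  | zero =>
    intro β γ h
    have hβ : β = 0 := by omega
    have hγ : γ = 0 := by omega
    exact ⟨0, 0, 0, Or.inl ⟨by omega, by omega⟩, by subst hβ; subst hγ; push_cast; ring⟩
  | succ N ih =>
    intro β γ hm
    by_cases hin : (γ < e ∧ β < 3 * e + d) ∨ (γ + d < e ∧ β < 4 * e + d)
    · exact ⟨β, γ, 0, hin, by push_cast; ring⟩
    · rcases Nat.lt_or_ge γ e with hγ | hγ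
      · rcases Nat.lt_or_ge β (4 * e + d) with hβ | hβ
        · -- R3 case: β ≥ 3e+d and γ ≥ e−d
          have hβ3 : 3 * e + d ≤ β := by
            rcases not_or.mp hin with ⟨h1, _⟩; omega
          have hγ3 : e - d ≤ γ := by
            rcases not_or.mp hin with ⟨_, h2⟩; omega
          obtain ⟨β', hβ'⟩ : ∃ β', β = β' + (3 * e + d) := ⟨β - (3 * e + d), by omega⟩
          obtain ⟨γ', hγ'⟩ : ∃ γ', γ = γ' + (e - d) := ⟨γ - (e - d), by omega⟩
          obtain ⟨y, z, k, hR, heq⟩ := ih β' γ' (by omega)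
          refine ⟨y, z, k + (13 * e + 3 * d), hR, ?_⟩
          subst hβ'; subst hγ'
          have hcast : ((e - d : ℕ) : ℤ) = (e : ℤ) - d := by
            have : d ≤ e := by omega
            omega
          simp only [A, B, C] at heq ⊢
          push_cast [hcast] at heq ⊢
          linear_combination heq
        · -- R2 case: β ≥ 4e+d
          obtain ⟨β', hβ'⟩ : ∃ β', β = β' + (4 * e + d) := ⟨β - (4 * e + d), by omega⟩
          obtain ⟨y, z, k, hR, heq⟩ := ih β' (γ + d) (by omega)
          refine ⟨y, z, k + (9 * e + 2 * d), hR, ?_⟩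
          subst hβ'
          simp only [A, B, C] at heq ⊢
          push_cast at heq ⊢
          linear_combination heq
      · -- R1 case: γ ≥ e
        obtain ⟨γ', hγ'⟩ : ∃ γ', γ = γ' + e := ⟨γ - e, by omega⟩
        obtain ⟨y, z, k, hR, heq⟩ := ih (β + e) γ' (by omega)
        refine ⟨y, z, k + (4 * e + d), hR, ?_⟩
        subst hγ'
        simp only [A, B, C] at heq ⊢
        push_cast at heq ⊢
        linear_combination heq

/-- membership characterization via the Apéry region. -/
lemma mem_iff {e d : ℕ} (hd : 1 ≤ d) (hde : 3 * d + 1 ≤ e) (x : ℤ) :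
    x ∈ Gen e d ↔ ∃ y z k : ℕ, InR e d y z ∧
      x = (y : ℤ) * (B e d : ℤ) + (z : ℤ) * (C e d : ℤ) + (k : ℤ) * (A e : ℤ) := by
  constructor
  · rintro ⟨α, β, γ, rfl⟩
    obtain ⟨y, z, k, hR, heq⟩ := reduce hd hde (β + 2 * γ) β γ le_rfl
    exact ⟨y, z, α + k, hR, by push_cast; linarith⟩
  · rintro ⟨y, z, k, _, rfl⟩
    exact ⟨k, y, z, by push_cast; ring⟩

/-- Injectivity of the Apéry region modulo `A`. -/
lemma inj {e d : ℕ} (hd : 1 ≤ d) (hde : 3 * d + 1 ≤ e)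
    (hodd : (3 * e + d) % 2 = 1) (hcop : Nat.Coprime (2 * e) (3 * e + d))
    {y z y' z' : ℕ} (h1 : InR e d y z) (h2 : InR e d y' z')
    (hdvd : ((A e : ℕ) : ℤ) ∣ ((y : ℤ) - y') * (B e d : ℤ) + ((z : ℤ) - z') * (C e d : ℤ)) :
    y = y' ∧ z = z' := by
  have he4 : 4 ≤ e := by omega
  have hcopZ : IsCoprime (2 * (e : ℤ)) (3 * (e : ℤ) + d) := by
    have := Nat.isCoprime_iff_coprime.mpr hcop
    convert this using 2 <;> push_cast <;> ring
  have hepos : (0 : ℤ) < (e : ℤ) := by omega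
  have key : (2 * (e : ℤ)) ^ 2 ∣
      (((y : ℤ) - y') + ((z : ℤ) - z')) * (3 * (e : ℤ) + d) ^ 2
        + 2 * (2 * (e : ℤ)) * ((z : ℤ) - z') * (3 * (e : ℤ) + d) := by
    obtain ⟨c, hc⟩ := hdvd
    refine ⟨c - ((z : ℤ) - z'), ?_⟩
    simp only [A, B, C] at hc
    push_cast at hc
    linear_combination hc
  have h5 : 2 * (e : ℤ) ∣ ((y : ℤ) - y') + ((z : ℤ) - z') := by
    have hd1 : 2 * (e : ℤ) ∣
        (((y : ℤ) - y') + ((z : ℤ) - z')) * (3 * (e : ℤ) + d) ^ 2 := by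
      have hd0 := dvd_trans (dvd_pow_self (2 * (e : ℤ)) (by norm_num)) key
      have h2' : 2 * (e : ℤ) ∣
          2 * (2 * (e : ℤ)) * ((z : ℤ) - z') * (3 * (e : ℤ) + d) :=
        ⟨2 * ((z : ℤ) - z') * (3 * (e : ℤ) + d), by ring⟩
      have := dvd_sub hd0 h2'
      simpa using this
    exact (hcopZ.pow_right (n := 2)).dvd_of_dvd_mul_right hd1
  obtain ⟨t, ht⟩ := h5
  have key2 : 2 * (e : ℤ) ∣ t * (3 * (e : ℤ) + d) + 2 * ((z : ℤ) - z') := by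
    have h6 : (2 * (e : ℤ)) * (2 * (e : ℤ)) ∣
        (2 * (e : ℤ)) * (t * (3 * (e : ℤ) + d) ^ 2 + 2 * ((z : ℤ) - z') * (3 * (e : ℤ) + d)) := by
      have heq : (((y : ℤ) - y') + ((z : ℤ) - z')) * (3 * (e : ℤ) + d) ^ 2
            + 2 * (2 * (e : ℤ)) * ((z : ℤ) - z') * (3 * (e : ℤ) + d)
          = (2 * (e : ℤ)) * (t * (3 * (e : ℤ) + d) ^ 2
            + 2 * ((z : ℤ) - z') * (3 * (e : ℤ) + d)) := by
        rw [ht]; ring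
      rw [← heq, ← pow_two]; exact key
    have h7 := (mul_dvd_mul_iff_left (by omega : (2 * (e : ℤ)) ≠ 0)).mp h6
    have h8 : 2 * (e : ℤ) ∣ (3 * (e : ℤ) + d) * (t * (3 * (e : ℤ) + d) + 2 * ((z : ℤ) - z')) := by
      have heq2 : (3 * (e : ℤ) + d) * (t * (3 * (e : ℤ) + d) + 2 * ((z : ℤ) - z'))
          = t * (3 * (e : ℤ) + d) ^ 2 + 2 * ((z : ℤ) - z') * (3 * (e : ℤ) + d) := by ring
      rw [heq2]; exact h7
    exact hcopZ.dvd_of_dvd_mul_left h8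
  -- coordinate bounds
  have hy4 : (y : ℤ) < 4 * e + d := by
    rcases h1 with ⟨_, h⟩ | ⟨_, h⟩ <;> omega
  have hy'4 : (y' : ℤ) < 4 * e + d := by
    rcases h2 with ⟨_, h⟩ | ⟨_, h⟩ <;> omega
  have hz4 : (z : ℤ) < e := by
    rcases h1 with ⟨h, _⟩ | ⟨h, _⟩ <;> omega
  have hz'4 : (z' : ℤ) < e := by
    rcases h2 with ⟨h, _⟩ | ⟨h, _⟩ <;> omega
  -- bound t
  have htl : -3 < t := by
    have c1 : 2 * (e : ℤ) * (-3) < 2 * (e : ℤ) * t := by rw [← ht]; omega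
    exact lt_of_mul_lt_mul_left c1 (by omega)
  have htr : t < 3 := by
    have c1 : 2 * (e : ℤ) * t < 2 * (e : ℤ) * 3 := by rw [← ht]; omega
    exact lt_of_mul_lt_mul_left c1 (by omega)
  obtain ⟨s, hs⟩ := key2
  interval_cases t
  · -- t = -2
    exfalso
    have hst : ((z : ℤ) - z') - d = (e : ℤ) * (s + 3) := by linarith [hs]
    have hu0 : s + 3 = 0 ∨ s + 3 = -1 := by
      have c1 : (e : ℤ) * (s + 3) < (e : ℤ) * 1 := by rw [← hst]; omega
      have c2 : (e : ℤ) * (-2) < (e : ℤ) * (s + 3) := by rw [← hst]; omega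
      have b1 := lt_of_mul_lt_mul_left c1 (by omega : (0:ℤ) ≤ (e : ℤ))
      have b2 := lt_of_mul_lt_mul_left c2 (by omega : (0:ℤ) ≤ (e : ℤ))
      omega
    rcases hu0 with hu | hu
    · -- Z = d, then Y = -(4e+d) : too small
      have : ((z : ℤ) - z') - d = 0 := by rw [hst, hu, mul_zero]
      omega
    · -- Z = d - e, so z' ≥ e - d hence y' < 3e+d; but y' - y = 3e+d
      have hZd : ((z : ℤ) - z') - d = -(e : ℤ) := by rw [hst, hu]; ring
      have hy'b : (y' : ℤ) < 3 * e + d := by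
        rcases h2 with ⟨_, h⟩ | ⟨h, _⟩ <;> omega
      omega
  · -- t = -1 : parity
    exfalso
    have hpar : -(3 * (e : ℤ) + d) + 2 * ((z : ℤ) - z') = 2 * ((e : ℤ) * s) := by
      linarith [hs]
    omega
  · -- t = 0
    have hZe : (z : ℤ) - z' = (e : ℤ) * s := by linarith [hs]
    have hs0 : s = 0 := by
      have c1 : (e : ℤ) * s < (e : ℤ) * 1 := by rw [← hZe]; omega
      have c2 : (e : ℤ) * (-1) < (e : ℤ) * s := by rw [← hZe]; omega
      have b1 := lt_of_mul_lt_mul_left c1 (by omega : (0:ℤ) ≤ (e : ℤ))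
      have b2 := lt_of_mul_lt_mul_left c2 (by omega : (0:ℤ) ≤ (e : ℤ))
      omega
    rw [hs0, mul_zero] at hZe
    constructor <;> omega
  · -- t = 1 : parity
    exfalso
    have hpar : (3 * (e : ℤ) + d) + 2 * ((z : ℤ) - z') = 2 * ((e : ℤ) * s) := by
      linarith [hs]
    omega
  · -- t = 2
    exfalso
    have hst : ((z : ℤ) - z') + d = (e : ℤ) * (s - 3) := by linarith [hs]
    have hu0 : s - 3 = 0 ∨ s - 3 = 1 := by
      have c1 : (e : ℤ) * (s - 3) < (e : ℤ) * 2 := by rw [← hst]; omega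
      have c2 : (e : ℤ) * (-1) < (e : ℤ) * (s - 3) := by rw [← hst]; omega
      have b1 := lt_of_mul_lt_mul_left c1 (by omega : (0:ℤ) ≤ (e : ℤ))
      have b2 := lt_of_mul_lt_mul_left c2 (by omega : (0:ℤ) ≤ (e : ℤ))
      omega
    rcases hu0 with hu | hu
    · -- Z = -d, then Y = 4e+d : too big
      have : ((z : ℤ) - z') + d = 0 := by rw [hst, hu, mul_zero]
      omega
    · -- Z = e - d, so z ≥ e - d hence y < 3e+d; but y - y' = 3e+d
      have hZd : ((z : ℤ) - z') + d = (e : ℤ) := by rw [hst, hu]; ring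
      have hyb : (y : ℤ) < 3 * e + d := by
        rcases h1 with ⟨_, h⟩ | ⟨h, _⟩ <;> omega
      omega

/-- Elements `W(y,z) - A` with `(y,z)` in the Apéry region are not in the semigroup. -/
lemma not_mem_sub {e d : ℕ} (hd : 1 ≤ d) (hde : 3 * d + 1 ≤ e)
    (hodd : (3 * e + d) % 2 = 1) (hcop : Nat.Coprime (2 * e) (3 * e + d))
    {y z : ℕ} (hR : InR e d y z) :
    ((y : ℤ) * (B e d : ℤ) + (z : ℤ) * (C e d : ℤ) - (A e : ℤ)) ∉ Gen e d := by
  intro hmem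
  rw [mem_iff hd hde] at hmem
  obtain ⟨y', z', k, hR', heq⟩ := hmem
  have hdvd : ((A e : ℕ) : ℤ) ∣ ((y : ℤ) - y') * (B e d : ℤ) + ((z : ℤ) - z') * (C e d : ℤ) :=
    ⟨k + 1, by linear_combination heq⟩
  obtain ⟨hy, hz⟩ := inj hd hde hodd hcop hR hR' hdvd
  subst hy; subst hz
  have hApos : (0 : ℤ) < (A e : ℤ) := by
    have : 0 < A e := Nat.mul_pos (by norm_num) (pow_pos (by omega) 2)
    exact_mod_cast this
  have : ((k : ℤ) + 1) * (A e : ℤ) = 0 := by linear_combination -heq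
  have hk1 : (0 : ℤ) < (k : ℤ) + 1 := by positivity
  nlinarith

def X1 (e d : ℕ) : ℤ :=
  (3 * (e : ℤ) + d - 1) * (B e d : ℤ) + ((e : ℤ) - 1) * (C e d : ℤ) - (A e : ℤ)
def X2 (e d : ℕ) : ℤ :=
  (4 * (e : ℤ) + d - 1) * (B e d : ℤ) + ((e : ℤ) - d - 1) * (C e d : ℤ) - (A e : ℤ)

/-- The main abstract result. -/
lemma main_abstract {e d : ℕ} (hd : 1 ≤ d) (hde : 3 * d + 1 ≤ e)
    (hodd : (3 * e + d) % 2 = 1) (hcop : Nat.Coprime (2 * e) (3 * e + d)) :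
    {x : ℤ | x ∉ Gen e d ∧ ∀ s ∈ Gen e d, s ≠ 0 → x + s ∈ Gen e d}
      = {X1 e d, X2 e d} := by
  have he4 : 4 ≤ e := by omega
  have hApos : (0 : ℤ) < (A e : ℤ) := by
    have : 0 < A e := Nat.mul_pos (by norm_num) (pow_pos (by omega) 2)
    exact_mod_cast this
  have hBpos : (0 : ℤ) < (B e d : ℤ) := by
    have : 0 < B e d := pow_pos (by omega) 2
    exact_mod_cast this
  have hCpos : (0 : ℤ) < (C e d : ℤ) := by
    have : 0 < C e d := pow_pos (by omega) 2
    exact_mod_cast this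
  ext x
  simp only [Set.mem_setOf_eq, Set.mem_insert_iff, Set.mem_singleton_iff]
  constructor
  · rintro ⟨hx, hcl⟩
    have hxa := hcl (A e : ℤ) A_mem (by omega)
    rw [mem_iff hd hde] at hxa
    obtain ⟨y, z, k, hR, heq⟩ := hxa
    have hk : k = 0 := by
      by_contra hk0
      refine hx ?_
      obtain ⟨k', rfl⟩ : ∃ k', k = k' + 1 := ⟨k - 1, by omega⟩
      refine ⟨k', y, z, ?_⟩
      push_cast at heq ⊢
      linarith
    subst hk
    have hxval : x = (y : ℤ) * (B e d : ℤ) + (z : ℤ) * (C e d : ℤ) - (A e : ℤ) := by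
      push_cast at heq; linarith
    by_cases hc1 : (y : ℤ) = 3 * e + d - 1 ∧ (z : ℤ) = e - 1
    · left
      rw [hxval, X1, hc1.1, hc1.2]
    by_cases hc2 : (y : ℤ) = 4 * e + d - 1 ∧ (z : ℤ) = e - d - 1
    · right
      rw [hxval, X2, hc2.1, hc2.2]
    exfalso
    have hstep : InR e d (y + 1) z ∨ InR e d y (z + 1) := by
      simp only [InR] at hR ⊢
      omega
    rcases hstep with hs | hs
    · refine not_mem_sub hd hde hodd hcop hs ?_
      have := hcl (B e d : ℤ) B_mem (by omega)
      have hxb : x + (B e d : ℤ)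
          = ((y : ℤ) + 1) * (B e d : ℤ) + (z : ℤ) * (C e d : ℤ) - (A e : ℤ) := by
        rw [hxval]; ring
      rw [hxb] at this
      have hcY : ((y + 1 : ℕ) : ℤ) = (y : ℤ) + 1 := by push_cast; ring
      rw [hcY]
      exact this
    · refine not_mem_sub hd hde hodd hcop hs ?_
      have := hcl (C e d : ℤ) C_mem (by omega)
      have hxc : x + (C e d : ℤ)
          = (y : ℤ) * (B e d : ℤ) + ((z : ℤ) + 1) * (C e d : ℤ) - (A e : ℤ) := by
        rw [hxval]; ring
      rw [hxc] at this
      have hcZ : ((z + 1 : ℕ) : ℤ) = (z : ℤ) + 1 := by push_cast; ring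
      rw [hcZ]
      exact this
  · -- the two corners are pseudo-Frobenius
    have corner_pf : ∀ x : ℤ, x ∉ Gen e d → x + (A e : ℤ) ∈ Gen e d →
        x + (B e d : ℤ) ∈ Gen e d → x + (C e d : ℤ) ∈ Gen e d →
        x ∉ Gen e d ∧ ∀ s ∈ Gen e d, s ≠ 0 → x + s ∈ Gen e d := by
      intro x hx ha hb hc
      refine ⟨hx, ?_⟩
      rintro s ⟨α, β, γ, rfl⟩ hs
      have hpos : 1 ≤ α ∨ 1 ≤ β ∨ 1 ≤ γ := by
        by_contra hcon
        push_neg at hcon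
        apply hs
        have : α = 0 ∧ β = 0 ∧ γ = 0 := by omega
        simp [this.1, this.2.1, this.2.2]
      rcases hpos with h | h | h
      · obtain ⟨α', rfl⟩ : ∃ α', α = α' + 1 := ⟨α - 1, by omega⟩
        rw [show x + (((α' + 1 : ℕ) : ℤ) * (A e : ℤ) + (β : ℤ) * (B e d : ℤ)
            + (γ : ℤ) * (C e d : ℤ))
            = (x + (A e : ℤ)) + ((α' : ℤ) * (A e : ℤ) + (β : ℤ) * (B e d : ℤ)
              + (γ : ℤ) * (C e d : ℤ)) by push_cast; ring]
        exact gen_add_mem ha ⟨α', β, γ, rfl⟩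
      · obtain ⟨β', rfl⟩ : ∃ β', β = β' + 1 := ⟨β - 1, by omega⟩
        rw [show x + ((α : ℤ) * (A e : ℤ) + ((β' + 1 : ℕ) : ℤ) * (B e d : ℤ)
            + (γ : ℤ) * (C e d : ℤ))
            = (x + (B e d : ℤ)) + ((α : ℤ) * (A e : ℤ) + (β' : ℤ) * (B e d : ℤ)
              + (γ : ℤ) * (C e d : ℤ)) by push_cast; ring]
        exact gen_add_mem hb ⟨α, β', γ, rfl⟩
      · obtain ⟨γ', rfl⟩ : ∃ γ', γ = γ' + 1 := ⟨γ - 1, by omega⟩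
        rw [show x + ((α : ℤ) * (A e : ℤ) + (β : ℤ) * (B e d : ℤ)
            + ((γ' + 1 : ℕ) : ℤ) * (C e d : ℤ))
            = (x + (C e d : ℤ)) + ((α : ℤ) * (A e : ℤ) + (β : ℤ) * (B e d : ℤ)
              + (γ' : ℤ) * (C e d : ℤ)) by push_cast; ring]
        exact gen_add_mem hc ⟨α, β, γ', rfl⟩
    rintro (rfl | rfl)
    · -- X1 is pseudo-Frobenius
      apply corner_pf
      · -- X1 ∉ Gen
        have hR : InR e d (3 * e + d - 1) (e - 1) := Or.inl ⟨by omega, by omega⟩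
        have hX1 : X1 e d = ((3 * e + d - 1 : ℕ) : ℤ) * (B e d : ℤ)
            + ((e - 1 : ℕ) : ℤ) * (C e d : ℤ) - (A e : ℤ) := by
          simp only [X1]
          have c1 : ((3 * e + d - 1 : ℕ) : ℤ) = 3 * (e : ℤ) + d - 1 := by omega
          have c2 : ((e - 1 : ℕ) : ℤ) = (e : ℤ) - 1 := by omega
          rw [c1, c2]
        rw [hX1]
        exact not_mem_sub hd hde hodd hcop hR
      · -- X1 + A ∈ Gen
        refine ⟨0, 3 * e + d - 1, e - 1, ?_⟩
        simp only [X1]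
        have c1 : ((3 * e + d - 1 : ℕ) : ℤ) = 3 * (e : ℤ) + d - 1 := by omega
        have c2 : ((e - 1 : ℕ) : ℤ) = (e : ℤ) - 1 := by omega
        rw [c1, c2]; push_cast; ring
      · -- X1 + B = (13e+3d-1)A + (d-1)C
        refine ⟨13 * e + 3 * d - 1, 0, d - 1, ?_⟩
        simp only [X1, A, B, C]
        have c1 : ((13 * e + 3 * d - 1 : ℕ) : ℤ) = 13 * (e : ℤ) + 3 * d - 1 := by omega
        have c2 : ((d - 1 : ℕ) : ℤ) = (d : ℤ) - 1 := by omega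
        rw [c1, c2]; push_cast; ring
      · -- X1 + C = (4e+d-1)A + (4e+d-1)B
        refine ⟨4 * e + d - 1, 4 * e + d - 1, 0, ?_⟩
        simp only [X1, A, B, C]
        have c1 : ((4 * e + d - 1 : ℕ) : ℤ) = 4 * (e : ℤ) + d - 1 := by omega
        rw [c1]; push_cast; ring
    · -- X2 is pseudo-Frobenius
      apply corner_pf
      · have hR : InR e d (4 * e + d - 1) (e - d - 1) := Or.inr ⟨by omega, by omega⟩
        have hX2 : X2 e d = ((4 * e + d - 1 : ℕ) : ℤ) * (B e d : ℤ)
            + ((e - d - 1 : ℕ) : ℤ) * (C e d : ℤ) - (A e : ℤ) := by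
          simp only [X2]
          have c1 : ((4 * e + d - 1 : ℕ) : ℤ) = 4 * (e : ℤ) + d - 1 := by omega
          have c2 : ((e - d - 1 : ℕ) : ℤ) = (e : ℤ) - d - 1 := by omega
          rw [c1, c2]
        rw [hX2]
        exact not_mem_sub hd hde hodd hcop hR
      · refine ⟨0, 4 * e + d - 1, e - d - 1, ?_⟩
        simp only [X2]
        have c1 : ((4 * e + d - 1 : ℕ) : ℤ) = 4 * (e : ℤ) + d - 1 := by omega
        have c2 : ((e - d - 1 : ℕ) : ℤ) = (e : ℤ) - d - 1 := by omega
        rw [c1, c2]; push_cast; ring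
      · -- X2 + B = (9e+2d-1)A + (e-1)C
        refine ⟨9 * e + 2 * d - 1, 0, e - 1, ?_⟩
        simp only [X2, A, B, C]
        have c1 : ((9 * e + 2 * d - 1 : ℕ) : ℤ) = 9 * (e : ℤ) + 2 * d - 1 := by omega
        have c2 : ((e - 1 : ℕ) : ℤ) = (e : ℤ) - 1 := by omega
        rw [c1, c2]; push_cast; ring
      · -- X2 + C = (13e+3d-1)A + (e-1)B
        refine ⟨13 * e + 3 * d - 1, e - 1, 0, ?_⟩
        simp only [X2, A, B, C]
        have c1 : ((13 * e + 3 * d - 1 : ℕ) : ℤ) = 13 * (e : ℤ) + 3 * d - 1 := by omega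
        have c2 : ((e - 1 : ℕ) : ℤ) = (e : ℤ) - 1 := by omega
        rw [c1, c2]; push_cast; ring

end PFAux

theorem pseudoFrobenius_Sn_of_three_dvd (n : ℕ) (hn : 6 ≤ n) (h3 : n % 3 = 0) :
    {x : ℤ | IsPF n x} =
      {((fib (n + 1) : ℤ) - 1) * (fib (n + 1) : ℤ) ^ 2 +
          ((fib n : ℤ) / 2 - 1) * (fib (n + 2) : ℤ) ^ 2 - (fib n : ℤ) ^ 2,
        ((fib (n + 3) : ℤ) / 2 - 1) * (fib (n + 1) : ℤ) ^ 2 +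
          ((fib (n - 2) : ℤ) - 1) * (fib (n + 2) : ℤ) ^ 2 - (fib n : ℤ) ^ 2} := by
  obtain ⟨m, rfl⟩ : ∃ m, n = m + 6 := ⟨n - 6, by omega⟩
  -- Fibonacci recurrence chain
  have f2 : fib (m + 2) = fib m + fib (m + 1) := Nat.fib_add_two
  have f3 : fib (m + 3) = fib (m + 1) + fib (m + 2) := Nat.fib_add_two
  have f4 : fib (m + 4) = fib (m + 2) + fib (m + 3) := Nat.fib_add_two
  have f5 : fib (m + 5) = fib (m + 3) + fib (m + 4) := Nat.fib_add_two
  have f6 : fib (m + 6) = fib (m + 4) + fib (m + 5) := Nat.fib_add_two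
  have f7 : fib (m + 7) = fib (m + 5) + fib (m + 6) := Nat.fib_add_two
  have f8 : fib (m + 8) = fib (m + 6) + fib (m + 7) := Nat.fib_add_two
  have f9 : fib (m + 9) = fib (m + 7) + fib (m + 8) := Nat.fib_add_two
  have hp1 : 0 < fib (m + 1) := Nat.fib_pos.mpr (by omega)
  have hp2 : 0 < fib (m + 2) := Nat.fib_pos.mpr (by omega)
  -- evenness
  have hev6 : 2 ∣ fib (m + 6) := by
    have h36 : 3 ∣ m + 6 := by omega
    have := Nat.fib_dvd 3 (m + 6) h36
    simpa [show fib 3 = 2 from rfl] using this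
  have hev3 : 2 ∣ fib (m + 3) := by
    have h33 : 3 ∣ m + 3 := by omega
    have := Nat.fib_dvd 3 (m + 3) h33
    simpa [show fib 3 = 2 from rfl] using this
  obtain ⟨E, hE⟩ := hev6
  obtain ⟨D, hD⟩ := hev3
  -- key linear identities
  have hfib7 : fib (m + 7) = 3 * E + D := by omega
  have hfib8 : fib (m + 8) = 5 * E + D := by omega
  have hfib9 : fib (m + 9) = 8 * E + 2 * D := by omega
  have hfib4 : fib (m + 4) + D = E := by omega
  have hD1 : 1 ≤ D := by omega
  have hDE : 3 * D + 1 ≤ E := by omega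
  -- coprimality and parity
  have hcop : Nat.Coprime (2 * E) (3 * E + D) := by
    have := Nat.fib_coprime_fib_succ (m + 6)
    rwa [hE, hfib7] at this
  have hodd : (3 * E + D) % 2 = 1 := by
    rcases Nat.even_or_odd (3 * E + D) with hev | hod
    · exfalso
      obtain ⟨c, hc⟩ := hev
      have h2 : 2 ∣ Nat.gcd (2 * E) (3 * E + D) :=
        Nat.dvd_gcd ⟨E, rfl⟩ ⟨c, by omega⟩
      rw [hcop] at h2
      omega
    · exact Nat.odd_iff.mp hod
  -- identify SZ with Gen
  have hSZ : SZ (m + 6) = PFAux.Gen E D := by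
    ext x
    simp only [SZ, PFAux.Gen, Set.mem_setOf_eq]
    constructor
    · rintro ⟨a, b, c, rfl⟩
      refine ⟨a, b, c, ?_⟩
      rw [hE, show m + 6 + 1 = m + 7 from rfl, hfib7, show m + 6 + 2 = m + 8 from rfl, hfib8]
      simp only [PFAux.A, PFAux.B, PFAux.C]
      push_cast; ring
    · rintro ⟨a, b, c, rfl⟩
      refine ⟨a, b, c, ?_⟩
      rw [hE, show m + 6 + 1 = m + 7 from rfl, hfib7, show m + 6 + 2 = m + 8 from rfl, hfib8]
      simp only [PFAux.A, PFAux.B, PFAux.C]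
      push_cast; ring
  -- rewrite the claimed pseudo-Frobenius numbers
  have hx1 : ((fib (m + 6 + 1) : ℤ) - 1) * (fib (m + 6 + 1) : ℤ) ^ 2 +
      ((fib (m + 6) : ℤ) / 2 - 1) * (fib (m + 6 + 2) : ℤ) ^ 2 - (fib (m + 6) : ℤ) ^ 2
      = PFAux.X1 E D := by
    rw [show m + 6 + 1 = m + 7 from rfl, show m + 6 + 2 = m + 8 from rfl,
      hE, hfib7, hfib8]
    have hdiv : ((2 * E : ℕ) : ℤ) / 2 = (E : ℤ) := by
      push_cast
      exact Int.mul_ediv_cancel_left _ (by norm_num)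
    rw [hdiv]
    simp only [PFAux.X1, PFAux.A, PFAux.B, PFAux.C]
    push_cast; ring
  have hx2 : ((fib (m + 6 + 3) : ℤ) / 2 - 1) * (fib (m + 6 + 1) : ℤ) ^ 2 +
      ((fib (m + 6 - 2) : ℤ) - 1) * (fib (m + 6 + 2) : ℤ) ^ 2 - (fib (m + 6) : ℤ) ^ 2
      = PFAux.X2 E D := by
    rw [show m + 6 + 3 = m + 9 from rfl, show m + 6 + 1 = m + 7 from rfl,
      show m + 6 + 2 = m + 8 from rfl, show m + 6 - 2 = m + 4 from rfl,
      hE, hfib7, hfib8, hfib9]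
    have hdiv : ((8 * E + 2 * D : ℕ) : ℤ) / 2 = 4 * (E : ℤ) + D := by
      omega
    rw [hdiv]
    have hf4 : ((fib (m + 4) : ℕ) : ℤ) = (E : ℤ) - D := by omega
    rw [hf4]
    simp only [PFAux.X2, PFAux.A, PFAux.B, PFAux.C]
    push_cast; ring
  rw [hx1, hx2]
  have : {x : ℤ | IsPF (m + 6) x}
      = {x : ℤ | x ∉ PFAux.Gen E D ∧ ∀ s ∈ PFAux.Gen E D, s ≠ 0 → x + s ∈ PFAux.Gen E D} := by
    ext x
    simp only [Set.mem_setOf_eq, IsPF, hSZ]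
  rw [this]
  exact PFAux.main_abstract hD1 hDE hodd hcop
end

section
/- For every integer n ≥ 5 with n ≡ 2 (mod 3), the set of pseudo-Frobenius numbers of S(n) = ⟨f_n², f_{n+1}², f_{n+2}²⟩ is exactly the two-element set { (f_{n+1}/2 − 1)·f_{n+1}² + (f_{n+1}/2 − 1)·f_{n+2}² − f_n² , (f_{n+2} − 1)·f_{n+1}² + (f_{n−2}/2 − 1)·f_{n+2}² − f_n² }. -/
open Nat

namespace PFaux

def A (t v : ℕ) : ℕ := (2*t+v)^2
def B (t v : ℕ) : ℕ := (2*(t+v))^2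
def C (t v : ℕ) : ℕ := (4*t+3*v)^2

def Sab (t v : ℕ) : Set ℤ :=
  {x | ∃ a b c : ℕ, x = (a:ℤ)*(A t v : ℤ) + (b:ℤ)*(B t v : ℤ) + (c:ℤ)*(C t v : ℤ)}

def InL (t v b c : ℕ) : Prop := (b < 4*t+3*v ∧ c < t) ∨ (b < t+v ∧ t ≤ c ∧ c < t+v)

def Tset (t v : ℕ) : Set ℤ :=
  {x | ∃ (a : ℤ) (b c : ℕ), 0 ≤ a ∧ InL t v b c ∧
    x = a*(A t v : ℤ) + (b:ℤ)*(B t v : ℤ) + (c:ℤ)*(C t v : ℤ)}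

lemma R1 (t v : ℕ) : (5*(t:ℤ)+4*v)*(A t v : ℤ) = ((t:ℤ)+v)*(B t v : ℤ) + (t:ℤ)*(C t v : ℤ) := by
  unfold A B C; push_cast; ring

lemma R2 (t v : ℕ) : (4*(t:ℤ)+3*v)*(B t v : ℤ) = (4*(t:ℤ)+3*v)*(A t v : ℤ) + (v:ℤ)*(C t v : ℤ) := by
  unfold A B C; push_cast; ring

lemma R3 (t v : ℕ) : ((t:ℤ)+v)*(C t v : ℤ) = ((t:ℤ)+v)*(A t v : ℤ) + (3*(t:ℤ)+2*v)*(B t v : ℤ) := by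
  unfold A B C; push_cast; ring

variable {t v : ℕ}

lemma T_sub_S : Tset t v ⊆ Sab t v := by
  rintro x ⟨a, b, c, ha, _, rfl⟩
  obtain ⟨a', rfl⟩ : ∃ a' : ℕ, a = (a' : ℤ) := ⟨a.toNat, by omega⟩
  exact ⟨a', b, c, rfl⟩

lemma stepA {x : ℤ} (hx : x ∈ Tset t v) : x + (A t v : ℤ) ∈ Tset t v := by
  obtain ⟨a, b, c, ha, hL, rfl⟩ := hx
  exact ⟨a+1, b, c, by omega, hL, by ring⟩

lemma stepB (ht : 1 ≤ t) (hv : 1 ≤ v) (htv : t ≤ v) {x : ℤ} (hx : x ∈ Tset t v) :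
    x + (B t v : ℤ) ∈ Tset t v := by
  obtain ⟨a, b, c, ha, hL, rfl⟩ := hx
  by_cases hL' : InL t v (b+1) c
  · exact ⟨a, b+1, c, ha, hL', by push_cast; ring⟩
  · rcases hL with ⟨hb, hc⟩ | ⟨hb, hc1, hc2⟩
    · -- region 1, b+1 = 4t+3v
      have hb1 : b + 1 = 4*t+3*v := by unfold InL at hL'; omega
      refine ⟨a + (4*(t:ℤ)+3*v), 0, c+v, by positivity, ?_, ?_⟩
      · unfold InL; omega
      · have hbz : (b:ℤ) = 4*t+3*v-1 := by omega
        have := R2 t v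
        push_cast
        rw [hbz]
        linear_combination this
    · -- region 2, b+1 = t+v
      have hb1 : b + 1 = t+v := by unfold InL at hL'; omega
      refine ⟨a + (5*(t:ℤ)+4*v), 0, c - t, by positivity, ?_, ?_⟩
      · unfold InL; omega
      · have hbz : (b:ℤ) = (t:ℤ)+v-1 := by omega
        have hcz : ((c-t : ℕ):ℤ) = (c:ℤ)-t := by omega
        have := R1 t v
        push_cast
        rw [hbz, hcz]
        linear_combination -this

lemma stepC (ht : 1 ≤ t) (hv : 1 ≤ v) (htv : t ≤ v) {x : ℤ} (hx : x ∈ Tset t v) :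
    x + (C t v : ℤ) ∈ Tset t v := by
  obtain ⟨a, b, c, ha, hL, rfl⟩ := hx
  by_cases hL' : InL t v b (c+1)
  · exact ⟨a, b, c+1, ha, hL', by push_cast; ring⟩
  · rcases hL with ⟨hb, hc⟩ | ⟨hb, hc1, hc2⟩
    · -- region 1, c+1 = t, b ≥ t+v
      have hc1 : c + 1 = t ∧ t + v ≤ b := by unfold InL at hL'; omega
      refine ⟨a + (5*(t:ℤ)+4*v), b - (t+v), 0, by positivity, ?_, ?_⟩
      · unfold InL; omega
      · have hcz : (c:ℤ) = (t:ℤ)-1 := by omega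
        have hbz : ((b-(t+v) : ℕ):ℤ) = (b:ℤ)-(t+v) := by omega
        have := R1 t v
        push_cast
        rw [hcz, hbz]
        linear_combination -this
    · -- region 2, c+1 = t+v
      have hc3 : c + 1 = t+v := by unfold InL at hL'; omega
      refine ⟨a + ((t:ℤ)+v), b + (3*t+2*v), 0, by positivity, ?_, ?_⟩
      · unfold InL; omega
      · have hcz : (c:ℤ) = (t:ℤ)+v-1 := by omega
        have := R3 t v
        push_cast
        rw [hcz]
        linear_combination this

lemma S_eq_T (ht : 1 ≤ t) (hv : 1 ≤ v) (htv : t ≤ v) : Sab t v = Tset t v := by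
  apply Set.Subset.antisymm _ T_sub_S
  rintro x ⟨a, b, c, rfl⟩
  induction c with
  | zero =>
    induction b with
    | zero =>
      induction a with
      | zero => exact ⟨0, 0, 0, le_refl _, Or.inl ⟨by omega, ht⟩, by push_cast; ring⟩
      | succ a ih =>
        have := stepA ih
        convert this using 1
        push_cast; ring
    | succ b ih =>
      have := stepB ht hv htv ih
      convert this using 1
      push_cast; ring
  | succ c ih =>
    have := stepC ht hv htv ih
    convert this using 1
    push_cast; ring

end PFaux

namespace PFaux

def Lreg (t v : ℕ) : Finset (ℕ × ℕ) :=
  (Finset.range (4*t+3*v) ×ˢ Finset.range t) ∪ (Finset.range (t+v) ×ˢ Finset.Ico t (t+v))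

lemma mem_Lreg {t v b c : ℕ} : (b, c) ∈ Lreg t v ↔ InL t v b c := by
  simp [Lreg, InL, Finset.mem_union, Finset.mem_product, Finset.mem_Ico]

lemma card_Lreg (t v : ℕ) : (Lreg t v).card = A t v := by
  unfold Lreg
  rw [Finset.card_union_of_disjoint]
  · simp only [Finset.card_product, Finset.card_range, Nat.card_Ico]
    unfold A
    have : t + v - t = v := by omega
    rw [this]; ring
  · rw [Finset.disjoint_left]
    rintro ⟨b, c⟩ h1 h2
    simp only [Finset.mem_product, Finset.mem_range, Finset.mem_Ico] at h1 h2
    omega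

def phi (t v : ℕ) : ℕ × ℕ → ZMod (A t v) :=
  fun p => ((p.1 * B t v + p.2 * C t v : ℕ) : ZMod (A t v))

lemma phi_surj (ht : 1 ≤ t) (hv : 1 ≤ v) (htv : t ≤ v)
    (hco : Nat.Coprime (B t v) (A t v)) (z : ZMod (A t v)) :
    ∃ p ∈ Lreg t v, phi t v p = z := by
  haveI : NeZero (A t v) := ⟨by unfold A; positivity⟩
  set u : (ZMod (A t v))ˣ := ZMod.unitOfCoprime (B t v) hco with hu
  set b₀ : ℕ := (z * (u⁻¹ : (ZMod (A t v))ˣ)).val with hb₀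
  have hbB : ((b₀ : ZMod (A t v))) * (B t v : ZMod (A t v)) = z := by
    rw [hb₀, ZMod.natCast_val, ZMod.cast_id]
    have : ((B t v : ℕ) : ZMod (A t v)) = (u : ZMod (A t v)) := rfl
    rw [this]
    simp [mul_assoc]
  have hmem : ((b₀ : ℤ) * (B t v : ℤ)) ∈ Sab t v := ⟨0, b₀, 0, by push_cast; ring⟩
  rw [S_eq_T ht hv htv] at hmem
  obtain ⟨a, b', c', ha, hL, heq⟩ := hmem
  refine ⟨(b', c'), mem_Lreg.mpr hL, ?_⟩
  have := congrArg (fun x : ℤ => (x : ZMod (A t v))) heq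
  push_cast at this
  rw [ZMod.natCast_self] at this
  simp only [mul_zero, zero_add] at this
  unfold phi
  push_cast
  rw [← this]
  ring_nf
  rw [hbB]

lemma phi_injOn (ht : 1 ≤ t) (hv : 1 ≤ v) (htv : t ≤ v)
    (hco : Nat.Coprime (B t v) (A t v)) :
    Set.InjOn (phi t v) (Lreg t v) := by
  haveI : NeZero (A t v) := ⟨by unfold A; positivity⟩
  apply Finset.injOn_of_card_image_eq
  have himg : (Lreg t v).image (phi t v) = Finset.univ := by
    rw [Finset.eq_univ_iff_forall]
    intro z
    obtain ⟨p, hp, hpz⟩ := phi_surj ht hv htv hco z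
    exact Finset.mem_image.mpr ⟨p, hp, hpz⟩
  rw [himg, card_Lreg, Finset.card_univ, ZMod.card]

lemma uniq (ht : 1 ≤ t) (hv : 1 ≤ v) (htv : t ≤ v)
    (hco : Nat.Coprime (B t v) (A t v))
    {a a' : ℤ} {b c b' c' : ℕ} (hL : InL t v b c) (hL' : InL t v b' c')
    (heq : a*(A t v : ℤ) + (b:ℤ)*(B t v : ℤ) + (c:ℤ)*(C t v : ℤ)
        = a'*(A t v : ℤ) + (b':ℤ)*(B t v : ℤ) + (c':ℤ)*(C t v : ℤ)) :
    a = a' ∧ b = b' ∧ c = c' := by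
  have hphi : phi t v (b, c) = phi t v (b', c') := by
    have := congrArg (fun x : ℤ => (x : ZMod (A t v))) heq
    simp only [Int.cast_add, Int.cast_mul, Int.cast_natCast, ZMod.natCast_self,
      mul_zero, zero_add] at this
    unfold phi
    push_cast
    linear_combination this
  have hpair := phi_injOn ht hv htv hco (mem_Lreg.mpr hL) (mem_Lreg.mpr hL') hphi
  have hb : b = b' := congrArg Prod.fst hpair
  have hc : c = c' := congrArg Prod.snd hpair
  refine ⟨?_, hb, hc⟩
  subst hb; subst hc
  have hA : (A t v : ℤ) ≠ 0 := by
    have h1 : 0 < 2*t+v := by omega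
    have : 0 < A t v := pow_pos h1 2
    exact_mod_cast this.ne'
  have : a * (A t v : ℤ) = a' * (A t v : ℤ) := by linarith
  exact mul_right_cancel₀ hA this

end PFaux

namespace PFaux

lemma add_mem {t v : ℕ} {x y : ℤ} (hx : x ∈ Sab t v) (hy : y ∈ Sab t v) : x + y ∈ Sab t v := by
  obtain ⟨a, b, c, rfl⟩ := hx
  obtain ⟨a', b', c', rfl⟩ := hy
  exact ⟨a+a', b+b', c+c', by push_cast; ring⟩

/-- An element in normal form with a = -1 is not in S. -/
lemma notMem_of_neg {t v : ℕ} (ht : 1 ≤ t) (hv : 1 ≤ v) (htv : t ≤ v)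
    (hco : Nat.Coprime (B t v) (A t v)) {a : ℤ} {b c : ℕ} (ha : a < 0) (hL : InL t v b c) :
    a*(A t v : ℤ) + (b:ℤ)*(B t v : ℤ) + (c:ℤ)*(C t v : ℤ) ∉ Sab t v := by
  intro hmem
  rw [S_eq_T ht hv htv] at hmem
  obtain ⟨a', b', c', ha', hL', heq⟩ := hmem
  obtain ⟨h1, -, -⟩ := uniq ht hv htv hco hL hL' heq
  omega

theorem key (t v : ℕ) (ht : 1 ≤ t) (hv : 1 ≤ v) (htv : t ≤ v)
    (hco : Nat.Coprime (B t v) (A t v)) :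
    {x : ℤ | x ∉ Sab t v ∧ ∀ s ∈ Sab t v, s ≠ 0 → x + s ∈ Sab t v} =
      {((t:ℤ)+v-1)*(B t v : ℤ) + ((t:ℤ)+v-1)*(C t v : ℤ) - (A t v : ℤ),
       (4*(t:ℤ)+3*v-1)*(B t v : ℤ) + ((t:ℤ)-1)*(C t v : ℤ) - (A t v : ℤ)} := by
  have hAmem : (A t v : ℤ) ∈ Sab t v := ⟨1, 0, 0, by push_cast; ring⟩
  have hBmem : (B t v : ℤ) ∈ Sab t v := ⟨0, 1, 0, by push_cast; ring⟩
  have hCmem : (C t v : ℤ) ∈ Sab t v := ⟨0, 0, 1, by push_cast; ring⟩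
  have hAne : (A t v : ℤ) ≠ 0 := by
    have h1 : 0 < 2*t+v := by omega
    have : 0 < A t v := pow_pos h1 2
    exact_mod_cast this.ne'
  have hBne : (B t v : ℤ) ≠ 0 := by
    have h1 : 0 < 2*(t+v) := by omega
    have : 0 < B t v := pow_pos h1 2
    exact_mod_cast this.ne'
  have hCne : (C t v : ℤ) ≠ 0 := by
    have h1 : 0 < 4*t+3*v := by omega
    have : 0 < C t v := pow_pos h1 2
    exact_mod_cast this.ne'
  ext x
  simp only [Set.mem_setOf_eq, Set.mem_insert_iff, Set.mem_singleton_iff]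
  constructor
  · rintro ⟨hxnot, hxadd⟩
    -- x + A ∈ S gives normal form with a = -1
    have hxA := hxadd _ hAmem hAne
    rw [S_eq_T ht hv htv] at hxA
    obtain ⟨a, b, c, ha, hL, heqA⟩ := hxA
    have hx : x = (a-1)*(A t v : ℤ) + (b:ℤ)*(B t v : ℤ) + (c:ℤ)*(C t v : ℤ) := by
      linarith [heqA]
    have ha0 : a = 0 := by
      by_contra h
      have ha1 : 0 ≤ a - 1 := by omega
      exact hxnot (T_sub_S ⟨a-1, b, c, ha1, hL, hx⟩)
    subst ha0
    rw [zero_sub] at hx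
    -- ¬ InL (b+1) c
    have hnB : ¬ InL t v (b+1) c := by
      intro hL2
      have hxB := hxadd _ hBmem hBne
      rw [S_eq_T ht hv htv] at hxB
      obtain ⟨a', b', c', ha', hL', heq⟩ := hxB
      have heq2 : (-1)*(A t v : ℤ) + ((b+1 : ℕ):ℤ)*(B t v : ℤ) + (c:ℤ)*(C t v : ℤ)
          = a'*(A t v : ℤ) + (b':ℤ)*(B t v : ℤ) + (c':ℤ)*(C t v : ℤ) := by
        push_cast
        rw [← heq, hx]; ring
      obtain ⟨h1, -, -⟩ := uniq ht hv htv hco hL2 hL' heq2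
      omega
    have hnC : ¬ InL t v b (c+1) := by
      intro hL2
      have hxC := hxadd _ hCmem hCne
      rw [S_eq_T ht hv htv] at hxC
      obtain ⟨a', b', c', ha', hL', heq⟩ := hxC
      have heq2 : (-1)*(A t v : ℤ) + ((b : ℕ):ℤ)*(B t v : ℤ) + ((c+1:ℕ):ℤ)*(C t v : ℤ)
          = a'*(A t v : ℤ) + (b':ℤ)*(B t v : ℤ) + (c':ℤ)*(C t v : ℤ) := by
        push_cast
        rw [← heq, hx]; ring
      obtain ⟨h1, -, -⟩ := uniq ht hv htv hco hL2 hL' heq2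
      omega
    have hcase : (b = 4*t+3*v-1 ∧ c = t-1) ∨ (b = t+v-1 ∧ c = t+v-1) := by
      unfold InL at hL hnB hnC
      omega
    rcases hcase with ⟨hb, hc⟩ | ⟨hb, hc⟩
    · right
      rw [hx, hb, hc]
      have h1 : ((4*t+3*v-1 : ℕ):ℤ) = 4*(t:ℤ)+3*v-1 := by omega
      have h2 : ((t-1 : ℕ):ℤ) = (t:ℤ)-1 := by omega
      rw [h1, h2]; ring
    · left
      rw [hx, hb, hc]
      have h1 : ((t+v-1 : ℕ):ℤ) = (t:ℤ)+v-1 := by omega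
      rw [h1]; ring
  · -- backward direction
    intro hx
    have main : ∀ b c : ℕ, InL t v b c →
        ((-1)*(A t v : ℤ) + (b:ℤ)*(B t v : ℤ) + (c:ℤ)*(C t v : ℤ) + (A t v : ℤ) ∈ Sab t v) →
        ((-1)*(A t v : ℤ) + (b:ℤ)*(B t v : ℤ) + (c:ℤ)*(C t v : ℤ) + (B t v : ℤ) ∈ Sab t v) →
        ((-1)*(A t v : ℤ) + (b:ℤ)*(B t v : ℤ) + (c:ℤ)*(C t v : ℤ) + (C t v : ℤ) ∈ Sab t v) →
        ((-1)*(A t v : ℤ) + (b:ℤ)*(B t v : ℤ) + (c:ℤ)*(C t v : ℤ)) ∉ Sab t v ∧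
        ∀ s ∈ Sab t v, s ≠ 0 →
          ((-1)*(A t v : ℤ) + (b:ℤ)*(B t v : ℤ) + (c:ℤ)*(C t v : ℤ)) + s ∈ Sab t v := by
      intro b c hL hA2 hB2 hC2
      refine ⟨notMem_of_neg ht hv htv hco (by omega) hL, ?_⟩
      rintro s ⟨p, q, r, rfl⟩ hs
      rcases Nat.eq_zero_or_pos p with hp | hp
      · rcases Nat.eq_zero_or_pos q with hq | hq
        · rcases Nat.eq_zero_or_pos r with hr | hr
          · exfalso; apply hs; rw [hp, hq, hr]; push_cast; ring
          · obtain ⟨r', rfl⟩ : ∃ r', r = r'+1 := ⟨r-1, by omega⟩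
            have heq3 : ((-1)*(A t v : ℤ) + (b:ℤ)*(B t v : ℤ) + (c:ℤ)*(C t v : ℤ))
                  + ((p:ℤ)*(A t v : ℤ) + (q:ℤ)*(B t v : ℤ) + ((r'+1:ℕ):ℤ)*(C t v : ℤ))
                = ((-1)*(A t v : ℤ) + (b:ℤ)*(B t v : ℤ) + (c:ℤ)*(C t v : ℤ) + (C t v : ℤ))
                  + ((p:ℤ)*(A t v : ℤ) + (q:ℤ)*(B t v : ℤ) + (r':ℤ)*(C t v : ℤ)) := by
              push_cast; ring
            rw [heq3]
            exact add_mem hC2 ⟨p, q, r', rfl⟩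
        · obtain ⟨q', rfl⟩ : ∃ q', q = q'+1 := ⟨q-1, by omega⟩
          have heq3 : ((-1)*(A t v : ℤ) + (b:ℤ)*(B t v : ℤ) + (c:ℤ)*(C t v : ℤ))
                + ((p:ℤ)*(A t v : ℤ) + ((q'+1:ℕ):ℤ)*(B t v : ℤ) + (r:ℤ)*(C t v : ℤ))
              = ((-1)*(A t v : ℤ) + (b:ℤ)*(B t v : ℤ) + (c:ℤ)*(C t v : ℤ) + (B t v : ℤ))
                + ((p:ℤ)*(A t v : ℤ) + (q':ℤ)*(B t v : ℤ) + (r:ℤ)*(C t v : ℤ)) := by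
            push_cast; ring
          rw [heq3]
          exact add_mem hB2 ⟨p, q', r, rfl⟩
      · obtain ⟨p', rfl⟩ : ∃ p', p = p'+1 := ⟨p-1, by omega⟩
        have heq3 : ((-1)*(A t v : ℤ) + (b:ℤ)*(B t v : ℤ) + (c:ℤ)*(C t v : ℤ))
              + (((p'+1:ℕ):ℤ)*(A t v : ℤ) + (q:ℤ)*(B t v : ℤ) + (r:ℤ)*(C t v : ℤ))
            = ((-1)*(A t v : ℤ) + (b:ℤ)*(B t v : ℤ) + (c:ℤ)*(C t v : ℤ) + (A t v : ℤ))
              + ((p':ℤ)*(A t v : ℤ) + (q:ℤ)*(B t v : ℤ) + (r:ℤ)*(C t v : ℤ)) := by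
          push_cast; ring
        rw [heq3]
        exact add_mem hA2 ⟨p', q, r, rfl⟩
    rcases hx with hx | hx
    · -- X1 : b = c = t+v-1
      have hL : InL t v (t+v-1) (t+v-1) := by unfold InL; omega
      have hxe : x = (-1)*(A t v : ℤ) + ((t+v-1:ℕ):ℤ)*(B t v : ℤ) + ((t+v-1:ℕ):ℤ)*(C t v : ℤ) := by
        rw [hx]
        have h1 : ((t+v-1 : ℕ):ℤ) = (t:ℤ)+v-1 := by omega
        rw [h1]; ring
      rw [hxe]
      refine main _ _ hL ?_ ?_ ?_
      · refine ⟨0, t+v-1, t+v-1, ?_⟩; push_cast; ring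
      · -- X1 + B = (5t+4v-1)A + (v-1)C  (via R1)
        refine ⟨5*t+4*v-1, 0, v-1, ?_⟩
        have h1 : ((5*t+4*v-1 : ℕ):ℤ) = 5*(t:ℤ)+4*v-1 := by omega
        have h2 : ((v-1 : ℕ):ℤ) = (v:ℤ)-1 := by omega
        have h3 : ((t+v-1 : ℕ):ℤ) = (t:ℤ)+v-1 := by omega
        rw [h1, h2, h3]
        linear_combination -(R1 t v)
      · -- X1 + C = (t+v-1)A + (4t+3v-1)B  (via R3)
        refine ⟨t+v-1, 4*t+3*v-1, 0, ?_⟩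
        have h1 : ((4*t+3*v-1 : ℕ):ℤ) = 4*(t:ℤ)+3*v-1 := by omega
        have h3 : ((t+v-1 : ℕ):ℤ) = (t:ℤ)+v-1 := by omega
        rw [h1, h3]
        linear_combination R3 t v
    · -- X2 : b = 4t+3v-1, c = t-1
      have hL : InL t v (4*t+3*v-1) (t-1) := by unfold InL; omega
      have hxe : x = (-1)*(A t v : ℤ) + ((4*t+3*v-1:ℕ):ℤ)*(B t v : ℤ) + ((t-1:ℕ):ℤ)*(C t v : ℤ) := by
        rw [hx]
        have h1 : ((4*t+3*v-1 : ℕ):ℤ) = 4*(t:ℤ)+3*v-1 := by omega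
        have h2 : ((t-1 : ℕ):ℤ) = (t:ℤ)-1 := by omega
        rw [h1, h2]; ring
      rw [hxe]
      refine main _ _ hL ?_ ?_ ?_
      · refine ⟨0, 4*t+3*v-1, t-1, ?_⟩; push_cast; ring
      · -- X2 + B = (4t+3v-1)A + (t+v-1)C  (via R2)
        refine ⟨4*t+3*v-1, 0, t+v-1, ?_⟩
        have h1 : ((4*t+3*v-1 : ℕ):ℤ) = 4*(t:ℤ)+3*v-1 := by omega
        have h2 : ((t-1 : ℕ):ℤ) = (t:ℤ)-1 := by omega
        have h3 : ((t+v-1 : ℕ):ℤ) = (t:ℤ)+v-1 := by omega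
        rw [h1, h2, h3]
        linear_combination R2 t v
      · -- X2 + C = (5t+4v-1)A + (3t+2v-1)B  (via R1)
        refine ⟨5*t+4*v-1, 3*t+2*v-1, 0, ?_⟩
        have h1 : ((4*t+3*v-1 : ℕ):ℤ) = 4*(t:ℤ)+3*v-1 := by omega
        have h2 : ((t-1 : ℕ):ℤ) = (t:ℤ)-1 := by omega
        have h4 : ((5*t+4*v-1 : ℕ):ℤ) = 5*(t:ℤ)+4*v-1 := by omega
        have h5 : ((3*t+2*v-1 : ℕ):ℤ) = 3*(t:ℤ)+2*v-1 := by omega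
        rw [h1, h2, h4, h5]
        linear_combination -(R1 t v)

end PFaux



open Nat

theorem pseudoFrobenius_Sn_of_mod_three_eq_two (n : ℕ) (hn : 5 ≤ n) (h3 : n % 3 = 2) :
    {x : ℤ | IsPF n x} =
      {((fib (n + 1) : ℤ) / 2 - 1) * (fib (n + 1) : ℤ) ^ 2 +
          ((fib (n + 1) : ℤ) / 2 - 1) * (fib (n + 2) : ℤ) ^ 2 - (fib n : ℤ) ^ 2,
        ((fib (n + 2) : ℤ) - 1) * (fib (n + 1) : ℤ) ^ 2 +
          ((fib (n - 2) : ℤ) / 2 - 1) * (fib (n + 2) : ℤ) ^ 2 - (fib n : ℤ) ^ 2} := by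
  set m := n - 2 with hm
  have hm2 : n = m + 2 := by omega
  have hm3 : 3 ≤ m := by omega
  have hdvd : (2:ℕ) ∣ fib m := by
    have h33 : (3:ℕ) ∣ m := by omega
    have := Nat.fib_dvd 3 m h33
    simpa [show fib 3 = 2 from rfl] using this
  obtain ⟨t, h2t⟩ := hdvd
  set v := fib (m+1) with hv0
  have hfn : fib n = 2*t+v := by
    rw [hm2, Nat.fib_add_two, h2t]
  have hfn1 : fib (n+1) = 2*(t+v) := by
    have : n + 1 = (m+1) + 2 := by omega
    rw [this, Nat.fib_add_two, ← hm2, hfn]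
    ring
  have hfn2 : fib (n+2) = 4*t+3*v := by
    have : n + 2 = (m+2) + 2 := by omega
    rw [this, Nat.fib_add_two, ← hm2]
    rw [hfn, hfn1]
    ring
  have hfm : fib (n-2) = 2*t := by rw [← hm, h2t]
  have ht : 1 ≤ t := by
    have h2 : 2 ≤ fib m := by
      calc (2:ℕ) = fib 3 := rfl
      _ ≤ fib m := Nat.fib_mono hm3
    omega
  have hv : 1 ≤ v := Nat.fib_pos.mpr (by omega)
  have htv : t ≤ v := by
    have : fib m ≤ fib (m+1) := Nat.fib_mono (by omega)
    omega
  have hco : Nat.Coprime (PFaux.B t v) (PFaux.A t v) := by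
    have h := (Nat.fib_coprime_fib_succ n).symm
    have h2 := Nat.Coprime.pow 2 2 h
    unfold PFaux.A PFaux.B
    rwa [← hfn, ← hfn1]
  have eA : ((PFaux.A t v : ℕ):ℤ) = (fib n : ℤ)^2 := by
    unfold PFaux.A; rw [hfn]; push_cast; ring
  have eB : ((PFaux.B t v : ℕ):ℤ) = (fib (n+1) : ℤ)^2 := by
    unfold PFaux.B; rw [hfn1]; push_cast; ring
  have eC : ((PFaux.C t v : ℕ):ℤ) = (fib (n+2) : ℤ)^2 := by
    unfold PFaux.C; rw [hfn2]; push_cast; ring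
  have hSZ : SZ n = PFaux.Sab t v := by
    unfold SZ PFaux.Sab
    simp only [eA, eB, eC]
  have hdiv1 : (fib (n+1) : ℤ)/2 = (t:ℤ)+v := by
    have h1 : (fib (n+1) : ℤ) = 2*((t:ℤ)+v) := by rw [hfn1]; push_cast; ring
    rw [h1]; omega
  have hdiv2 : (fib (n-2) : ℤ)/2 = (t:ℤ) := by
    have h1 : (fib (n-2) : ℤ) = 2*(t:ℤ) := by rw [hfm]; push_cast; ring
    rw [h1]; omega
  have hkey := PFaux.key t v ht hv htv hco
  have hset : {x : ℤ | IsPF n x} =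
      {x : ℤ | x ∉ PFaux.Sab t v ∧ ∀ s ∈ PFaux.Sab t v, s ≠ 0 → x + s ∈ PFaux.Sab t v} := by
    unfold IsPF
    rw [hSZ]
  rw [hset, hkey]
  have h1 : ((t:ℤ)+v-1)*(PFaux.B t v : ℤ) + ((t:ℤ)+v-1)*(PFaux.C t v : ℤ) - (PFaux.A t v : ℤ)
      = ((fib (n + 1) : ℤ) / 2 - 1) * (fib (n + 1) : ℤ) ^ 2 +
          ((fib (n + 1) : ℤ) / 2 - 1) * (fib (n + 2) : ℤ) ^ 2 - (fib n : ℤ) ^ 2 := by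
    rw [hdiv1, eA, eB, eC]
  have h2 : (4*(t:ℤ)+3*v-1)*(PFaux.B t v : ℤ) + ((t:ℤ)-1)*(PFaux.C t v : ℤ) - (PFaux.A t v : ℤ)
      = ((fib (n + 2) : ℤ) - 1) * (fib (n + 1) : ℤ) ^ 2 +
          ((fib (n - 2) : ℤ) / 2 - 1) * (fib (n + 2) : ℤ) ^ 2 - (fib n : ℤ) ^ 2 := by
    rw [hdiv2, eA, eB, eC]
    have h4 : (fib (n+2) : ℤ) = 4*(t:ℤ)+3*v := by rw [hfn2]; push_cast; ring
    rw [h4]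
  rw [h1, h2]
end

section
/- For every integer n ≥ 4 with n ≡ 1 (mod 3), the set of pseudo-Frobenius numbers of S(n) = ⟨f_n², f_{n+1}², f_{n+2}²⟩ is exactly the two-element set { (f_{n−1}/2 − 1)·f_{n+1}² + (f_n − 1)·f_{n+2}² − f_n² , (f_{n+2}/2 − 1)·f_{n+1}² + ((f_{n−2} + f_n)/2 − 1)·f_{n+2}² − f_n² }. -/
open Nat

namespace PFibAux

/-- The abstract model of `S(n)`: here `g = fib n` and `2*p = fib (n-1)`,
so that `fib (n+1) = g + 2p` and `fib (n+2) = 2g + 2p`. -/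
def M (g p : ℕ) : Set ℤ :=
  {x | ∃ a b c : ℕ, x = (a:ℤ)*(g:ℤ)^2 + (b:ℤ)*((g:ℤ)+2*(p:ℤ))^2 +
      (c:ℤ)*(2*(g:ℤ)+2*(p:ℤ))^2}

/-- The Apéry region. -/
def Reg (g p m l : ℕ) : Prop := m < g + p ∧ l < g ∧ (m < p ∨ l + p < g)

lemma norm (g p : ℕ) (hp : 1 ≤ p) (hpg : 2*p < g) :
    ∀ V m l : ℕ, m*(g+2*p)^2 + l*(2*g+2*p)^2 = V →
    ∃ k m' l' : ℕ, Reg g p m' l' ∧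
      m*(g+2*p)^2 + l*(2*g+2*p)^2 = k*g^2 + (m'*(g+2*p)^2 + l'*(2*g+2*p)^2) := by
  intro V
  induction V using Nat.strong_induction_on with
  | _ V ih =>
    intro m l hV
    by_cases hl : g ≤ l
    · obtain ⟨l'', rfl⟩ : ∃ l'', l = g + l'' := ⟨l - g, by omega⟩
      have key : m*(g+2*p)^2 + (g+l'')*(2*g+2*p)^2
          = (3*g+4*p)*g^2 + ((m+g)*(g+2*p)^2 + l''*(2*g+2*p)^2) := by ring
      have hpos : 0 < (3*g+4*p)*g^2 := Nat.mul_pos (by omega) (pow_pos (by omega) 2)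
      have hlt : (m+g)*(g+2*p)^2 + l''*(2*g+2*p)^2 < V := by
        rw [← hV, key]; exact Nat.lt_add_of_pos_left hpos
      obtain ⟨k, m', l', hreg, heq⟩ := ih _ hlt (m+g) l'' rfl
      exact ⟨(3*g+4*p) + k, m', l', hreg, by rw [key, heq]; ring⟩
    · by_cases hm : g + p ≤ m
      · obtain ⟨m'', rfl⟩ : ∃ m'', m = (g+p) + m'' := ⟨m - (g+p), by omega⟩
        have key : ((g+p)+m'')*(g+2*p)^2 + l*(2*g+2*p)^2
            = (g+p)*g^2 + (m''*(g+2*p)^2 + (l+p)*(2*g+2*p)^2) := by ring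
        have hpos : 0 < (g+p)*g^2 := Nat.mul_pos (by omega) (pow_pos (by omega) 2)
        have hlt : m''*(g+2*p)^2 + (l+p)*(2*g+2*p)^2 < V := by
          rw [← hV, key]; exact Nat.lt_add_of_pos_left hpos
        obtain ⟨k, m', l', hreg, heq⟩ := ih _ hlt m'' (l+p) rfl
        exact ⟨(g+p) + k, m', l', hreg, by rw [key, heq]; ring⟩
      · by_cases hc : p ≤ m ∧ g ≤ l + p
        · obtain ⟨r, hr⟩ : ∃ r, g = p + r := ⟨g - p, by omega⟩
          subst hr
          obtain ⟨m'', rfl⟩ : ∃ m'', m = p + m'' := ⟨m - p, by omega⟩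
          obtain ⟨l'', rfl⟩ : ∃ l'', l = r + l'' := ⟨l - r, by omega⟩
          have key : (p+m'')*((p+r)+2*p)^2 + (r+l'')*(2*(p+r)+2*p)^2
              = (4*(p+r)+5*p)*(p+r)^2 + (m''*((p+r)+2*p)^2 + l''*(2*(p+r)+2*p)^2) := by
            ring
          have hpos : 0 < (4*(p+r)+5*p)*(p+r)^2 :=
            Nat.mul_pos (by omega) (pow_pos (by omega) 2)
          have hlt : m''*((p+r)+2*p)^2 + l''*(2*(p+r)+2*p)^2 < V := by
            rw [← hV, key]; exact Nat.lt_add_of_pos_left hpos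
          obtain ⟨k, m', l', hreg, heq⟩ := ih _ hlt m'' l'' rfl
          exact ⟨(4*(p+r)+5*p) + k, m', l', hreg, by rw [key, heq]; ring⟩
        · exact ⟨0, m, l, ⟨by omega, by omega, by omega⟩, by ring⟩

lemma int_eq_zero_of_dvd {G x : ℤ} (hG : 0 < G) (h : G ∣ x) (h1 : -G < x) (h2 : x < G) :
    x = 0 := by
  rcases h with ⟨f, rfl⟩
  have hf1 : f < 1 := by nlinarith
  have hf2 : -1 < f := by nlinarith
  have : f = 0 := by omega
  simp [this]

lemma int_cases_of_dvd {G x : ℤ} (hG : 0 < G) (h : G ∣ x) (h1 : -2*G < x) (h2 : x < 2*G) :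
    x = -G ∨ x = 0 ∨ x = G := by
  rcases h with ⟨f, rfl⟩
  have hf1 : f < 2 := by nlinarith
  have hf2 : -2 < f := by nlinarith
  have : f = -1 ∨ f = 0 ∨ f = 1 := by omega
  rcases this with h | h | h <;> simp [h]

lemma coprime_int {g k : ℕ} (h : Nat.Coprime g k) : IsCoprime (g:ℤ) (k:ℤ) :=
  Int.isCoprime_iff_gcd_eq_one.mpr (by rwa [Int.gcd_natCast_natCast])

lemma coprime_two {g : ℕ} (hodd : g % 2 = 1) : Nat.Coprime g 2 := by
  rcases Nat.coprime_or_dvd_of_prime Nat.prime_two g with h | h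
  · exact h.symm
  · omega

/-- auxiliary contradiction lemma for the case `m+l = m'+l' + g`. -/
lemma inj_aux (g p : ℕ) (hp : 1 ≤ p) (hpg : 2*p < g) (hodd : g % 2 = 1)
    (hco : Nat.Coprime g (2*p)) {m l m' l' : ℕ}
    (h1 : Reg g p m l) (h2 : Reg g p m' l')
    (hdvd : ((g:ℤ)^2) ∣ ((m:ℤ)*((g:ℤ)+2*(p:ℤ))^2 + (l:ℤ)*(2*(g:ℤ)+2*(p:ℤ))^2
        - ((m':ℤ)*((g:ℤ)+2*(p:ℤ))^2 + (l':ℤ)*(2*(g:ℤ)+2*(p:ℤ))^2)))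
    (he : (m:ℤ) - m' + ((l:ℤ) - l') = (g:ℤ)) : False := by
  set G := (g:ℤ) with hG
  set P := (p:ℤ) with hP
  have hGpos : 0 < G := by omega
  obtain ⟨h1a, h1b, h1c⟩ := h1
  obtain ⟨h2a, h2b, h2c⟩ := h2
  have h5 : G*(4*P*(((l:ℤ)-l')+P)) =
      ((m:ℤ)*(G+2*P)^2 + (l:ℤ)*(2*G+2*P)^2
        - ((m':ℤ)*(G+2*P)^2 + (l':ℤ)*(2*G+2*P)^2))
      - G^2*(((m:ℤ)-m')+4*((l:ℤ)-l')+4*P) := by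
    linear_combination (-(4*G*P+4*P^2)) * he
  have h6 : G*G ∣ G*(4*P*(((l:ℤ)-l')+P)) := by
    rw [h5]
    exact dvd_sub (by rwa [← pow_two]) ⟨(((m:ℤ)-m')+4*((l:ℤ)-l')+4*P), by ring⟩
  have h7 : G ∣ 4*P*(((l:ℤ)-l') + P) := by
    rwa [mul_dvd_mul_iff_left (by omega : G ≠ 0)] at h6
  have hco4 : Nat.Coprime g (2*(2*p)) := Nat.Coprime.mul_right (coprime_two hodd) hco
  have h8 : G ∣ ((l:ℤ)-l') + P := by
    have hc : IsCoprime G ((2*(2*p) : ℕ) : ℤ) := coprime_int hco4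
    refine hc.dvd_of_dvd_mul_left ?_
    have h2c2 : ((2*(2*p) : ℕ) : ℤ) = 4*P := by push_cast; ring
    rw [h2c2]; exact h7
  have hcase : ((l:ℤ)-l') + P = -G ∨ ((l:ℤ)-l') + P = 0 ∨ ((l:ℤ)-l') + P = G :=
    int_cases_of_dvd hGpos h8 (by omega) (by omega)
  rcases hcase with h9 | h9 | h9 <;> omega

lemma inj (g p : ℕ) (hp : 1 ≤ p) (hpg : 2*p < g) (hodd : g % 2 = 1)
    (hco : Nat.Coprime g (2*p)) {m l m' l' : ℕ}
    (h1 : Reg g p m l) (h2 : Reg g p m' l')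
    (hdvd : ((g:ℤ)^2) ∣ ((m:ℤ)*((g:ℤ)+2*(p:ℤ))^2 + (l:ℤ)*(2*(g:ℤ)+2*(p:ℤ))^2
        - ((m':ℤ)*((g:ℤ)+2*(p:ℤ))^2 + (l':ℤ)*(2*(g:ℤ)+2*(p:ℤ))^2))) :
    m = m' ∧ l = l' := by
  set G := (g:ℤ) with hG
  set P := (p:ℤ) with hP
  have hGpos : 0 < G := by omega
  have h1' := h1
  have h2' := h2
  obtain ⟨h1a, h1b, h1c⟩ := h1'
  obtain ⟨h2a, h2b, h2c⟩ := h2'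
  have hs1 : G ∣ (((2*p)^2 : ℕ) : ℤ) * (((m:ℤ)-m') + ((l:ℤ)-l')) := by
    have hGdiff : G ∣ ((m:ℤ)*(G+2*P)^2 + (l:ℤ)*(2*G+2*P)^2
        - ((m':ℤ)*(G+2*P)^2 + (l':ℤ)*(2*G+2*P)^2)) :=
      (dvd_pow_self G two_ne_zero).trans hdvd
    have heq : (((2*p)^2 : ℕ) : ℤ) * (((m:ℤ)-m') + ((l:ℤ)-l')) =
        ((m:ℤ)*(G+2*P)^2 + (l:ℤ)*(2*G+2*P)^2
          - ((m':ℤ)*(G+2*P)^2 + (l':ℤ)*(2*G+2*P)^2))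
        - G*(G*(((m:ℤ)-m')+4*((l:ℤ)-l')) + 4*P*(((m:ℤ)-m')+2*((l:ℤ)-l'))) := by
      push_cast; ring
    rw [heq]
    exact dvd_sub hGdiff (dvd_mul_right _ _)
  have hs2 : G ∣ ((m:ℤ)-m') + ((l:ℤ)-l') := by
    have hc : IsCoprime G (((2*p)^2 : ℕ) : ℤ) := coprime_int (hco.pow_right 2)
    exact hc.dvd_of_dvd_mul_left hs1
  have hcase : ((m:ℤ)-m') + ((l:ℤ)-l') = -G ∨ ((m:ℤ)-m') + ((l:ℤ)-l') = 0 ∨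
      ((m:ℤ)-m') + ((l:ℤ)-l') = G := int_cases_of_dvd hGpos hs2 (by omega) (by omega)
  rcases hcase with h9 | h9 | h9
  · refine (inj_aux g p hp hpg hodd hco h2 h1 ?_ (by omega)).elim
    have : ((m':ℤ)*(G+2*P)^2 + (l':ℤ)*(2*G+2*P)^2
        - ((m:ℤ)*(G+2*P)^2 + (l:ℤ)*(2*G+2*P)^2)) =
        -(((m:ℤ)*(G+2*P)^2 + (l:ℤ)*(2*G+2*P)^2
        - ((m':ℤ)*(G+2*P)^2 + (l':ℤ)*(2*G+2*P)^2))) := by ring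
    rw [this]
    exact dvd_neg.mpr hdvd
  · have h10 : G*G ∣ G*(4*P*((l:ℤ)-l')) := by
      have heq : G*(4*P*((l:ℤ)-l')) =
          ((m:ℤ)*(G+2*P)^2 + (l:ℤ)*(2*G+2*P)^2
            - ((m':ℤ)*(G+2*P)^2 + (l':ℤ)*(2*G+2*P)^2))
          - G^2*(3*((l:ℤ)-l')) := by
        linear_combination (-(G+2*P)^2) * h9
      rw [heq]
      exact dvd_sub (by rwa [← pow_two]) ⟨(3*((l:ℤ)-l')), by ring⟩
    have h11 : G ∣ 4*P*((l:ℤ)-l') := by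
      rwa [mul_dvd_mul_iff_left (by omega : G ≠ 0)] at h10
    have hco4 : Nat.Coprime g (2*(2*p)) := Nat.Coprime.mul_right (coprime_two hodd) hco
    have h12 : G ∣ (l:ℤ)-l' := by
      have hc : IsCoprime G ((2*(2*p) : ℕ) : ℤ) := coprime_int hco4
      refine hc.dvd_of_dvd_mul_left ?_
      have h2c2 : ((2*(2*p) : ℕ) : ℤ) = 4*P := by push_cast; ring
      rw [h2c2]; exact h11
    have h13 : (l:ℤ) - l' = 0 := int_eq_zero_of_dvd hGpos h12 (by omega) (by omega)
    constructor <;> omega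
  · exact (inj_aux g p hp hpg hodd hco h1 h2 hdvd (by omega)).elim

lemma mem_iff (g p : ℕ) (hp : 1 ≤ p) (hpg : 2*p < g) {x : ℤ} :
    x ∈ M g p ↔ ∃ k m l : ℕ, Reg g p m l ∧
      x = (k:ℤ)*(g:ℤ)^2 + (m:ℤ)*((g:ℤ)+2*(p:ℤ))^2 + (l:ℤ)*(2*(g:ℤ)+2*(p:ℤ))^2 := by
  constructor
  · rintro ⟨a,b,c,rfl⟩
    obtain ⟨k,m,l,hreg,heq⟩ := norm g p hp hpg (b*(g+2*p)^2 + c*(2*g+2*p)^2) b c rfl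
    refine ⟨a+k, m, l, hreg, ?_⟩
    have hz : ((b*(g+2*p)^2 + c*(2*g+2*p)^2 : ℕ) : ℤ)
        = ((k*g^2 + (m*(g+2*p)^2 + l*(2*g+2*p)^2) : ℕ) : ℤ) := by exact_mod_cast heq
    push_cast at hz
    push_cast
    linear_combination hz
  · rintro ⟨k,m,l,-,rfl⟩
    exact ⟨k,m,l, by push_cast; ring⟩

lemma notMem (g p : ℕ) (hp : 1 ≤ p) (hpg : 2*p < g) (hodd : g % 2 = 1)
    (hco : Nat.Coprime g (2*p)) {m l : ℕ} (hreg : Reg g p m l) :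
    ((m:ℤ)*((g:ℤ)+2*(p:ℤ))^2 + (l:ℤ)*(2*(g:ℤ)+2*(p:ℤ))^2 - (g:ℤ)^2) ∉ M g p := by
  intro hx
  rw [mem_iff g p hp hpg] at hx
  obtain ⟨k,m',l',hreg',heq⟩ := hx
  have hdvd : ((g:ℤ)^2) ∣ ((m:ℤ)*((g:ℤ)+2*(p:ℤ))^2 + (l:ℤ)*(2*(g:ℤ)+2*(p:ℤ))^2
      - ((m':ℤ)*((g:ℤ)+2*(p:ℤ))^2 + (l':ℤ)*(2*(g:ℤ)+2*(p:ℤ))^2)) :=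
    ⟨(k:ℤ)+1, by linear_combination heq⟩
  obtain ⟨rfl, rfl⟩ := inj g p hp hpg hodd hco hreg hreg' hdvd
  have hgz : (0:ℤ) < (g:ℤ) := by exact_mod_cast (by omega : 0 < g)
  have hzero : ((k:ℤ)+1) * (g:ℤ)^2 = 0 := by linear_combination -heq
  nlinarith [pow_pos hgz 2, (by exact_mod_cast Nat.zero_le k : (0:ℤ) ≤ (k:ℤ))]

lemma pf_forall (g p : ℕ) {x : ℤ}
    (hA : x + (g:ℤ)^2 ∈ M g p)
    (hB : x + ((g:ℤ)+2*(p:ℤ))^2 ∈ M g p)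
    (hC : x + (2*(g:ℤ)+2*(p:ℤ))^2 ∈ M g p) :
    ∀ s ∈ M g p, s ≠ 0 → x + s ∈ M g p := by
  rintro s ⟨a,b,c,rfl⟩ hne
  rcases Nat.eq_zero_or_pos a with rfl | ha
  · rcases Nat.eq_zero_or_pos b with rfl | hb
    · rcases Nat.eq_zero_or_pos c with rfl | hc
      · exact absurd (by push_cast; ring) hne
      · obtain ⟨c', rfl⟩ : ∃ c', c = c'+1 := ⟨c-1, by omega⟩
        obtain ⟨a2,b2,c2,h2⟩ := hC
        exact ⟨a2, b2, c2+c', by push_cast; push_cast at h2; linear_combination h2⟩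
    · obtain ⟨b', rfl⟩ : ∃ b', b = b'+1 := ⟨b-1, by omega⟩
      obtain ⟨a2,b2,c2,h2⟩ := hB
      exact ⟨a2, b2+b', c2+c, by push_cast; push_cast at h2; linear_combination h2⟩
  · obtain ⟨a', rfl⟩ : ∃ a', a = a'+1 := ⟨a-1, by omega⟩
    obtain ⟨a2,b2,c2,h2⟩ := hA
    exact ⟨a2+a', b2+b, c2+c, by push_cast; push_cast at h2; linear_combination h2⟩

lemma main (g p : ℕ) (hp : 1 ≤ p) (hpg : 2*p < g) (hodd : g % 2 = 1)
    (hco : Nat.Coprime g (2*p)) :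
    {x : ℤ | x ∉ M g p ∧ ∀ s ∈ M g p, s ≠ 0 → x + s ∈ M g p} =
    {((p:ℤ)-1)*((g:ℤ)+2*(p:ℤ))^2 + ((g:ℤ)-1)*(2*(g:ℤ)+2*(p:ℤ))^2 - (g:ℤ)^2,
     ((g:ℤ)+(p:ℤ)-1)*((g:ℤ)+2*(p:ℤ))^2 + ((g:ℤ)-(p:ℤ)-1)*(2*(g:ℤ)+2*(p:ℤ))^2 - (g:ℤ)^2} := by
  have hgz : (0:ℤ) < (g:ℤ) := by exact_mod_cast (by omega : 0 < g)
  ext x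
  simp only [Set.mem_setOf_eq, Set.mem_insert_iff, Set.mem_singleton_iff]
  constructor
  · rintro ⟨hnot, hall⟩
    have hA := hall ((g:ℤ)^2) ⟨1,0,0, by push_cast; ring⟩ (ne_of_gt (pow_pos hgz 2))
    have hB := hall (((g:ℤ)+2*(p:ℤ))^2) ⟨0,1,0, by push_cast; ring⟩
      (ne_of_gt (pow_pos (by omega : (0:ℤ) < (g:ℤ)+2*(p:ℤ)) 2))
    have hC := hall ((2*(g:ℤ)+2*(p:ℤ))^2) ⟨0,0,1, by push_cast; ring⟩
      (ne_of_gt (pow_pos (by omega : (0:ℤ) < 2*(g:ℤ)+2*(p:ℤ)) 2))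
    rw [mem_iff g p hp hpg] at hA
    obtain ⟨k, m, l, hreg, heq⟩ := hA
    rcases Nat.eq_zero_or_pos k with rfl | hk
    swap
    · exfalso
      obtain ⟨k', rfl⟩ : ∃ k', k = k'+1 := ⟨k-1, by omega⟩
      exact hnot ⟨k', m, l, by push_cast at heq ⊢; linear_combination heq⟩
    push_cast at heq
    have hx : x = (m:ℤ)*((g:ℤ)+2*(p:ℤ))^2 + (l:ℤ)*(2*(g:ℤ)+2*(p:ℤ))^2 - (g:ℤ)^2 := by
      linear_combination heq
    have hnR1 : ¬ Reg g p (m+1) l := by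
      intro hR
      refine notMem g p hp hpg hodd hco hR ?_
      have hrw : ((m+1:ℕ):ℤ)*((g:ℤ)+2*(p:ℤ))^2 + (l:ℤ)*(2*(g:ℤ)+2*(p:ℤ))^2 - (g:ℤ)^2
          = x + ((g:ℤ)+2*(p:ℤ))^2 := by push_cast; linear_combination -hx
      rw [hrw]; exact hB
    have hnR2 : ¬ Reg g p m (l+1) := by
      intro hR
      refine notMem g p hp hpg hodd hco hR ?_
      have hrw : ((m:ℕ):ℤ)*((g:ℤ)+2*(p:ℤ))^2 + ((l+1:ℕ):ℤ)*(2*(g:ℤ)+2*(p:ℤ))^2 - (g:ℤ)^2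
          = x + (2*(g:ℤ)+2*(p:ℤ))^2 := by push_cast; linear_combination -hx
      rw [hrw]; exact hC
    have hml : (m = p - 1 ∧ l = g - 1) ∨ (m = g+p-1 ∧ l = g-p-1) := by
      unfold Reg at hreg hnR1 hnR2; omega
    rcases hml with ⟨hm, hl⟩ | ⟨hm, hl⟩
    · left
      have hmz : (m:ℤ) = (p:ℤ)-1 := by omega
      have hlz : (l:ℤ) = (g:ℤ)-1 := by omega
      rw [hx, hmz, hlz]
    · right
      have hmz : (m:ℤ) = (g:ℤ)+(p:ℤ)-1 := by omega
      have hlz : (l:ℤ) = (g:ℤ)-(p:ℤ)-1 := by omega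
      rw [hx, hmz, hlz]
  · intro hcase
    obtain ⟨pm, rfl⟩ : ∃ pm, p = pm+1 := ⟨p-1, by omega⟩
    obtain ⟨t, rfl⟩ : ∃ t, g = 2*pm+3+t := ⟨g-(2*pm+3), by omega⟩
    rcases hcase with rfl | rfl
    · refine ⟨?_, pf_forall _ _ ⟨0, pm, 2*pm+2+t, by push_cast; ring⟩
        ⟨13*pm+4*t+16, 0, pm, by push_cast; ring⟩
        ⟨10*pm+3*t+12, 3*pm+3+t, 0, by push_cast; ring⟩⟩
      have hXW : (((pm+1:ℕ):ℤ)-1)*(((2*pm+3+t:ℕ):ℤ)+2*((pm+1:ℕ):ℤ))^2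
            + (((2*pm+3+t:ℕ):ℤ)-1)*(2*((2*pm+3+t:ℕ):ℤ)+2*((pm+1:ℕ):ℤ))^2
            - ((2*pm+3+t:ℕ):ℤ)^2
          = ((pm:ℕ):ℤ)*(((2*pm+3+t:ℕ):ℤ)+2*((pm+1:ℕ):ℤ))^2
            + ((2*pm+2+t:ℕ):ℤ)*(2*((2*pm+3+t:ℕ):ℤ)+2*((pm+1:ℕ):ℤ))^2
            - ((2*pm+3+t:ℕ):ℤ)^2 := by push_cast; ring
      rw [hXW]
      exact notMem _ _ hp hpg hodd hco ⟨by omega, by omega, by omega⟩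
    · refine ⟨?_, pf_forall _ _ ⟨0, 3*pm+3+t, pm+1+t, by push_cast; ring⟩
        ⟨3*pm+3+t, 0, 2*pm+2+t, by push_cast; ring⟩
        ⟨13*pm+4*t+16, 2*pm+2+t, 0, by push_cast; ring⟩⟩
      have hXW : (((2*pm+3+t:ℕ):ℤ)+((pm+1:ℕ):ℤ)-1)*(((2*pm+3+t:ℕ):ℤ)+2*((pm+1:ℕ):ℤ))^2
            + (((2*pm+3+t:ℕ):ℤ)-((pm+1:ℕ):ℤ)-1)*(2*((2*pm+3+t:ℕ):ℤ)+2*((pm+1:ℕ):ℤ))^2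
            - ((2*pm+3+t:ℕ):ℤ)^2
          = ((3*pm+3+t:ℕ):ℤ)*(((2*pm+3+t:ℕ):ℤ)+2*((pm+1:ℕ):ℤ))^2
            + ((pm+1+t:ℕ):ℤ)*(2*((2*pm+3+t:ℕ):ℤ)+2*((pm+1:ℕ):ℤ))^2
            - ((2*pm+3+t:ℕ):ℤ)^2 := by push_cast; ring
      rw [hXW]
      exact notMem _ _ hp hpg hodd hco ⟨by omega, by omega, by omega⟩

end PFibAux

open PFibAux

theorem pseudoFrobenius_Sn_of_mod_three_eq_one (n : ℕ) (hn : 4 ≤ n) (h3 : n % 3 = 1) :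
    {x : ℤ | IsPF n x} =
      {((fib (n - 1) : ℤ) / 2 - 1) * (fib (n + 1) : ℤ) ^ 2 +
          ((fib n : ℤ) - 1) * (fib (n + 2) : ℤ) ^ 2 - (fib n : ℤ) ^ 2,
        ((fib (n + 2) : ℤ) / 2 - 1) * (fib (n + 1) : ℤ) ^ 2 +
          (((fib (n - 2) : ℤ) + (fib n : ℤ)) / 2 - 1) * (fib (n + 2) : ℤ) ^ 2 -
          (fib n : ℤ) ^ 2} := by
  obtain ⟨j, rfl⟩ := Nat.exists_eq_add_of_le hn
  have hdvd2 : 2 ∣ fib (3+j) := by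
    have h33 : 3 ∣ 3 + j := by omega
    have h := Nat.fib_dvd 3 (3+j) h33
    norm_num [show Nat.fib 3 = 2 from rfl] at h
    exact h
  obtain ⟨p, hp2⟩ := hdvd2
  set g := fib (4+j) with hgdef
  have e34 : 3+j+1 = 4+j := by omega
  have hco : Nat.Coprime g (2*p) := by
    rw [← hp2]
    have h := Nat.fib_coprime_fib_succ (3+j)
    rw [e34] at h
    exact h.symm
  have hp : 1 ≤ p := by
    have h := Nat.fib_mono (show 3 ≤ 3+j by omega)
    rw [show Nat.fib 3 = 2 from rfl] at h
    omega
  have hpg : 2*p < g := by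
    have h := Nat.fib_lt_fib_succ (show 2 ≤ 3+j by omega)
    rw [e34] at h
    omega
  have hodd : g % 2 = 1 := by
    rcases Nat.even_or_odd g with he | ho
    · exfalso
      obtain ⟨u, hu⟩ := he
      have : 2 ∣ Nat.gcd g (2*p) := Nat.dvd_gcd (by omega) ⟨p, rfl⟩
      rw [hco] at this
      omega
    · obtain ⟨u, hu⟩ := ho; omega
  have hB : fib (5+j) = g + 2*p := by
    have h := Nat.fib_add_two (n := 3+j)
    rw [show 3+j+2 = 5+j from by omega, e34] at h
    omega
  have hC : fib (6+j) = 2*g + 2*p := by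
    have h := Nat.fib_add_two (n := 4+j)
    rw [show 4+j+2 = 6+j from by omega, show 4+j+1 = 5+j from by omega] at h
    omega
  have hprev : fib (2+j) + 2*p = g := by
    have h := Nat.fib_add_two (n := 2+j)
    rw [show 2+j+2 = 4+j from by omega, show 2+j+1 = 3+j from by omega] at h
    omega
  have eB : (fib (4+j+1) : ℤ) = (g:ℤ) + 2*(p:ℤ) := by
    rw [show 4+j+1 = 5+j from by omega, hB]; push_cast; ring
  have eC : (fib (4+j+2) : ℤ) = 2*(g:ℤ) + 2*(p:ℤ) := by
    rw [show 4+j+2 = 6+j from by omega, hC]; push_cast; ring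
  have eA : (fib (4+j) : ℤ) = (g:ℤ) := by rw [hgdef]
  have hSZ : SZ (4+j) = M g p := by
    ext x
    simp only [SZ, M, Set.mem_setOf_eq, eA, eB, eC]
  have d1 : (fib (4+j-1) : ℤ)/2 = (p:ℤ) := by
    rw [show 4+j-1 = 3+j from by omega, hp2]; push_cast; omega
  have d2 : (fib (4+j+2) : ℤ)/2 = (g:ℤ) + (p:ℤ) := by rw [eC]; omega
  have d3 : ((fib (4+j-2) : ℤ) + (fib (4+j) : ℤ))/2 = (g:ℤ) - (p:ℤ) := by
    rw [show 4+j-2 = 2+j from by omega]; omega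
  calc {x : ℤ | IsPF (4+j) x}
      = {x : ℤ | x ∉ M g p ∧ ∀ s ∈ M g p, s ≠ 0 → x + s ∈ M g p} := by
        ext x
        simp only [Set.mem_setOf_eq]
        unfold IsPF
        rw [hSZ]
    _ = {((p:ℤ)-1)*((g:ℤ)+2*(p:ℤ))^2 + ((g:ℤ)-1)*(2*(g:ℤ)+2*(p:ℤ))^2 - (g:ℤ)^2,
        ((g:ℤ)+(p:ℤ)-1)*((g:ℤ)+2*(p:ℤ))^2 + ((g:ℤ)-(p:ℤ)-1)*(2*(g:ℤ)+2*(p:ℤ))^2 - (g:ℤ)^2} :=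
        main g p hp hpg hodd hco
    _ = _ := by rw [d1, d2, d3, eA, eB, eC]
end

section
/- For every integer n ≥ 6 with n ≡ 0 (mod 3), the Apéry set Ap(S(n), f_n²) equals the set of all numbers λ·f_{n+1}² + μ·f_{n+2}² where (λ, μ) ranges over the pairs with 0 ≤ λ ≤ f_{n+3}/2 − 1 and 0 ≤ μ ≤ f_n/2 − 1, excluding those pairs with both f_{n+1} ≤ λ ≤ f_{n+3}/2 − 1 and f_{n−2} ≤ μ ≤ f_n/2 − 1. -/
open Nat

/-- The numerical semigroup `S(n) = ⟨fib n ^ 2, fib (n+1) ^ 2, fib (n+2) ^ 2⟩` as a set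
of natural numbers. -/
def S (n : ℕ) : Set ℕ :=
  {x | ∃ a b c : ℕ, x = a * fib n ^ 2 + b * fib (n + 1) ^ 2 + c * fib (n + 2) ^ 2}

/-- The Apéry set of `m` in `S(n)`. -/
def Apery (n m : ℕ) : Set ℕ :=
  {s | s ∈ S n ∧ ¬∃ t ∈ S n, s = t + m}

lemma fib_mod_two_aux (k : ℕ) : fib k % 2 = fib (k % 3) % 2 := by
  induction k using Nat.strong_induction_on with
  | _ k ih =>
    match k with
    | 0 => rfl
    | 1 => rfl
    | 2 => rfl
    | (k+3) =>
      have h := ih k (by omega)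
      have h2 : fib (k+3) = 2 * fib (k+1) + fib k := by
        rw [show k+3 = (k+1)+2 from rfl, fib_add_two, fib_add_two]; ring
      have h3 : (k+3) % 3 = k % 3 := by omega
      rw [h3, h2]; omega

lemma reduce_lemma_aux (u y : ℕ) (hu : 1 ≤ u) (hy : 2*u+1 ≤ y) :
    ∀ N α β γ : ℕ, β + 2*γ ≤ N →
    ∃ l m k : ℕ, l < 5*u+4*y ∧ m < u+y ∧ ¬(4*u+3*y ≤ l ∧ y ≤ m) ∧ α ≤ k ∧
      α*(2*u+2*y)^2 + β*(4*u+3*y)^2 + γ*(6*u+5*y)^2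
        = l*(4*u+3*y)^2 + m*(6*u+5*y)^2 + k*(2*u+2*y)^2 := by
  intro N
  induction N using Nat.strong_induction_on with
  | _ N ih =>
    intro α β γ hN
    by_cases hγ : u+y ≤ γ
    · obtain ⟨δ, rfl⟩ : ∃ δ, γ = δ + (u+y) := ⟨γ - (u+y), by omega⟩
      have hlt : β + (u+y) + 2*δ < N := by omega
      obtain ⟨l, m, k, h1, h2, h3, h4, h5⟩ :=
        ih _ hlt (α+(5*u+4*y)) (β+(u+y)) δ le_rfl
      refine ⟨l, m, k, h1, h2, h3, by omega, ?_⟩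
      zify at h5 ⊢
      linear_combination h5
    · by_cases hβ : 5*u+4*y ≤ β
      · obtain ⟨δ, rfl⟩ : ∃ δ, β = δ + (5*u+4*y) := ⟨β - (5*u+4*y), by omega⟩
        have hlt : δ + 2*(γ+u) < N := by omega
        obtain ⟨l, m, k, h1, h2, h3, h4, h5⟩ :=
          ih _ hlt (α+(11*u+9*y)) δ (γ+u) le_rfl
        refine ⟨l, m, k, h1, h2, h3, by omega, ?_⟩
        zify at h5 ⊢
        linear_combination h5
      · by_cases hc : 4*u+3*y ≤ β ∧ y ≤ γ
        · obtain ⟨δ, rfl⟩ : ∃ δ, β = δ + (4*u+3*y) := ⟨β - (4*u+3*y), by omega⟩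
          obtain ⟨ε, rfl⟩ : ∃ ε, γ = ε + y := ⟨γ - y, by omega⟩
          refine ⟨δ, ε, α + (16*u+13*y), by omega, by omega, by omega, by omega, by ring⟩
        · exact ⟨β, γ, α, by omega, by omega, by omega, le_rfl, by ring⟩

set_option maxHeartbeats 1000000 in
lemma key_lemma_aux (u y : ℕ) (hu : 1 ≤ u) (hy : 2*u+1 ≤ y) (hyo : y % 2 = 1)
    (hcop : Nat.Coprime (2*u+2*y) (4*u+3*y))
    (l m l' m' K : ℕ)
    (hl : l < 5*u+4*y) (hm : m < u+y) (hl' : l' < 5*u+4*y) (hm' : m' < u+y)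
    (hc : ¬(4*u+3*y ≤ l ∧ y ≤ m)) (hc' : ¬(4*u+3*y ≤ l' ∧ y ≤ m'))
    (heq : l * (4*u+3*y)^2 + m * (6*u+5*y)^2
         = l' * (4*u+3*y)^2 + m' * (6*u+5*y)^2 + K * (2*u+2*y)^2) :
    K = 0 := by
  have hU1 : (1:ℤ) ≤ (u:ℤ) := by exact_mod_cast hu
  have hY1 : 2*(u:ℤ)+1 ≤ (y:ℤ) := by exact_mod_cast hy
  set e : ℤ := (l : ℤ) - l' with he
  set d : ℤ := (m : ℤ) - m' with hd
  have heqZ : e * (4*(u:ℤ)+3*y)^2 + d * (6*(u:ℤ)+5*y)^2 = (K : ℤ) * (2*(u:ℤ)+2*y)^2 := by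
    have h0 := heq
    zify at h0
    linear_combination h0
  have hco : IsCoprime ((2*(u:ℤ)+2*y)) ((4*(u:ℤ)+3*y)) := by
    have h1 : IsCoprime ((2*u+2*y : ℕ) : ℤ) ((4*u+3*y : ℕ) : ℤ) :=
      Nat.isCoprime_iff_coprime.mpr hcop
    push_cast at h1
    exact h1
  have hdvd1 : (2*(u:ℤ)+2*y) ∣ (e + d) * (4*(u:ℤ)+3*y)^2 :=
    ⟨(K : ℤ) * (2*(u:ℤ)+2*y) - d * (10*(u:ℤ)+8*y), by linear_combination heqZ⟩
  have hdvd2 : (2*(u:ℤ)+2*y) ∣ (e + d) := (hco.pow_right).dvd_of_dvd_mul_right hdvd1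
  obtain ⟨k, hk⟩ := hdvd2
  have h5 : (2*(u:ℤ)+2*y) * ((4*(u:ℤ)+3*y)*(k*(4*(u:ℤ)+3*y)+2*d))
      = (2*(u:ℤ)+2*y) * ((2*(u:ℤ)+2*y)*((K:ℤ)-d)) := by
    linear_combination heqZ - (4*(u:ℤ)+3*(y:ℤ))^2 * hk
  have h6 : (4*(u:ℤ)+3*y)*(k*(4*(u:ℤ)+3*y)+2*d) = (2*(u:ℤ)+2*y)*((K:ℤ)-d) :=
    mul_left_cancel₀ (by linarith) h5
  have hdvd4 : (2*(u:ℤ)+2*y) ∣ (k*(4*(u:ℤ)+3*y) + 2*d) :=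
    hco.dvd_of_dvd_mul_left ⟨(K:ℤ)-d, h6⟩
  obtain ⟨w, hw⟩ := hdvd4
  have hkeven : Even k := by
    have h2 : (2:ℤ) ∣ k * (4*(u:ℤ)+3*y) := ⟨((u:ℤ)+y)*w - d, by linear_combination hw⟩
    have h2e : Even (k * (4*(u:ℤ)+3*y)) := ⟨((u:ℤ)+y)*w - d, by linear_combination hw⟩
    rcases Int.even_mul.mp h2e with h | h
    · exact h
    · exfalso
      rw [show (4*(u:ℤ)+3*y) = ((4*u+3*y:ℕ):ℤ) by push_cast; ring, Int.even_coe_nat,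
        Nat.even_iff] at h
      omega
  obtain ⟨j, hj⟩ := hkeven
  have hj2 : k = 2 * j := by omega
  have hw2 : j*(4*(u:ℤ)+3*y) + d = ((u:ℤ)+y)*w := by
    have h2 : (2:ℤ) * (j*(4*(u:ℤ)+3*y) + d) = 2 * (((u:ℤ)+y)*w) := by
      linear_combination hw - (4*(u:ℤ)+3*(y:ℤ))*hj2
    linarith
  obtain ⟨v, hv⟩ : ∃ v : ℤ, j*(u:ℤ) + d = ((u:ℤ)+y)*v := ⟨w - 3*j, by linear_combination hw2⟩
  have hed : e + d = 4*((u:ℤ)+y)*j := by linear_combination hk + 2*((u:ℤ)+(y:ℤ))*hj2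
  have hl1 : (l:ℤ) < 5*(u:ℤ)+4*y := by exact_mod_cast hl
  have hl2 : (l':ℤ) < 5*(u:ℤ)+4*y := by exact_mod_cast hl'
  have hm1 : (m:ℤ) < (u:ℤ)+y := by exact_mod_cast hm
  have hm2 : (m':ℤ) < (u:ℤ)+y := by exact_mod_cast hm'
  have hln : (0:ℤ) ≤ l := Int.natCast_nonneg l
  have hln' : (0:ℤ) ≤ l' := Int.natCast_nonneg l'
  have hmn : (0:ℤ) ≤ m := Int.natCast_nonneg m
  have hmn' : (0:ℤ) ≤ m' := Int.natCast_nonneg m'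
  have hbe1 : -(5*(u:ℤ)+4*y-1) ≤ e := by simp only [he]; linarith
  have hbe2 : e ≤ 5*(u:ℤ)+4*y-1 := by simp only [he]; linarith
  have hbd1 : -((u:ℤ)+y-1) ≤ d := by simp only [hd]; linarith
  have hbd2 : d ≤ (u:ℤ)+y-1 := by simp only [hd]; linarith
  have hjb : j = -1 ∨ j = 0 ∨ j = 1 := by
    rcases lt_trichotomy j 0 with h | h | h
    · left
      by_contra hne
      have hj2' : j ≤ -2 := by omega
      have h3 : 4*((u:ℤ)+y)*j ≤ 4*((u:ℤ)+y)*(-2) := by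
        apply mul_le_mul_of_nonneg_left hj2'; linarith
      linarith
    · right; left; exact h
    · right; right
      by_contra hne
      have hj2' : 2 ≤ j := by omega
      have h3 : 4*((u:ℤ)+y)*2 ≤ 4*((u:ℤ)+y)*j := by
        apply mul_le_mul_of_nonneg_left hj2'; linarith
      linarith
  rcases hjb with hj0 | hj0 | hj0
  · subst hj0
    have hv' : d - (u:ℤ) = ((u:ℤ)+y)*v := by linear_combination hv
    have hvb : v = 0 ∨ v = -1 := by
      rcases lt_trichotomy v 0 with h | h | h
      · right
        by_contra hne
        have hvle : v ≤ -2 := by omega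
        have h2 : ((u:ℤ)+y)*v ≤ ((u:ℤ)+y)*(-2) := by
          apply mul_le_mul_of_nonneg_left hvle; linarith
        linarith
      · left; exact h
      · exfalso
        have hvge : 1 ≤ v := h
        have h2 : ((u:ℤ)+y)*1 ≤ ((u:ℤ)+y)*v := by
          apply mul_le_mul_of_nonneg_left hvge; linarith
        linarith
    rcases hvb with hv0 | hv0
    · exfalso
      rw [hv0, mul_zero] at hv'
      have hdu : d = (u:ℤ) := by linarith [hv']
      have heu : e = -(5*(u:ℤ)+4*y) := by linarith [hed, hdu]
      linarith
    · exfalso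
      rw [hv0, mul_neg_one] at hv'
      have hdu : d = -(y:ℤ) := by linarith [hv']
      have heu : e = -(4*(u:ℤ)+3*y) := by linarith [hed, hdu]
      apply hc'
      constructor
      · have h7 : ((4*u+3*y:ℕ):ℤ) ≤ (l':ℤ) := by
          simp only [he] at heu; push_cast; linarith
        exact_mod_cast h7
      · have h7 : ((y:ℕ):ℤ) ≤ (m':ℤ) := by
          simp only [hd] at hdu; push_cast; linarith
        exact_mod_cast h7
  · subst hj0
    have hd0 : d = 0 := by
      have hv' : d = ((u:ℤ)+y)*v := by linear_combination hv
      rcases lt_trichotomy v 0 with h | h | h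
      · exfalso
        have hvle : v ≤ -1 := by omega
        have h2 : ((u:ℤ)+y)*v ≤ ((u:ℤ)+y)*(-1) := by
          apply mul_le_mul_of_nonneg_left hvle; linarith
        linarith
      · rw [hv', h, mul_zero]
      · exfalso
        have hvge : 1 ≤ v := h
        have h2 : ((u:ℤ)+y)*1 ≤ ((u:ℤ)+y)*v := by
          apply mul_le_mul_of_nonneg_left hvge; linarith
        linarith
    have he0 : e = 0 := by linarith [hed]
    have hz : (K:ℤ) * (2*(u:ℤ)+2*y)^2 = 0 := by
      linear_combination -heqZ + (4*(u:ℤ)+3*y)^2 * he0 + (6*(u:ℤ)+5*y)^2 * hd0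
    have hsq : (0:ℤ) < (2*(u:ℤ)+2*y)^2 := by positivity
    have h2 : (K:ℤ) = 0 := by
      rcases mul_eq_zero.mp hz with h | h
      · exact h
      · exfalso; linarith
    exact_mod_cast h2
  · subst hj0
    have hv' : (u:ℤ) + d = ((u:ℤ)+y)*v := by linear_combination hv
    have hvb : v = 0 ∨ v = 1 := by
      rcases lt_trichotomy v 0 with h | h | h
      · exfalso
        have hvle : v ≤ -1 := by omega
        have h2 : ((u:ℤ)+y)*v ≤ ((u:ℤ)+y)*(-1) := by
          apply mul_le_mul_of_nonneg_left hvle; linarith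
        linarith
      · left; exact h
      · right
        by_contra hne
        have hvge : 2 ≤ v := by omega
        have h2 : ((u:ℤ)+y)*2 ≤ ((u:ℤ)+y)*v := by
          apply mul_le_mul_of_nonneg_left hvge; linarith
        linarith
    rcases hvb with hv0 | hv0
    · exfalso
      rw [hv0, mul_zero] at hv'
      have hdu : d = -(u:ℤ) := by linarith [hv']
      have heu : e = 5*(u:ℤ)+4*y := by linarith [hed]
      linarith
    · exfalso
      rw [hv0, mul_one] at hv'
      have hdu : d = (y:ℤ) := by linarith [hv']
      have heu : e = 4*(u:ℤ)+3*y := by linarith [hed]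
      apply hc
      constructor
      · have h7 : ((4*u+3*y:ℕ):ℤ) ≤ (l:ℤ) := by
          simp only [he] at heu; push_cast; linarith
        exact_mod_cast h7
      · have h7 : ((y:ℕ):ℤ) ≤ (m:ℤ) := by
          simp only [hd] at hdu; push_cast; linarith
        exact_mod_cast h7

set_option maxHeartbeats 1000000 in
theorem apery_Sn_of_three_dvd (n : ℕ) (hn : 6 ≤ n) (h3 : n % 3 = 0) :
    Apery n (fib n ^ 2) =
      {x | ∃ l m : ℕ, l < fib (n + 3) / 2 ∧ m < fib n / 2 ∧
        ¬(fib (n + 1) ≤ l ∧ fib (n - 2) ≤ m) ∧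
        x = l * fib (n + 1) ^ 2 + m * fib (n + 2) ^ 2} := by
  obtain ⟨m6, rfl⟩ : ∃ m6, n = m6 + 6 := ⟨n - 6, by omega⟩
  have h3m : 3 ∣ m6 := by omega
  have hxe : fib (m6+3) % 2 = 0 := by
    have := fib_mod_two_aux (m6+3)
    rw [show (m6+3) % 3 = 0 from by omega] at this
    simpa using this
  obtain ⟨u, hx⟩ : ∃ u, fib (m6+3) = 2*u := ⟨fib (m6+3) / 2, by omega⟩
  set y := fib (m6+4) with hyd
  have hyo : y % 2 = 1 := by
    have := fib_mod_two_aux (m6+4)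
    rw [show (m6+4) % 3 = 1 from by omega] at this
    simpa [hyd] using this
  have hfp1 : 1 ≤ fib (m6+1) := Nat.fib_pos.mpr (by omega)
  have hfp2 : 1 ≤ fib (m6+2) := Nat.fib_pos.mpr (by omega)
  have e3 : fib (m6+3) = fib (m6+1) + fib (m6+2) := by
    rw [show m6+3 = (m6+1)+2 from rfl, fib_add_two]
  have e4 : y = fib (m6+2) + fib (m6+3) := by
    rw [hyd, show m6+4 = (m6+2)+2 from rfl, fib_add_two]
  have hu : 1 ≤ u := by omega
  have hy : 2*u+1 ≤ y := by omega
  have e5 : fib (m6+5) = 2*u + y := by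
    rw [show m6+5 = (m6+3)+2 from rfl, fib_add_two, hx]
  have hfn : fib (m6+6) = 2*u+2*y := by
    rw [show m6+6 = (m6+4)+2 from rfl, fib_add_two, e5, ← hyd]; ring
  have hfn1 : fib (m6+7) = 4*u+3*y := by
    rw [show m6+7 = (m6+5)+2 from rfl, fib_add_two, e5, hfn]; ring
  have hfn2 : fib (m6+8) = 6*u+5*y := by
    rw [show m6+8 = (m6+6)+2 from rfl, fib_add_two, hfn, hfn1]; ring
  have hfn3 : fib (m6+9) = 10*u+8*y := by
    rw [show m6+9 = (m6+7)+2 from rfl, fib_add_two, hfn1, hfn2]; ring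
  have hcop : Nat.Coprime (2*u+2*y) (4*u+3*y) := by
    have h := Nat.fib_coprime_fib_succ (m6+6)
    rwa [hfn, show m6+6+1 = m6+7 from rfl, hfn1] at h
  ext s
  simp only [Apery, S, Set.mem_setOf_eq, show m6+6+1 = m6+7 from rfl,
    show m6+6+2 = m6+8 from rfl,
    show m6+6+3 = m6+9 from rfl, show m6+6-2 = m6+4 from rfl, hfn, hfn1, hfn2, hfn3, ← hyd,
    show (10*u+8*y)/2 = 5*u+4*y from by omega, show (2*u+2*y)/2 = u+y from by omega]
  constructor
  · rintro ⟨⟨a1, b1, c1, rfl⟩, hno⟩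
    by_cases ha : a1 = 0
    · subst ha
      obtain ⟨l, mm, k, h1, h2, h3', h4, h5⟩ :=
        reduce_lemma_aux u y hu hy (b1+2*c1) 0 b1 c1 le_rfl
      rcases Nat.eq_zero_or_pos k with hk | hk
      · subst hk
        exact ⟨l, mm, h1, h2, h3', by linarith [h5]⟩
      · exfalso
        obtain ⟨k', rfl⟩ : ∃ k', k = k' + 1 := ⟨k - 1, by omega⟩
        apply hno
        refine ⟨l*(4*u+3*y)^2 + mm*(6*u+5*y)^2 + k'*(2*u+2*y)^2, ⟨k', l, mm, by ring⟩, ?_⟩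
        have hexp : (k'+1)*(2*u+2*y)^2 = k'*(2*u+2*y)^2 + (2*u+2*y)^2 := by ring
        linarith [h5, hexp]
    · exfalso
      obtain ⟨a1', rfl⟩ : ∃ a1', a1 = a1' + 1 := ⟨a1 - 1, by omega⟩
      apply hno
      refine ⟨a1'*(2*u+2*y)^2 + b1*(4*u+3*y)^2 + c1*(6*u+5*y)^2, ⟨a1', b1, c1, rfl⟩, by ring⟩
  · rintro ⟨l, mm, h1, h2, h3', rfl⟩
    refine ⟨⟨0, l, mm, by ring⟩, ?_⟩
    rintro ⟨t, ⟨a2, b2, c2, rfl⟩, hst⟩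
    obtain ⟨l', m', k', g1, g2, g3, g4, g5⟩ :=
      reduce_lemma_aux u y hu hy (b2+2*c2) (a2+1) b2 c2 le_rfl
    have hexp : (a2+1)*(2*u+2*y)^2 = a2*(2*u+2*y)^2 + (2*u+2*y)^2 := by ring
    have hcomb : l*(4*u+3*y)^2 + mm*(6*u+5*y)^2
        = l'*(4*u+3*y)^2 + m'*(6*u+5*y)^2 + k'*(2*u+2*y)^2 := by
      linarith [g5, hst, hexp]
    have hk0 : k' = 0 :=
      key_lemma_aux u y hu hy hyo hcop l mm l' m' k' h1 h2 g1 g2 h3' g3 hcomb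
    omega
end

section
/- For every integer n ≥ 5 with n ≡ 2 (mod 3), the Apéry set Ap(S(n), f_n²) equals the set of all numbers λ·f_{n+1}² + μ·f_{n+2}² where (λ, μ) ranges over the pairs with 0 ≤ λ ≤ f_{n+2} − 1 and 0 ≤ μ ≤ f_{n+1}/2 − 1, excluding those pairs with both f_{n+1}/2 ≤ λ ≤ f_{n+2} − 1 and f_{n−2}/2 ≤ μ ≤ f_{n+1}/2 − 1. -/
open Nat

lemma fib_even_of_mod3 {k : ℕ} (h : k % 3 = 0) : Even (Nat.fib k) := by
  obtain ⟨j, rfl⟩ : ∃ j, k = 3 * j := ⟨k / 3, by omega⟩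
  clear h
  induction j with
  | zero => simp
  | succ i ih =>
    have h1 : Nat.fib (3 * (i + 1)) = Nat.fib (3 * i) + 2 * Nat.fib (3 * i + 1) := by
      rw [show 3 * (i + 1) = (3 * i + 1) + 2 from by ring, Nat.fib_add_two,
        show 3 * i + 1 + 1 = 3 * i + 2 from rfl, Nat.fib_add_two]
      ring
    obtain ⟨w, hw⟩ := ih
    exact ⟨w + Nat.fib (3 * i + 1), by omega⟩

lemma no_sol (N p q B l μ s t X u v : ℤ) (hN : 1 ≤ N) (hp : 1 ≤ p) (hq : 1 ≤ q)
    (hB : 1 ≤ B) (hqB : q + B = p)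
    (hu : u = s * N + t * p) (hv : v = t * q - s * B) (hX : X = s * N + t * (N + p))
    (hX1 : 1 ≤ X) (hul : u ≤ l) (hlN : l ≤ N - 1) (hvμ : v ≤ μ) (hμp : μ ≤ p - 1)
    (hrect : ¬(p ≤ l ∧ q ≤ μ)) : False := by
  have ht0 : 0 ≤ t := by
    by_contra h
    have ht : t ≤ -1 := by omega
    nlinarith [mul_le_mul_of_nonneg_right (show t ≤ -1 from ht) (show (0:ℤ) ≤ N from by linarith)]
  rcases (by omega : t = 0 ∨ t = 1 ∨ 2 ≤ t) with h | h | h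
  · subst h
    have hs1 : 1 ≤ s := by nlinarith
    nlinarith
  · subst h
    have hs0 : s ≤ 0 := by nlinarith
    rcases (by omega : s = 0 ∨ s ≤ -1) with h | h
    · subst h
      simp at hu hv
      exact hrect ⟨by linarith, by linarith⟩
    · nlinarith [mul_le_mul_of_nonneg_right (show s ≤ -1 from h) (show (0:ℤ) ≤ B from by linarith)]
  · have hs0 : s ≤ 0 := by nlinarith
    have hvq : q ≤ v := by nlinarith
    have hlp : l ≤ p - 1 := by
      by_contra hc
      exact hrect ⟨by omega, by linarith⟩
    have hs1 : s ≤ -1 := by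
      rcases (by omega : s = 0 ∨ s ≤ -1) with h' | h'
      · subst h'; nlinarith
      · exact h'
    nlinarith [mul_le_mul_of_nonneg_right (show s ≤ -1 from hs1) (show (0:ℤ) ≤ B from by linarith),
      mul_le_mul_of_nonneg_right (show 2 ≤ t from h) (show (0:ℤ) ≤ q from by linarith)]

theorem apery_Sn_of_mod_three_eq_two (n : ℕ) (hn : 5 ≤ n) (h3 : n % 3 = 2) :
    Apery n (fib n ^ 2) =
      {x | ∃ l m : ℕ, l < fib (n + 2) ∧ m < fib (n + 1) / 2 ∧
        ¬(fib (n + 1) / 2 ≤ l ∧ fib (n - 2) / 2 ≤ m) ∧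
        x = l * fib (n + 1) ^ 2 + m * fib (n + 2) ^ 2} := by
  obtain ⟨m, rfl⟩ : ∃ m, n = m + 2 := ⟨n - 2, by omega⟩
  have hm : 3 ≤ m := by omega
  have hm3 : m % 3 = 0 := by omega
  simp only [show m + 2 + 1 = m + 3 from rfl, show m + 2 + 2 = m + 4 from rfl,
    show m + 2 - 2 = m from rfl]
  -- recurrences
  have e2 : fib (m + 2) = fib m + fib (m + 1) := fib_add_two
  have e3 : fib (m + 3) = fib (m + 1) + fib (m + 2) := fib_add_two
  have e4 : fib (m + 4) = fib (m + 2) + fib (m + 3) := fib_add_two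
  -- halves
  have hev3 : Even (fib (m + 3)) := fib_even_of_mod3 (by omega)
  have hevm : Even (fib m) := fib_even_of_mod3 hm3
  set p := fib (m + 3) / 2 with hpdef
  set q := fib m / 2 with hqdef
  have hp2 : fib (m + 3) = 2 * p := (Nat.mul_div_cancel' hev3.two_dvd).symm
  have hq2 : fib m = 2 * q := (Nat.mul_div_cancel' hevm.two_dvd).symm
  -- positivity
  have hfib1 : 1 ≤ fib (m + 1) := Nat.fib_pos.mpr (by omega)
  have hfibm : 2 ≤ fib m := by
    calc 2 = fib 3 := rfl
    _ ≤ fib m := fib_mono hm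
  have hfib2 : 1 ≤ fib (m + 2) := Nat.fib_pos.mpr (by omega)
  have hfib3 : 2 ≤ fib (m + 3) := le_trans hfibm (fib_mono (by omega))
  have hN1 : 1 ≤ fib (m + 4) := Nat.fib_pos.mpr (by omega)
  have hq1 : 1 ≤ q := by omega
  have hp1 : 1 ≤ p := by omega
  -- ℤ identities
  have e2z : (fib (m + 2) : ℤ) = fib m + fib (m + 1) := by exact_mod_cast e2
  have e3z : (fib (m + 3) : ℤ) = fib (m + 1) + fib (m + 2) := by exact_mod_cast e3
  have e4z : (fib (m + 4) : ℤ) = fib (m + 2) + fib (m + 3) := by exact_mod_cast e4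
  have hP2 : 2 * (p : ℤ) = (fib m : ℤ) + 2 * (fib (m + 1) : ℤ) := by
    have := e2z; have := e3z
    have hp2z : (fib (m + 3) : ℤ) = 2 * p := by exact_mod_cast hp2
    linarith
  have hQ2 : 2 * (q : ℤ) = (fib m : ℤ) := by
    have hq2z : (fib m : ℤ) = 2 * q := by exact_mod_cast hq2
    linarith
  have I1z : (fib (m + 4) : ℤ) * (fib (m + 3) : ℤ) ^ 2
      = (fib (m + 4) : ℤ) * (fib (m + 2) : ℤ) ^ 2 + (fib (m + 1) : ℤ) * (fib (m + 4) : ℤ) ^ 2 := by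
    rw [e4z, e3z, e2z]; ring
  have I2z : (p : ℤ) * (fib (m + 4) : ℤ) ^ 2
      = (p : ℤ) * (fib (m + 2) : ℤ) ^ 2 + ((p : ℤ) + (fib (m + 2) : ℤ)) * (fib (m + 3) : ℤ) ^ 2 := by
    rw [e4z, e3z, e2z]
    linear_combination (((fib m : ℤ) + fib (m + 1)) * ((fib m : ℤ) + 2 * fib (m + 1))) * hP2
  have I3z : (p : ℤ) * (fib (m + 3) : ℤ) ^ 2 + (q : ℤ) * (fib (m + 4) : ℤ) ^ 2
      = ((fib (m + 4) : ℤ) + (p : ℤ)) * (fib (m + 2) : ℤ) ^ 2 := by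
    have D : (2 : ℤ) * ((p : ℤ) * (fib (m + 3) : ℤ) ^ 2 + (q : ℤ) * (fib (m + 4) : ℤ) ^ 2)
        = 2 * (((fib (m + 4) : ℤ) + (p : ℤ)) * (fib (m + 2) : ℤ) ^ 2) := by
      rw [e4z, e3z, e2z]
      linear_combination ((fib (m + 1) : ℤ) * (2 * (fib m : ℤ) + 3 * (fib (m + 1) : ℤ))) * hP2
        + ((2 * (fib m : ℤ) + 3 * (fib (m + 1) : ℤ)) ^ 2) * hQ2
    linarith
  have I5z : (fib (m + 4) : ℤ) * (q : ℤ) + (p : ℤ) * (fib (m + 1) : ℤ)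
      = (fib (m + 2) : ℤ) ^ 2 := by
    have D : (2 : ℤ) * ((fib (m + 4) : ℤ) * (q : ℤ) + (p : ℤ) * (fib (m + 1) : ℤ))
        = 2 * ((fib (m + 2) : ℤ) ^ 2) := by
      rw [e4z, e3z, e2z]
      linear_combination (2 * (fib m : ℤ) + 3 * (fib (m + 1) : ℤ)) * hQ2
        + (fib (m + 1) : ℤ) * hP2
    linarith
  have I4z : (q : ℤ) + (fib (m + 1) : ℤ) = (p : ℤ) := by linarith
  ext x
  simp only [Apery, S, Set.mem_setOf_eq, show m + 2 + 1 = m + 3 from rfl,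
    show m + 2 + 2 = m + 4 from rfl]
  constructor
  · rintro ⟨⟨α, y, z, rfl⟩, hnot⟩
    rcases α with _ | α'
    swap
    · exact absurd ⟨α' * fib (m + 2) ^ 2 + y * fib (m + 3) ^ 2 + z * fib (m + 4) ^ 2,
        ⟨α', y, z, rfl⟩, by ring⟩ hnot
    have hy : y < fib (m + 4) := by
      by_contra hc
      push_neg at hc
      obtain ⟨y', rfl⟩ : ∃ y', y = y' + fib (m + 4) := ⟨y - fib (m + 4), by omega⟩
      exact hnot ⟨(fib (m + 4) - 1) * fib (m + 2) ^ 2 + y' * fib (m + 3) ^ 2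
          + (z + fib (m + 1)) * fib (m + 4) ^ 2,
        ⟨fib (m + 4) - 1, y', z + fib (m + 1), rfl⟩,
        by zify [hN1]; linear_combination I1z⟩
    have hz : z < p := by
      by_contra hc
      push_neg at hc
      obtain ⟨z', rfl⟩ : ∃ z', z = z' + p := ⟨z - p, by omega⟩
      exact hnot ⟨(p - 1) * fib (m + 2) ^ 2 + (y + (p + fib (m + 2))) * fib (m + 3) ^ 2
          + z' * fib (m + 4) ^ 2,
        ⟨p - 1, y + (p + fib (m + 2)), z', rfl⟩,
        by zify [hp1]; linear_combination I2z⟩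
    have hr : ¬(p ≤ y ∧ q ≤ z) := by
      rintro ⟨h1, h2⟩
      obtain ⟨y', rfl⟩ : ∃ y', y = y' + p := ⟨y - p, by omega⟩
      obtain ⟨z', rfl⟩ : ∃ z', z = z' + q := ⟨z - q, by omega⟩
      exact hnot ⟨(fib (m + 4) + p - 1) * fib (m + 2) ^ 2 + y' * fib (m + 3) ^ 2
          + z' * fib (m + 4) ^ 2,
        ⟨fib (m + 4) + p - 1, y', z', rfl⟩,
        by zify [show 1 ≤ fib (m + 4) + p by omega]; linear_combination I3z⟩
    exact ⟨y, z, hy, hz, hr, by ring⟩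
  · rintro ⟨l, μ, hl, hμ, hrect, rfl⟩
    refine ⟨⟨0, l, μ, by ring⟩, ?_⟩
    rintro ⟨t, ⟨x', y, z, rfl⟩, heq⟩
    have hE : ((l : ℤ) - y) * (fib (m + 3) : ℤ) ^ 2 + ((μ : ℤ) - z) * (fib (m + 4) : ℤ) ^ 2
        = ((x' : ℤ) + 1) * (fib (m + 2) : ℤ) ^ 2 := by
      have h := congrArg (Nat.cast : ℕ → ℤ) heq
      push_cast at h
      linear_combination h
    set U : ℤ := (l : ℤ) - y with hUdef
    set V : ℤ := (μ : ℤ) - z with hVdef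
    have copAB : IsCoprime ((fib (m + 2) : ℤ) ^ 2) ((fib (m + 3) : ℤ) ^ 2) :=
      (Nat.fib_coprime_fib_succ (m + 2)).isCoprime.pow
    have copAC : IsCoprime ((fib (m + 2) : ℤ) ^ 2) ((fib (m + 4) : ℤ) ^ 2) := by
      have h1 : Nat.Coprime (fib (m + 2)) (fib (m + 4)) := by
        rw [e4]
        exact Nat.coprime_self_add_right.mpr (Nat.fib_coprime_fib_succ (m + 2))
      exact h1.isCoprime.pow
    have key1 : (fib (m + 3) : ℤ) ^ 2 * (U * q - V * p)
        = (fib (m + 2) : ℤ) ^ 2 * ((q : ℤ) * ((x' : ℤ) + 1) - V * ((fib (m + 4) : ℤ) + p)) := by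
      linear_combination (q : ℤ) * hE - V * I3z
    have key2 : (fib (m + 4) : ℤ) ^ 2 * (U * (fib (m + 1) : ℤ) + V * (fib (m + 4) : ℤ))
        = (fib (m + 2) : ℤ) ^ 2 * ((fib (m + 4) : ℤ) * (((x' : ℤ) + 1) - U)) := by
      linear_combination (-U) * I1z + (fib (m + 4) : ℤ) * hE
    obtain ⟨s, hs⟩ : ((fib (m + 2) : ℤ) ^ 2) ∣ (U * q - V * p) :=
      copAB.dvd_of_dvd_mul_left ⟨_, key1⟩
    obtain ⟨t2, ht2⟩ : ((fib (m + 2) : ℤ) ^ 2) ∣ (U * (fib (m + 1) : ℤ) + V * (fib (m + 4) : ℤ)) :=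
      copAC.dvd_of_dvd_mul_left ⟨_, key2⟩
    have ha0 : ((fib (m + 2) : ℤ) ^ 2) ≠ 0 := by
      have : (0 : ℤ) < (fib (m + 2) : ℤ) := by exact_mod_cast hfib2
      positivity
    have hU : U = s * (fib (m + 4) : ℤ) + t2 * p :=
      mul_left_cancel₀ ha0 (by
        linear_combination (fib (m + 4) : ℤ) * hs + (p : ℤ) * ht2 - U * I5z)
    have hV : V = t2 * q - s * (fib (m + 1) : ℤ) :=
      mul_left_cancel₀ ha0 (by
        linear_combination (q : ℤ) * ht2 - (fib (m + 1) : ℤ) * hs - V * I5z)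
    have hX : ((x' : ℤ) + 1) = s * (fib (m + 4) : ℤ) + t2 * ((fib (m + 4) : ℤ) + p) :=
      mul_left_cancel₀ ha0 (by
        linear_combination (-1 : ℤ) * hE + (fib (m + 3) : ℤ) ^ 2 * hU
          + (fib (m + 4) : ℤ) ^ 2 * hV + s * I1z + t2 * I3z)
    refine no_sol (fib (m + 4) : ℤ) p q (fib (m + 1)) l μ s t2 ((x' : ℤ) + 1) U V
      (by exact_mod_cast hN1) (by exact_mod_cast hp1) (by exact_mod_cast hq1)
      (by exact_mod_cast hfib1) I4z hU hV hX (by linarith)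
      (sub_le_self _ (by positivity)) (by
        have : (l : ℤ) < (fib (m + 4) : ℤ) := by exact_mod_cast hl
        linarith)
      (sub_le_self _ (by positivity)) (by
        have : (μ : ℤ) < (p : ℤ) := by exact_mod_cast hμ
        linarith)
      ?_
    rintro ⟨h1, h2⟩
    exact hrect ⟨by exact_mod_cast h1, by exact_mod_cast h2⟩
end

section
/- For every integer n ≥ 4 with n ≡ 1 (mod 3), the Apéry set Ap(S(n), f_n²) equals the set of all numbers λ·f_{n+1}² + μ·f_{n+2}² where (λ, μ) ranges over the pairs with 0 ≤ λ ≤ f_{n+2}/2 − 1 and 0 ≤ μ ≤ f_n − 1, excluding those pairs with both f_{n−1}/2 ≤ λ ≤ f_{n+2}/2 − 1 and (f_{n−2} + f_n)/2 ≤ μ ≤ f_n − 1. -/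
open Nat

private lemma fib_mod_two' (k : ℕ) : fib k % 2 = if k % 3 = 0 then 0 else 1 := by
  induction k using Nat.strong_induction_on with
  | _ k ih =>
    match k with
    | 0 => simp
    | 1 => simp [fib]
    | (k+2) =>
      rw [fib_add_two]
      have h1 := ih k (by omega)
      have h2 := ih (k+1) (by omega)
      split_ifs at h1 h2 ⊢ <;> omega


private lemma reduce (p Q : ℕ) (hp : 1 ≤ p) (hQ : 1 ≤ Q) :
    ∀ N α l m : ℕ, l * (p+4*Q)^2 + m * (2*p+6*Q)^2 ≤ N →
    ∃ α' l' m' : ℕ, α ≤ α' ∧ l' < p + 3*Q ∧ m' < p + 2*Q ∧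
      α' * (p+2*Q)^2 + l' * (p+4*Q)^2 + m' * (2*p+6*Q)^2
        = α * (p+2*Q)^2 + l * (p+4*Q)^2 + m * (2*p+6*Q)^2 := by
  intro N
  induction N using Nat.strong_induction_on with
  | _ N ih =>
    intro α l m hle
    by_cases hm : p + 2*Q ≤ m
    · obtain ⟨m₂, rfl⟩ : ∃ m₂, m = m₂ + (p + 2*Q) := ⟨m - (p+2*Q), by omega⟩
      have hBC : (p+4*Q)^2 < (2*p+6*Q)^2 := by
        apply Nat.pow_lt_pow_left (by omega) (by omega)
      have hdec : (l + (p+2*Q)) * (p+4*Q)^2 + m₂ * (2*p+6*Q)^2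
          < l * (p+4*Q)^2 + (m₂ + (p+2*Q)) * (2*p+6*Q)^2 := by
        nlinarith [hBC]
      obtain ⟨α', l', m', h1, h2, h3, h4⟩ :=
        ih _ (lt_of_lt_of_le hdec hle) (α + (3*p+10*Q)) (l + (p+2*Q)) m₂ le_rfl
      exact ⟨α', l', m', by omega, h2, h3, h4.trans (by ring)⟩
    · by_cases hl : p + 3*Q ≤ l
      · obtain ⟨l₂, rfl⟩ : ∃ l₂, l = l₂ + (p + 3*Q) := ⟨l - (p+3*Q), by omega⟩
        have hI2 : (p+3*Q)*(p+4*Q)^2 = (p+3*Q)*(p+2*Q)^2 + Q*(2*p+6*Q)^2 := by ring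
        have hApos : 0 < (p+3*Q)*(p+2*Q)^2 := by positivity
        have hdec : l₂ * (p+4*Q)^2 + (m + Q) * (2*p+6*Q)^2
            < (l₂ + (p+3*Q)) * (p+4*Q)^2 + m * (2*p+6*Q)^2 := by
          nlinarith [hI2, hApos]
        obtain ⟨α', l', m', h1, h2, h3, h4⟩ :=
          ih _ (lt_of_lt_of_le hdec hle) (α + (p+3*Q)) l₂ (m + Q) le_rfl
        exact ⟨α', l', m', by omega, h2, h3, h4.trans (by ring)⟩
      · exact ⟨α, l, m, le_rfl, by omega, by omega, rfl⟩


private lemma core (p Q d e g : ℤ) (hp : 1 ≤ p) (hQ : 1 ≤ Q)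
    (hco2Q : IsCoprime (p + 2*Q) (2*Q)) (hco2 : IsCoprime (p + 2*Q) (2:ℤ))
    (hd : |d| ≤ p + 3*Q - 1) (he : |e| ≤ p + 2*Q - 1)
    (hE : (d+e)*(2*Q)*(2*p+6*Q) + e*(p+2*Q)*(3*p+10*Q) = g*(p+2*Q)^2) :
    (d = Q ∧ e = p + Q) ∨ (d = -Q ∧ e = -(p+Q)) ∨ (d = 0 ∧ e = 0) := by
  have hfpos : (0:ℤ) < p + 2*Q := by omega
  have h1 : (p + 2*Q) ∣ (d+e) * ((2*Q) * (2*Q)) :=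
    ⟨g*(p+2*Q) - e*(3*p+10*Q) - (d+e)*(2*Q)*2, by linear_combination hE⟩
  have h2 : (p + 2*Q) ∣ d + e :=
    (hco2Q.mul_right hco2Q).dvd_of_dvd_mul_right h1
  obtain ⟨k, hk⟩ := h2
  have h3 : k*(2*Q)*(2*p+6*Q) + e*(3*p+10*Q) = g*(p+2*Q) := by
    apply mul_left_cancel₀ (show (p+2*Q) ≠ 0 by omega)
    rw [hk] at hE
    linear_combination hE
  have h4 : (p + 2*Q) ∣ (k*Q + e) * ((2*Q) * 2) :=
    ⟨g - 4*k*Q - 3*e, by linear_combination h3⟩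
  have h5 : (p + 2*Q) ∣ k*Q + e :=
    (hco2Q.mul_right hco2).dvd_of_dvd_mul_right h4
  obtain ⟨j, hj⟩ := h5
  rw [abs_le] at hd he
  -- bound k
  have hk1 : k < 3 := by
    have hlt : (p+2*Q) * k < (p+2*Q) * 3 := by
      rw [← hk]; omega
    exact lt_of_mul_lt_mul_left hlt (by omega)
  have hk2 : -3 < k := by
    have hlt : (p+2*Q) * (-3) < (p+2*Q) * k := by
      rw [← hk]; omega
    exact lt_of_mul_lt_mul_left hlt (by omega)
  -- bound j
  have hkQ1 : k*Q ≤ 2*Q := by nlinarith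
  have hkQ2 : -(2*Q) ≤ k*Q := by nlinarith
  have hj1 : j < 2 := by
    have hlt : (p+2*Q) * j < (p+2*Q) * 2 := by
      rw [← hj]; omega
    exact lt_of_mul_lt_mul_left hlt (by omega)
  have hj2 : -2 < j := by
    have hlt : (p+2*Q) * (-2) < (p+2*Q) * j := by
      rw [← hj]; omega
    exact lt_of_mul_lt_mul_left hlt (by omega)
  interval_cases k <;> interval_cases j <;> omega

private lemma core_nat (p Q l m l' m' K : ℕ) (hp : 1 ≤ p) (hQ : 1 ≤ Q)
    (hco2Q : IsCoprime ((p:ℤ) + 2*Q) (2*(Q:ℤ))) (hco2 : IsCoprime ((p:ℤ) + 2*Q) (2:ℤ))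
    (hl : l < p + 3*Q) (hm : m < p + 2*Q) (hl' : l' < p + 3*Q) (hm' : m' < p + 2*Q)
    (hK : 1 ≤ K)
    (hEq : l * (p+4*Q)^2 + m * (2*p+6*Q)^2
        = K * (p+2*Q)^2 + l' * (p+4*Q)^2 + m' * (2*p+6*Q)^2) :
    Q ≤ l ∧ p + Q ≤ m := by
  have hcast : (l:ℤ) * ((p:ℤ)+4*Q)^2 + (m:ℤ) * (2*(p:ℤ)+6*Q)^2
      = (K:ℤ) * ((p:ℤ)+2*Q)^2 + (l':ℤ) * ((p:ℤ)+4*Q)^2 + (m':ℤ) * (2*(p:ℤ)+6*Q)^2 := by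
    exact_mod_cast hEq
  have hcore := core (p:ℤ) (Q:ℤ) ((l:ℤ) - l') ((m:ℤ) - m')
      ((K:ℤ) - ((l:ℤ)-l') - ((m:ℤ)-m'))
      (by exact_mod_cast hp) (by exact_mod_cast hQ) hco2Q hco2
      (by rw [abs_le]; omega)
      (by rw [abs_le]; omega)
      (by linear_combination hcast)
  have hA : 0 < K * (p+2*Q)^2 := Nat.mul_pos (by omega) (by positivity)
  rcases hcore with ⟨h1, h2⟩ | ⟨h1, h2⟩ | ⟨h1, h2⟩
  · omega
  · exfalso
    have hl2 : l' = l + Q := by omega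
    have hm2 : m' = m + (p + Q) := by omega
    rw [hl2, hm2] at hEq
    nlinarith [hEq, hA]
  · exfalso
    have hl2 : l' = l := by omega
    have hm2 : m' = m := by omega
    rw [hl2, hm2] at hEq
    nlinarith [hEq, hA]


theorem apery_Sn_of_mod_three_eq_one (n : ℕ) (hn : 4 ≤ n) (h3 : n % 3 = 1) :
    Apery n (fib n ^ 2) =
      {x | ∃ l m : ℕ, l < fib (n + 2) / 2 ∧ m < fib n ∧
        ¬(fib (n - 1) / 2 ≤ l ∧ (fib (n - 2) + fib n) / 2 ≤ m) ∧
        x = l * fib (n + 1) ^ 2 + m * fib (n + 2) ^ 2} := by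
  obtain ⟨m, rfl⟩ : ∃ m, n = m + 2 := ⟨n - 2, by omega⟩
  have hq_even : fib (m+1) % 2 = 0 := by
    have h := fib_mod_two' (m+1); rw [if_pos (by omega)] at h; exact h
  have hp_odd : fib m % 2 = 1 := by
    have h := fib_mod_two' m; rw [if_neg (by omega)] at h; exact h
  obtain ⟨Q, hQdef⟩ : ∃ Q, fib (m+1) = 2*Q := ⟨fib (m+1)/2, by omega⟩
  obtain ⟨p, hpdef⟩ : ∃ p, fib m = p := ⟨_, rfl⟩
  have hp : 1 ≤ p := by
    have := Nat.fib_pos.mpr (show 0 < m by omega); omega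
  have hQ : 1 ≤ Q := by
    have := Nat.fib_pos.mpr (show 0 < m + 1 by omega); omega
  have e0 : fib (m+2) = p + 2*Q := by
    rw [fib_add_two]; omega
  have e1 : fib (m+3) = p + 4*Q := by
    rw [show m+3 = (m+1)+2 by omega, fib_add_two, e0]; omega
  have e2 : fib (m+4) = 2*p + 6*Q := by
    rw [show m+4 = (m+2)+2 by omega, fib_add_two, e0, e1]; omega
  -- coprimality facts
  have hcopN : Nat.Coprime (2*Q) (p + 2*Q) := by
    have h := Nat.fib_coprime_fib_succ (m+1)
    rwa [hQdef, show m+1+1 = m+2 by omega, e0] at h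
  have hco2Q : IsCoprime ((p:ℤ) + 2*Q) (2*(Q:ℤ)) := by
    have h := Nat.isCoprime_iff_coprime.mpr hcopN.symm
    push_cast at h
    exact h
  have hco2 : IsCoprime ((p:ℤ) + 2*Q) (2:ℤ) := by
    have hN : Nat.Coprime (p + 2*Q) 2 := by
      have := (Nat.Prime.coprime_iff_not_dvd Nat.prime_two).mpr
        (show ¬ 2 ∣ (p + 2*Q) by omega)
      exact this.symm
    have h := Nat.isCoprime_iff_coprime.mpr hN
    push_cast at h
    exact h
  ext x
  simp only [Apery, S, Set.mem_setOf_eq]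
  rw [show m+2+1 = m+3 by omega, show m+2+2 = m+4 by omega,
      show m+2-1 = m+1 by omega, show m+2-2 = m by omega,
      e0, e1, e2, hQdef, hpdef,
      show (2*p+6*Q)/2 = p + 3*Q by omega,
      show 2*Q/2 = Q by omega,
      show (p + (p+2*Q))/2 = p + Q by omega]
  constructor
  · rintro ⟨⟨α, l, mm, hx⟩, hno⟩
    obtain ⟨α', l', m', hαα, hl', hm', heq⟩ :=
      reduce p Q hp hQ (l * (p+4*Q)^2 + mm * (2*p+6*Q)^2) α l mm le_rfl
    have hx' : x = α' * (p+2*Q)^2 + l' * (p+4*Q)^2 + m' * (2*p+6*Q)^2 :=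
      hx.trans heq.symm
    have hα0 : α' = 0 := by
      by_contra h
      obtain ⟨β, rfl⟩ : ∃ β, α' = β + 1 := ⟨α' - 1, by omega⟩
      exact hno ⟨β * (p+2*Q)^2 + l' * (p+4*Q)^2 + m' * (2*p+6*Q)^2,
        ⟨β, l', m', rfl⟩, by rw [hx']; ring⟩
    have hexc : ¬ (Q ≤ l' ∧ p + Q ≤ m') := by
      rintro ⟨h1, h2⟩
      obtain ⟨l₂, rfl⟩ : ∃ l₂, l' = l₂ + Q := ⟨l' - Q, by omega⟩
      obtain ⟨m₂, rfl⟩ : ∃ m₂, m' = m₂ + (p + Q) := ⟨m' - (p+Q), by omega⟩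
      obtain ⟨γ, hγ⟩ : ∃ γ, 4*p+13*Q = γ + 1 := ⟨4*p+13*Q-1, by omega⟩
      refine hno ⟨γ * (p+2*Q)^2 + l₂ * (p+4*Q)^2 + m₂ * (2*p+6*Q)^2,
        ⟨γ, l₂, m₂, rfl⟩, ?_⟩
      rw [hx', hα0]
      calc 0 * (p+2*Q)^2 + (l₂ + Q) * (p+4*Q)^2 + (m₂ + (p+Q)) * (2*p+6*Q)^2
          = (4*p+13*Q) * (p+2*Q)^2 + l₂ * (p+4*Q)^2 + m₂ * (2*p+6*Q)^2 := by ring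
        _ = γ * (p+2*Q)^2 + l₂ * (p+4*Q)^2 + m₂ * (2*p+6*Q)^2 + (p+2*Q)^2 := by
            rw [hγ]; ring
    exact ⟨l', m', hl', hm', hexc, by rw [hx', hα0]; ring⟩
  · rintro ⟨l, mm, hl, hm, hexc, rfl⟩
    refine ⟨⟨0, l, mm, by ring⟩, ?_⟩
    rintro ⟨t, ⟨α, l₀, m₀, rfl⟩, hxt⟩
    obtain ⟨α', l', m', hαα, hl', hm', heq⟩ :=
      reduce p Q hp hQ (l₀ * (p+4*Q)^2 + m₀ * (2*p+6*Q)^2) (α+1) l₀ m₀ le_rfl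
    have hEq : l * (p+4*Q)^2 + mm * (2*p+6*Q)^2
        = α' * (p+2*Q)^2 + l' * (p+4*Q)^2 + m' * (2*p+6*Q)^2 := by
      rw [heq, hxt]; ring
    exact hexc (core_nat p Q l mm l' m' α' hp hQ hco2Q hco2 hl hm hl' hm'
      (by omega) hEq)
end

section
/- Let n ≥ 6 with n ≡ 0 (mod 3) (so that f_n, f_{n−3} and f_{n+3} are even and f_{n+2} + f_{n+4} is even). Then the following three identities hold: (1) f_{n+4}·f_n² = f_{n+1}·f_{n+1}² + f_{n−2}·f_{n+2}²; (2) (f_{n+3}/2)·f_{n+1}² = ((f_{n+2} + f_{n+4})/2)·f_n² + (f_{n−3}/2)·f_{n+2}²; (3) (f_n/2)·f_{n+2}² = (f_{n+3}/2)·f_n² + (f_n/2)·f_{n+1}². -/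
open Nat

theorem fib_sq_identities_of_three_dvd (n : ℕ) (hn : 6 ≤ n) (h3 : n % 3 = 0) :
    fib (n + 4) * fib n ^ 2 = fib (n + 1) * fib (n + 1) ^ 2 + fib (n - 2) * fib (n + 2) ^ 2 ∧
    (fib (n + 3) / 2) * fib (n + 1) ^ 2 =
      ((fib (n + 2) + fib (n + 4)) / 2) * fib n ^ 2 + (fib (n - 3) / 2) * fib (n + 2) ^ 2 ∧
    (fib n / 2) * fib (n + 2) ^ 2 =
      (fib (n + 3) / 2) * fib n ^ 2 + (fib n / 2) * fib (n + 1) ^ 2 := by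
  obtain ⟨k, rfl⟩ : ∃ k, n = k + 6 := ⟨n - 6, by omega⟩
  have hdvd : 2 ∣ fib (k + 3) := by
    have h := Nat.fib_dvd 3 (k + 3) ⟨k / 3 + 1, by omega⟩
    simpa [show fib 3 = 2 by rfl] using h
  obtain ⟨c, hc⟩ := hdvd
  set b := fib (k + 4) with hb
  have e5 : fib (k + 5) = 2 * c + b := by
    rw [show k + 5 = (k + 3) + 2 from rfl, Nat.fib_add_two, hc]
  have e6 : fib (k + 6) = 2 * c + 2 * b := by
    rw [show k + 6 = (k + 4) + 2 from rfl, Nat.fib_add_two, e5]; ring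
  have e7 : fib (k + 7) = 4 * c + 3 * b := by
    rw [show k + 7 = (k + 5) + 2 from rfl, Nat.fib_add_two, e5, e6]; ring
  have e8 : fib (k + 8) = 6 * c + 5 * b := by
    rw [show k + 8 = (k + 6) + 2 from rfl, Nat.fib_add_two, e6, e7]; ring
  have e9 : fib (k + 9) = 10 * c + 8 * b := by
    rw [show k + 9 = (k + 7) + 2 from rfl, Nat.fib_add_two, e7, e8]; ring
  have e10 : fib (k + 10) = 16 * c + 13 * b := by
    rw [show k + 10 = (k + 8) + 2 from rfl, Nat.fib_add_two, e8, e9]; ring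
  have hm2 : k + 6 - 2 = k + 4 := by omega
  have hm3 : k + 6 - 3 = k + 3 := by omega
  rw [show k + 6 + 4 = k + 10 from rfl, show k + 6 + 1 = k + 7 from rfl,
    show k + 6 + 2 = k + 8 from rfl, show k + 6 + 3 = k + 9 from rfl, hm2, hm3,
    e10, e9, e8, e7, e6, hc, ← hb]
  refine ⟨by ring, ?_, ?_⟩
  · rw [show (10 * c + 8 * b) / 2 = 5 * c + 4 * b by omega,
      show (6 * c + 5 * b + (16 * c + 13 * b)) / 2 = 11 * c + 9 * b by omega,
      show 2 * c / 2 = c by omega]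
    ring
  · rw [show (2 * c + 2 * b) / 2 = c + b by omega,
      show (10 * c + 8 * b) / 2 = 5 * c + 4 * b by omega]
    ring
end

section
/- Let n ≥ 5 with n ≡ 2 (mod 3) (so that f_{n+1}, f_{n−2} and f_{n+4} are even and f_n + f_{n+2} is even). Then the following three identities hold: (1) (f_{n+4}/2)·f_n² = (f_{n+1}/2)·f_{n+1}² + (f_{n−2}/2)·f_{n+2}²; (2) f_{n+2}·f_{n+1}² = f_{n+2}·f_n² + f_{n−1}·f_{n+2}²; (3) (f_{n+1}/2)·f_{n+2}² = (f_{n+1}/2)·f_n² + ((f_n + f_{n+2})/2)·f_{n+1}². -/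
open Nat

lemma fib_parity_aux (k : ℕ) :
    fib (3 * k) % 2 = 0 ∧ fib (3 * k + 1) % 2 = 1 ∧ fib (3 * k + 2) % 2 = 1 := by
  induction k with
  | zero => simp
  | succ k ih =>
    have h1 : fib (3 * (k + 1)) = fib (3 * k + 1) + fib (3 * k + 2) := by
      rw [show 3 * (k + 1) = (3 * k + 1) + 2 by ring, fib_add_two]
    have h2 : fib (3 * (k + 1) + 1) = fib (3 * k + 2) + fib (3 * (k + 1)) := by
      rw [show 3 * (k + 1) + 1 = (3 * k + 2) + 2 by ring, fib_add_two,
        show 3 * k + 2 + 1 = 3 * (k + 1) by ring]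
    have h3 : fib (3 * (k + 1) + 2) = fib (3 * (k + 1)) + fib (3 * (k + 1) + 1) :=
      fib_add_two
    omega

set_option maxHeartbeats 1000000 in
theorem fib_sq_identities_of_mod_three_eq_two (n : ℕ) (hn : 5 ≤ n) (h3 : n % 3 = 2) :
    (fib (n + 4) / 2) * fib n ^ 2 =
      (fib (n + 1) / 2) * fib (n + 1) ^ 2 + (fib (n - 2) / 2) * fib (n + 2) ^ 2 ∧
    fib (n + 2) * fib (n + 1) ^ 2 = fib (n + 2) * fib n ^ 2 + fib (n - 1) * fib (n + 2) ^ 2 ∧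
    (fib (n + 1) / 2) * fib (n + 2) ^ 2 =
      (fib (n + 1) / 2) * fib n ^ 2 + ((fib n + fib (n + 2)) / 2) * fib (n + 1) ^ 2 := by
  obtain ⟨m, rfl⟩ : ∃ m, n = m + 5 := ⟨n - 5, by omega⟩
  have hm : m % 3 = 0 := by omega
  -- express everything in terms of a = fib m, b = fib (m+1)
  have e2 : fib (m + 2) = fib m + fib (m + 1) := fib_add_two
  have e3 : fib (m + 3) = fib (m + 1) + fib (m + 2) := fib_add_two
  have e4 : fib (m + 4) = fib (m + 2) + fib (m + 3) := fib_add_two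
  have e5 : fib (m + 5) = fib (m + 3) + fib (m + 4) := fib_add_two
  have e6 : fib (m + 6) = fib (m + 4) + fib (m + 5) := fib_add_two
  have e7 : fib (m + 7) = fib (m + 5) + fib (m + 6) := fib_add_two
  have e8 : fib (m + 8) = fib (m + 6) + fib (m + 7) := fib_add_two
  have e9 : fib (m + 9) = fib (m + 7) + fib (m + 8) := fib_add_two
  -- evenness facts
  have hpar0 := fib_parity_aux (m / 3)
  have hpar1 := fib_parity_aux (m / 3 + 1)
  have hpar2 := fib_parity_aux (m / 3 + 2)
  have hpar3 := fib_parity_aux (m / 3 + 3)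
  have h30 : 3 * (m / 3) = m := by omega
  have h31 : 3 * (m / 3 + 1) = m + 3 := by omega
  have h32 : 3 * (m / 3 + 2) = m + 6 := by omega
  have h33 : 3 * (m / 3 + 3) = m + 9 := by omega
  rw [h30] at hpar0; rw [h31] at hpar1; rw [h32] at hpar2; rw [h33] at hpar3
  have hd3 : fib (m + 3) = 2 * (fib (m + 3) / 2) :=
    (Nat.mul_div_cancel' (Nat.dvd_of_mod_eq_zero hpar1.1)).symm
  have hd6 : fib (m + 6) = 2 * (fib (m + 6) / 2) :=
    (Nat.mul_div_cancel' (Nat.dvd_of_mod_eq_zero hpar2.1)).symm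
  have hd9 : fib (m + 9) = 2 * (fib (m + 9) / 2) :=
    (Nat.mul_div_cancel' (Nat.dvd_of_mod_eq_zero hpar3.1)).symm
  have hmods : (fib (m + 5) + fib (m + 7)) % 2 = 0 := by
    rw [Nat.add_mod, hpar1.2.2, hpar2.2.1]
  have hds : fib (m + 5) + fib (m + 7) = 2 * ((fib (m + 5) + fib (m + 7)) / 2) :=
    (Nat.mul_div_cancel' (Nat.dvd_of_mod_eq_zero hmods)).symm
  have hs2 : m + 5 + 4 = m + 9 := by omega
  have hs3 : m + 5 - 2 = m + 3 := by omega
  have hs4 : m + 5 - 1 = m + 4 := by omega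
  have hs5 : m + 5 + 1 = m + 6 := by omega
  have hs6 : m + 5 + 2 = m + 7 := by omega
  rw [hs2, hs3, hs4, hs5, hs6]
  refine ⟨?_, ?_, ?_⟩
  · apply Nat.eq_of_mul_eq_mul_left (show 0 < 2 by norm_num)
    rw [Nat.mul_add, ← mul_assoc, ← mul_assoc, ← mul_assoc, ← hd9, ← hd6, ← hd3]
    rw [e9, e8, e7, e6, e5, e4, e3, e2]; ring
  · rw [e7, e6, e5, e4, e3, e2]; ring
  · apply Nat.eq_of_mul_eq_mul_left (show 0 < 2 by norm_num)
    rw [Nat.mul_add, ← mul_assoc, ← mul_assoc, ← mul_assoc, ← hd6, ← hds]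
    rw [e7, e6, e5, e4, e3, e2]; ring
end
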